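/- arXiv:1110.4141 — 7 statements merged into one kernel-verified Lean document; each statement's English description precedes it below -/
import Mathlib

section
/- Let a < b be real numbers, let n ∈ ℕ with n ≥ 2, and let α : [a,b] × [a,b] → ℝ satisfy 1/n < α(t,τ) < 1 for all t, τ ∈ [a,b]. Then the left Riemann–Liouville integral of variable fractional order α, given by (ₐI^{α}_t f)(t) = ∫_a^t (t−τ)^{α(t,τ)−1} / Γ(α(t,τ)) · f(τ) dτ, maps L¹[a,b] into L¹[a,b], is a linear operator, and is bounded with operator norm strictly less than n + b − a; that is, ‖ₐI^{α}_t f‖_{L¹} < (n + b − a) ‖f‖_{L¹} for every nonzero f ∈ L¹[a,b]. -/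
open MeasureTheory

lemma aux_one_le_Gamma {x : ℝ} (h0 : 0 < x) (h1 : x ≤ 1) : 1 ≤ Real.Gamma x := by
  rcases eq_or_lt_of_le h1 with h | h
  · rw [h, Real.Gamma_one]
  · set θ : ℝ := 1 / (2 - x) with hθdef
    have h2x : 0 < 2 - x := by linarith
    have hθ0 : 0 < θ := by positivity
    have hb : (0:ℝ) ≤ 1 - θ := by
      rw [hθdef, sub_nonneg, div_le_one h2x]; linarith
    have hab : θ + (1 - θ) = 1 := by ring
    have hcomb : θ * x + (1 - θ) * 2 = 1 := by
      rw [hθdef]; field_simp; ring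
    have hcvx := Real.convexOn_log_Gamma.2 (Set.mem_Ioi.2 h0)
      (Set.mem_Ioi.2 (by norm_num : (0:ℝ) < 2)) hθ0.le hb hab
    rw [smul_eq_mul, smul_eq_mul, hcomb] at hcvx
    simp only [Function.comp_apply, Real.Gamma_one, Real.Gamma_two, Real.log_one,
      smul_eq_mul, mul_zero, add_zero] at hcvx
    have hlog : 0 ≤ Real.log (Real.Gamma x) := by
      by_contra hneg
      push_neg at hneg
      nlinarith
    have := Real.exp_le_exp.2 hlog
    rwa [Real.exp_zero, Real.exp_log (Real.Gamma_pos_of_pos h0)] at this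

/-- The left Riemann–Liouville integral of variable fractional order `α`:
`(ₐI^α_t f)(t) = ∫_a^t (t−τ)^(α(t,τ)−1)/Γ(α(t,τ)) · f(τ) dτ`. -/
noncomputable def leftRLint (a : ℝ) (α : ℝ → ℝ → ℝ) (f : ℝ → ℝ) (t : ℝ) : ℝ :=
  ∫ τ in a..t, (t - τ) ^ (α t τ - 1) / Real.Gamma (α t τ) * f τ

/-- For a measurable variable order `α` with `1/n < α(t,τ) < 1` on `[a,b]²` (`n ≥ 2`),
the left Riemann–Liouville integral of variable order `α` maps `L¹[a,b]` into
`L¹[a,b]`, is linear, and is bounded with operator norm strictly below `n + b − a`: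
`‖ₐI^α_t f‖_{L¹} < (n + b − a)·‖f‖_{L¹}` for every nonzero `f ∈ L¹[a,b]`. -/
theorem leftRLint_linear_bounded (a b : ℝ) (hab : a < b) (n : ℕ) (hn : 2 ≤ n)
    (α : ℝ → ℝ → ℝ) (hαm : Measurable (Function.uncurry α))
    (hα : ∀ t ∈ Set.Icc a b, ∀ τ ∈ Set.Icc a b, 1 / (n : ℝ) < α t τ ∧ α t τ < 1) :
    -- maps L¹[a,b] into L¹[a,b]
    (∀ f : ℝ → ℝ, IntegrableOn f (Set.Icc a b) →
        IntegrableOn (leftRLint a α f) (Set.Icc a b)) ∧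
    -- additivity (as elements of L¹, i.e. almost everywhere on [a,b])
    (∀ f g : ℝ → ℝ, IntegrableOn f (Set.Icc a b) → IntegrableOn g (Set.Icc a b) →
        ∀ᵐ t ∂(volume.restrict (Set.Icc a b)),
          leftRLint a α (f + g) t = leftRLint a α f t + leftRLint a α g t) ∧
    -- homogeneity
    (∀ f : ℝ → ℝ, ∀ c : ℝ, ∀ t : ℝ, leftRLint a α (c • f) t = c * leftRLint a α f t) ∧
    -- boundedness, with norm strictly less than n + b − a
    (∀ f : ℝ → ℝ, IntegrableOn f (Set.Icc a b) →
        0 < ∫ t in a..b, |f t| →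
        (∫ t in a..b, |leftRLint a α f t|) < ((n : ℝ) + b - a) * ∫ t in a..b, |f t|) := by
  have hab' : a ≤ b := hab.le
  set I : Set ℝ := Set.Icc a b with hIdef
  set μ : Measure ℝ := volume.restrict I with hμdef
  haveI : IsFiniteMeasure μ := by
    constructor
    rw [hμdef, Measure.restrict_apply_univ]
    exact measure_Icc_lt_top
  have hn2 : (2:ℝ) ≤ (n:ℝ) := by exact_mod_cast hn
  set c : ℝ := (n:ℝ)⁻¹ with hcdef
  have hc0 : 0 < c := by rw [hcdef]; positivity
  have hc1 : c < 1 := by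
    rw [hcdef]
    rw [inv_lt_one_iff₀]
    right; linarith
  set e : ℝ := c - 1 with hedef
  have he : -1 < e := by rw [hedef]; linarith
  have he0 : e < 0 := by rw [hedef]; linarith
  set G : ℝ → ℝ := fun x => Real.Gamma (max x c) with hGdef
  have hGcont : Continuous G := by
    rw [continuous_iff_continuousAt]
    intro x
    have h1 : ContinuousAt Real.Gamma (max x c) := by
      refine (Real.differentiableAt_Gamma ?_).continuousAt
      intro m
      have : (0:ℝ) < max x c := lt_of_lt_of_le hc0 (le_max_right _ _)
      intro hcon
      rw [hcon] at this
      have : (0:ℝ) ≤ (m:ℝ) := Nat.cast_nonneg m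
      linarith
    have h2 : ContinuousAt (fun y : ℝ => max y c) x :=
      (continuous_id.max continuous_const).continuousAt
    exact ContinuousAt.comp (g := Real.Gamma) (f := fun y : ℝ => max y c) h1 h2
  have hGpos : ∀ x : ℝ, 0 < G x := fun x =>
    Real.Gamma_pos_of_pos (lt_of_lt_of_le hc0 (le_max_right _ _))
  set C : ℝ := (n:ℝ) + max (b - a - 1) 0 with hCdef
  have hC : C < (n:ℝ) + b - a := by
    rw [hCdef]
    have : max (b - a - 1) 0 < b - a := by
      apply max_lt <;> linarith
    linarith
  set K : ℝ × ℝ → ℝ := fun p => (p.1 - p.2) ^ (α p.1 p.2 - 1) / G (α p.1 p.2) with hKdef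
  have hKm : Measurable K := by
    apply Measurable.div
    · have hα2 : Measurable fun p : ℝ × ℝ => α p.1 p.2 := hαm
      exact (measurable_fst.sub measurable_snd).pow (hα2.sub measurable_const)
    · have hα2 : Measurable fun p : ℝ × ℝ => α p.1 p.2 := hαm
      exact hGcont.measurable.comp hα2
  set S : Set (ℝ × ℝ) := {p | a < p.2 ∧ p.2 ≤ p.1} with hSdef
  have hS : MeasurableSet S := by
    apply MeasurableSet.inter
    · exact measurableSet_lt measurable_const measurable_snd
    · exact measurableSet_le measurable_snd measurable_fst
  have hGeq : ∀ t ∈ I, ∀ τ ∈ I, G (α t τ) = Real.Gamma (α t τ) := by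
    intro t ht τ hτ
    show Real.Gamma (max (α t τ) c) = Real.Gamma (α t τ)
    congr 1
    apply max_eq_left
    rw [hcdef]
    have := (hα t ht τ hτ).1
    rw [one_div] at this
    exact this.le
  have hKnonneg : ∀ p : ℝ × ℝ, p.2 ≤ p.1 → 0 ≤ K p := by
    intro p hp
    apply div_nonneg _ (hGpos _).le
    exact Real.rpow_nonneg (by linarith) _
  -- the dominating kernel
  set hdom : ℝ → ℝ → ℝ := fun τ t =>
    (Set.Ioc τ (τ+1)).indicator (fun s => (s - τ) ^ e) t
      + (Set.Ioi (τ+1)).indicator (fun _ => (1:ℝ)) t with hdomdef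
  have hdom_nonneg : ∀ τ t, 0 ≤ hdom τ t := by
    intro τ t
    apply add_nonneg <;> apply Set.indicator_nonneg
    · intro s hs
      exact Real.rpow_nonneg (by simp at hs; linarith [hs.1]) _
    · intro s _; norm_num
  have hKbound : ∀ t ∈ I, ∀ τ ∈ I, a < τ → τ ≤ t → K (t, τ) ≤ hdom τ t := by
    intro t ht τ hτ _ hτt
    have hα1 := (hα t ht τ hτ).1
    have hα2 := (hα t ht τ hτ).2
    rw [one_div] at hα1
    rcases eq_or_lt_of_le hτt with heq | hlt
    · have : K (t, τ) = 0 := by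
        show (t - τ) ^ (α t τ - 1) / G (α t τ) = 0
        rw [heq, sub_self, Real.zero_rpow (ne_of_lt (by linarith [(hα t ht t ht).2] : α t t - 1 < 0)), zero_div]
      rw [this]; exact hdom_nonneg τ t
    · have hs0 : 0 < t - τ := by linarith
      have hG1 : 1 ≤ G (α t τ) := by
        rw [hGeq t ht τ hτ]
        exact aux_one_le_Gamma (lt_trans hc0 hα1) hα2.le
      have h1 : K (t, τ) ≤ (t - τ) ^ (α t τ - 1) :=
        div_le_self (Real.rpow_nonneg hs0.le _) hG1
      refine h1.trans ?_
      rcases le_or_gt (t - τ) 1 with hle | hgt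
      · have htmem : t ∈ Set.Ioc τ (τ + 1) := ⟨hlt, by linarith⟩
        have htnot : t ∉ Set.Ioi (τ + 1) := by simp only [Set.mem_Ioi]; push_neg; linarith
        rw [hdomdef]
        simp only [Set.indicator_of_mem htmem, Set.indicator_of_notMem htnot, add_zero]
        exact Real.rpow_le_rpow_of_exponent_ge hs0 hle (by rw [hedef]; linarith)
      · have htmem : t ∈ Set.Ioi (τ + 1) := by simp only [Set.mem_Ioi]; linarith
        have htnot : t ∉ Set.Ioc τ (τ + 1) := by
          simp only [Set.mem_Ioc]; push_neg; intro; linarith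
        rw [hdomdef]
        simp only [Set.indicator_of_mem htmem, Set.indicator_of_notMem htnot, zero_add]
        exact Real.rpow_le_one_of_one_le_of_nonpos hgt.le (by linarith)
  have hdom_int1 : ∀ τ : ℝ, IntegrableOn (fun s => (s - τ) ^ e) (Set.Ioc τ (τ+1)) volume := by
    intro τ
    have II := (intervalIntegral.intervalIntegrable_rpow' (r := e) (a := 0) (b := 1) he).comp_sub_right τ
    rw [zero_add, add_comm 1 τ] at II
    exact (intervalIntegrable_iff_integrableOn_Ioc_of_le (by linarith)).1 II
  have hdom_part1 : ∀ τ : ℝ, Integrable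
      ((Set.Ioc τ (τ+1)).indicator (fun s => (s - τ) ^ e)) μ := fun τ =>
    ((hdom_int1 τ).integrable_indicator measurableSet_Ioc).restrict
  have hdom_part2 : ∀ τ : ℝ, Integrable
      ((Set.Ioi (τ+1)).indicator (fun _ => (1:ℝ))) μ := fun τ =>
    (integrable_const (1:ℝ)).indicator measurableSet_Ioi
  have hdom_int : ∀ τ : ℝ, Integrable (hdom τ) μ := fun τ =>
    (hdom_part1 τ).add (hdom_part2 τ)
  have hdom_bnd : ∀ τ ∈ I, ∫ t, hdom τ t ∂μ ≤ C := by
    intro τ hτ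
    have hτa : a ≤ τ := hτ.1
    have hint1 : ∫ t, (Set.Ioc τ (τ+1)).indicator (fun s => (s - τ) ^ e) t ∂μ ≤ (n:ℝ) := by
      rw [integral_indicator measurableSet_Ioc, hμdef,
        Measure.restrict_restrict measurableSet_Ioc]
      have hsub : Set.Ioc τ (τ+1) ∩ I ⊆ Set.Ioc τ (τ+1) := Set.inter_subset_left
      have hmono : ∫ t in Set.Ioc τ (τ+1) ∩ I, (t - τ) ^ e ∂volume
          ≤ ∫ t in Set.Ioc τ (τ+1), (t - τ) ^ e ∂volume := by
        apply setIntegral_mono_set (hdom_int1 τ)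
        · filter_upwards [self_mem_ae_restrict (measurableSet_Ioc :
            MeasurableSet (Set.Ioc τ (τ+1)))] with x hx
          exact Real.rpow_nonneg (by linarith [hx.1]) _
        · exact HasSubset.Subset.eventuallyLE hsub
      refine hmono.trans ?_
      rw [← intervalIntegral.integral_of_le (by linarith : τ ≤ τ + 1)]
      rw [intervalIntegral.integral_comp_sub_right (fun s => s ^ e) τ]
      rw [sub_self, add_sub_cancel_left]
      rw [integral_rpow (Or.inl he)]
      rw [Real.one_rpow, Real.zero_rpow (by rw [hedef]; linarith), sub_zero]
      have hee : e + 1 = c := by rw [hedef]; ring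
      rw [hee, hcdef, one_div, inv_inv]
    have hint2 : ∫ t, (Set.Ioi (τ+1)).indicator (fun _ => (1:ℝ)) t ∂μ ≤ max (b - a - 1) 0 := by
      rw [integral_indicator measurableSet_Ioi, setIntegral_const, smul_eq_mul, mul_one]
      have hμs : μ (Set.Ioi (τ+1)) ≤ ENNReal.ofReal (b - (τ+1)) := by
        rw [hμdef, Measure.restrict_apply measurableSet_Ioi]
        refine le_trans (measure_mono ?_) (le_of_eq (Real.volume_Ioc))
        intro x hx
        exact ⟨hx.1, hx.2.2⟩
      rcases le_or_gt (b - (τ+1)) 0 with hb0 | hb0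
      · have : μ (Set.Ioi (τ+1)) = 0 := le_antisymm
          (hμs.trans (by rw [ENNReal.ofReal_of_nonpos hb0])) zero_le
        rw [Measure.real, this, ENNReal.toReal_zero]
        exact le_max_right _ _
      · refine le_trans (ENNReal.toReal_mono ENNReal.ofReal_ne_top hμs) ?_
        rw [ENNReal.toReal_ofReal hb0.le]
        exact le_trans (by linarith) (le_max_left _ _)
    calc ∫ t, hdom τ t ∂μ
        = (∫ t, (Set.Ioc τ (τ+1)).indicator (fun s => (s - τ) ^ e) t ∂μ)
          + ∫ t, (Set.Ioi (τ+1)).indicator (fun _ => (1:ℝ)) t ∂μ := by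
          rw [hdomdef]; exact integral_add (hdom_part1 τ) (hdom_part2 τ)
      _ ≤ (n:ℝ) + max (b - a - 1) 0 := add_le_add hint1 hint2
      _ = C := by rw [hCdef]
  have key : ∀ f : ℝ → ℝ, IntegrableOn f I →
      IntegrableOn (leftRLint a α f) I ∧
      (∀ᵐ t ∂μ, IntegrableOn
        (fun τ => (t - τ) ^ (α t τ - 1) / Real.Gamma (α t τ) * f τ) (Set.Ioc a t) volume) ∧
      (∫ t, |leftRLint a α f t| ∂μ) ≤ C * ∫ τ, |f τ| ∂μ := by
    intro f hf
    have hf' : Integrable f μ := hf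
    set F : ℝ × ℝ → ℝ := S.indicator (fun p => K p * f p.2) with hFdef
    have hFm : AEStronglyMeasurable F (μ.prod μ) := by
      apply AEStronglyMeasurable.indicator _ hS
      exact hKm.aestronglyMeasurable.mul hf'.1.comp_snd
    have hslice_eq : ∀ t, (fun τ => F (t, τ))
        = (Set.Ioc a t).indicator (fun τ => K (t, τ) * f τ) := by
      intro t; funext τ
      by_cases h : τ ∈ Set.Ioc a t
      · rw [Set.indicator_of_mem h, hFdef]
        have hmem : (t, τ) ∈ S := ⟨h.1, h.2⟩
        exact Set.indicator_of_mem hmem _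
      · rw [Set.indicator_of_notMem h, hFdef]
        have hmem : (t, τ) ∉ S := fun hc => h ⟨hc.1, hc.2⟩
        exact Set.indicator_of_notMem hmem _
    have key_slice : ∀ τ ∈ I, Integrable (fun t => F (t, τ)) μ ∧
        (∫ t, ‖F (t, τ)‖ ∂μ) ≤ C * |f τ| := by
      intro τ hτ
      have hCpos : 0 ≤ C := by
        rw [hCdef]
        have : (0:ℝ) ≤ (n:ℝ) := Nat.cast_nonneg n
        have := le_max_right (b - a - 1) (0:ℝ)
        linarith
      by_cases haτ : a < τ
      · have heqs : (fun t => F (t, τ))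
            = (Set.Ici τ).indicator (fun t => K (t, τ) * f τ) := by
          funext t
          by_cases h : t ∈ Set.Ici τ
          · rw [Set.indicator_of_mem h, hFdef]
            have hmem : (t, τ) ∈ S := ⟨haτ, h⟩
            exact Set.indicator_of_mem hmem _
          · rw [Set.indicator_of_notMem h, hFdef]
            have hmem : (t, τ) ∉ S := fun hc => h hc.2
            exact Set.indicator_of_notMem hmem _
        have hmeas : AEStronglyMeasurable (fun t => F (t, τ)) μ := by
          rw [heqs]
          apply Measurable.aestronglyMeasurable
          apply Measurable.indicator _ measurableSet_Ici
          exact (hKm.comp (measurable_id.prodMk measurable_const)).mul measurable_const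
        have hb : ∀ᵐ t ∂μ, ‖F (t, τ)‖ ≤ |f τ| * hdom τ t := by
          filter_upwards [ae_restrict_mem (measurableSet_Icc : MeasurableSet I)] with t ht
          by_cases hts : (t, τ) ∈ S
          · rw [hFdef, Set.indicator_of_mem hts]
            have h1 : ‖K (t, τ) * f τ‖ = |f τ| * K (t, τ) := by
              rw [norm_mul, Real.norm_eq_abs, Real.norm_eq_abs,
                abs_of_nonneg (hKnonneg _ hts.2), mul_comm]
            rw [h1]
            exact mul_le_mul_of_nonneg_left (hKbound t ht τ hτ hts.1 hts.2) (abs_nonneg _)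
          · rw [hFdef, Set.indicator_of_notMem hts, norm_zero]
            exact mul_nonneg (abs_nonneg _) (hdom_nonneg τ t)
        have hint : Integrable (fun t => F (t, τ)) μ :=
          Integrable.mono' ((hdom_int τ).const_mul _) hmeas hb
        refine ⟨hint, ?_⟩
        calc ∫ t, ‖F (t, τ)‖ ∂μ ≤ ∫ t, |f τ| * hdom τ t ∂μ :=
              integral_mono_ae hint.norm ((hdom_int τ).const_mul _) hb
          _ = |f τ| * ∫ t, hdom τ t ∂μ := integral_const_mul _ _
          _ ≤ |f τ| * C := mul_le_mul_of_nonneg_left (hdom_bnd τ hτ) (abs_nonneg _)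
          _ = C * |f τ| := mul_comm _ _
      · have heq0 : ∀ t, F (t, τ) = (0:ℝ) := by
          intro t
          rw [hFdef]
          have hmem : (t, τ) ∉ S := fun hc => haτ hc.1
          exact Set.indicator_of_notMem hmem _
        constructor
        · apply (integrable_const (0:ℝ)).congr
          filter_upwards with t
          exact (heq0 t).symm
        · simp only [heq0, norm_zero, integral_zero]
          positivity
    have hFint : Integrable F (μ.prod μ) := by
      rw [integrable_prod_iff' hFm]
      constructor
      · filter_upwards [ae_restrict_mem (measurableSet_Icc : MeasurableSet I)] with τ hτ
        exact (key_slice τ hτ).1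
      · have hms : AEStronglyMeasurable (fun τ => ∫ t, ‖F (t, τ)‖ ∂μ) μ :=
          hFm.norm.prod_swap.integral_prod_right'
        apply Integrable.mono' (hf'.abs.const_mul C) hms
        filter_upwards [ae_restrict_mem (measurableSet_Icc : MeasurableSet I)] with τ hτ
        rw [Real.norm_eq_abs, abs_of_nonneg (integral_nonneg (fun t => norm_nonneg _))]
        exact (key_slice τ hτ).2
    have hmargInt : Integrable (fun t => ∫ τ, F (t, τ) ∂μ) μ := hFint.integral_prod_left
    have hmarg : ∀ t ∈ I, leftRLint a α f t = ∫ τ, F (t, τ) ∂μ := by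
      intro t ht
      have hsub : Set.Ioc a t ⊆ I := fun x hx => ⟨hx.1.le, hx.2.trans ht.2⟩
      rw [hslice_eq t, integral_indicator measurableSet_Ioc, hμdef,
        Measure.restrict_restrict measurableSet_Ioc,
        Set.inter_eq_self_of_subset_left hsub]
      rw [leftRLint, intervalIntegral.integral_of_le ht.1]
      apply setIntegral_congr_fun measurableSet_Ioc
      intro τ hτ
      show (t - τ) ^ (α t τ - 1) / Real.Gamma (α t τ) * f τ = K (t, τ) * f τ
      rw [hKdef]
      simp only
      rw [hGeq t ht τ (hsub hτ)]
    refine ⟨?_, ?_, ?_⟩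
    · apply hmargInt.congr
      filter_upwards [ae_restrict_mem (measurableSet_Icc : MeasurableSet I)] with t ht
      exact (hmarg t ht).symm
    · filter_upwards [hFint.prod_right_ae,
        ae_restrict_mem (measurableSet_Icc : MeasurableSet I)] with t hsl ht
      have hsub : Set.Ioc a t ⊆ I := fun x hx => ⟨hx.1.le, hx.2.trans ht.2⟩
      rw [hslice_eq t, integrable_indicator_iff measurableSet_Ioc] at hsl
      have hsl' : Integrable (fun τ => K (t, τ) * f τ)
          ((volume.restrict I).restrict (Set.Ioc a t)) := hsl
      rw [Measure.restrict_restrict measurableSet_Ioc,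
        Set.inter_eq_self_of_subset_left hsub] at hsl'
      apply hsl'.congr
      filter_upwards [ae_restrict_mem (measurableSet_Ioc : MeasurableSet (Set.Ioc a t))]
        with τ hτ
      show K (t, τ) * f τ = (t - τ) ^ (α t τ - 1) / Real.Gamma (α t τ) * f τ
      rw [hKdef]
      simp only
      rw [hGeq t ht τ (hsub hτ)]
    · have e1 : (∫ t, |leftRLint a α f t| ∂μ) = ∫ t, |∫ τ, F (t, τ) ∂μ| ∂μ := by
        apply integral_congr_ae
        filter_upwards [ae_restrict_mem (measurableSet_Icc : MeasurableSet I)] with t ht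
        rw [hmarg t ht]
      have e2 : (∫ t, |∫ τ, F (t, τ) ∂μ| ∂μ) ≤ ∫ t, ∫ τ, ‖F (t, τ)‖ ∂μ ∂μ := by
        apply integral_mono_ae hmargInt.abs hFint.integral_norm_prod_left
        filter_upwards with t
        rw [← Real.norm_eq_abs]
        exact norm_integral_le_integral_norm _
      have e3 : (∫ t, ∫ τ, ‖F (t, τ)‖ ∂μ ∂μ) = ∫ τ, ∫ t, ‖F (t, τ)‖ ∂μ ∂μ :=
        integral_integral_swap hFint.norm
      have e4 : (∫ τ, ∫ t, ‖F (t, τ)‖ ∂μ ∂μ) ≤ ∫ τ, C * |f τ| ∂μ := by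
        apply integral_mono_ae hFint.integral_norm_prod_right (hf'.abs.const_mul C)
        filter_upwards [ae_restrict_mem (measurableSet_Icc : MeasurableSet I)] with τ hτ
        exact (key_slice τ hτ).2
      rw [e1]
      refine le_trans e2 ?_
      rw [e3]
      refine le_trans e4 ?_
      rw [integral_const_mul]
  -- assemble the four parts
  have hiccIoc : ∀ φ : ℝ → ℝ, (∫ t in a..b, φ t) = ∫ t, φ t ∂μ := by
    intro φ
    rw [intervalIntegral.integral_of_le hab', hμdef, ← integral_Icc_eq_integral_Ioc]
  refine ⟨fun f hf => (key f hf).1, ?_, ?_, ?_⟩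
  · intro f g hf hg
    filter_upwards [(key f hf).2.1, (key g hg).2.1,
      ae_restrict_mem (measurableSet_Icc : MeasurableSet I)] with t h2f h2g ht
    have IIf : IntervalIntegrable
        (fun τ => (t - τ) ^ (α t τ - 1) / Real.Gamma (α t τ) * f τ) volume a t :=
      (intervalIntegrable_iff_integrableOn_Ioc_of_le ht.1).2 h2f
    have IIg : IntervalIntegrable
        (fun τ => (t - τ) ^ (α t τ - 1) / Real.Gamma (α t τ) * g τ) volume a t :=
      (intervalIntegrable_iff_integrableOn_Ioc_of_le ht.1).2 h2g
    show leftRLint a α (f + g) t = _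
    rw [leftRLint, leftRLint, leftRLint]
    have hfun : (fun τ => (t - τ) ^ (α t τ - 1) / Real.Gamma (α t τ) * (f + g) τ)
        = fun τ => ((t - τ) ^ (α t τ - 1) / Real.Gamma (α t τ) * f τ)
          + ((t - τ) ^ (α t τ - 1) / Real.Gamma (α t τ) * g τ) := by
      funext τ
      simp only [Pi.add_apply]
      ring
    rw [hfun]
    exact intervalIntegral.integral_add IIf IIg
  · intro f cc t
    rw [leftRLint, leftRLint, ← intervalIntegral.integral_const_mul]
    apply intervalIntegral.integral_congr
    intro τ _
    simp only [Pi.smul_apply, smul_eq_mul]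
    ring
  · intro f hf hpos
    rw [hiccIoc] at hpos
    rw [hiccIoc (fun t => |leftRLint a α f t|), hiccIoc (fun t => |f t|)]
    calc (∫ t, |leftRLint a α f t| ∂μ) ≤ C * ∫ τ, |f τ| ∂μ := (key f hf).2.2
      _ < ((n:ℝ) + b - a) * ∫ τ, |f τ| ∂μ := by
          exact mul_lt_mul_of_pos_right hC hpos
end

section
/- Let a < b be real numbers, let n ∈ ℕ with n ≥ 2, let α : [a,b] × [a,b] → ℝ satisfy 1/n < α(t,τ) < 1 for all t, τ ∈ [a,b], and let f, g : [a,b] → ℝ be continuous. Then ∫_a^b g(t) · (ₐI^{α}_t f)(t) dt = ∫_a^b f(t) · (ₜI^{α}_b g)(t) dt, where (ₐI^{α}_t f)(t) = ∫_a^t (t−τ)^{α(t,τ)−1} / Γ(α(t,τ)) · f(τ) dτ and (ₜI^{α}_b g)(t) = ∫_t^b (τ−t)^{α(τ,t)−1} / Γ(α(τ,t)) · g(τ) dτ. -/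
open MeasureTheory Set Function

/-- Integration by parts for variable order Riemann–Liouville integrals: for a
measurable order `α` with `1/n < α(t,τ) < 1` on `[a,b]²` (`n ≥ 2`) and continuous
`f, g : [a,b] → ℝ`,
`∫_a^b g(t)·(ₐI^α_t f)(t) dt = ∫_a^b f(t)·(ₜI^α_b g)(t) dt`. -/
theorem leftRLint_int_by_parts (a b : ℝ) (hab : a < b) (n : ℕ) (hn : 2 ≤ n)
    (α : ℝ → ℝ → ℝ) (hαm : Measurable (Function.uncurry α))
    (hα : ∀ t ∈ Set.Icc a b, ∀ τ ∈ Set.Icc a b, 1 / (n : ℝ) < α t τ ∧ α t τ < 1)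
    (f g : ℝ → ℝ) (hf : ContinuousOn f (Set.Icc a b))
    (hg : ContinuousOn g (Set.Icc a b)) :
    (∫ t in a..b,
        g t * ∫ τ in a..t, (t - τ) ^ (α t τ - 1) / Real.Gamma (α t τ) * f τ) =
      ∫ t in a..b,
        f t * ∫ τ in t..b, (τ - t) ^ (α τ t - 1) / Real.Gamma (α τ t) * g τ := by
  have hn2 : (2 : ℝ) ≤ (n : ℝ) := by exact_mod_cast hn
  have hn0 : (0 : ℝ) < (n : ℝ) := by linarith
  set c : ℝ := 1 / (n : ℝ) with hcdef
  have hc0 : 0 < c := by rw [hcdef]; positivity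
  have hc1 : c < 1 := by rw [hcdef, div_lt_one hn0]; linarith
  -- clamped order
  set al : ℝ → ℝ → ℝ := fun t τ => min 1 (max c (α t τ)) with haldef
  have hal_mem : ∀ t τ : ℝ, c ≤ al t τ ∧ al t τ ≤ 1 := fun t τ =>
    ⟨le_min hc1.le (le_max_left _ _), min_le_left _ _⟩
  have hal_eq : ∀ t ∈ Icc a b, ∀ τ ∈ Icc a b, al t τ = α t τ := by
    intro t ht τ hτ
    obtain ⟨h1, h2⟩ := hα t ht τ hτ
    simp only [haldef]
    rw [max_eq_right h1.le, min_eq_right h2.le]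
  -- continuous extensions of f and g
  have hproj : ∀ x : ℝ, max a (min x b) ∈ Icc a b :=
    fun x => ⟨le_max_left _ _, max_le hab.le (min_le_right x b)⟩
  have hproj_id : ∀ x ∈ Icc a b, max a (min x b) = x := fun x hx => by
    rw [min_eq_left hx.2, max_eq_right hx.1]
  set F : ℝ → ℝ := fun x => f (max a (min x b)) with hFdef
  set G : ℝ → ℝ := fun x => g (max a (min x b)) with hGdef
  have hFeq : ∀ x ∈ Icc a b, F x = f x := fun x hx => by
    simp only [hFdef]; rw [hproj_id x hx]
  have hGeq : ∀ x ∈ Icc a b, G x = g x := fun x hx => by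
    simp only [hGdef]; rw [hproj_id x hx]
  have hFc : Continuous F :=
    hf.comp_continuous (continuous_const.max (continuous_id.min continuous_const)) hproj
  have hGc : Continuous G :=
    hg.comp_continuous (continuous_const.max (continuous_id.min continuous_const)) hproj
  -- the kernel
  set K : ℝ → ℝ → ℝ := fun t τ => (t - τ) ^ (al t τ - 1) / Real.Gamma (al t τ) with hKdef
  -- Gamma facts
  have hΓc : ContinuousOn Real.Gamma (Icc c 1) := by
    intro x hx
    have hx0 : 0 < x := lt_of_lt_of_le hc0 hx.1
    refine (Real.differentiableAt_Gamma fun m => ?_).continuousAt.continuousWithinAt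
    intro h
    have hm : (0 : ℝ) ≤ (m : ℝ) := Nat.cast_nonneg m
    rw [h] at hx0
    linarith
  obtain ⟨gm, hgm0, hgm⟩ := isCompact_Icc.exists_forall_le' hΓc
    (fun x hx => Real.Gamma_pos_of_pos (lt_of_lt_of_le hc0 hx.1))
  -- bounds for F and G
  obtain ⟨MF, hMF⟩ := isCompact_Icc.exists_bound_of_continuousOn hFc.continuousOn
  obtain ⟨MG, hMG⟩ := isCompact_Icc.exists_bound_of_continuousOn hGc.continuousOn
  have hMF0 : 0 ≤ MF := le_trans (norm_nonneg (F a)) (hMF a ⟨le_refl a, hab.le⟩)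
  have hMG0 : 0 ≤ MG := le_trans (norm_nonneg (G a)) (hMG a ⟨le_refl a, hab.le⟩)
  set CC : ℝ := MG * MF / gm with hCCdef
  have hCC0 : 0 ≤ CC := div_nonneg (mul_nonneg hMG0 hMF0) hgm0.le
  -- kernel bound
  have hK : ∀ t τ : ℝ, 0 < t - τ → ‖K t τ‖ ≤ ((t - τ) ^ (c - 1) + 1) / gm := by
    intro t τ hx
    obtain ⟨hs1, hs2⟩ := hal_mem t τ
    have hΓpos : 0 < Real.Gamma (al t τ) := lt_of_lt_of_le hgm0 (hgm _ ⟨hs1, hs2⟩)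
    have hnum : (t - τ) ^ (al t τ - 1) ≤ (t - τ) ^ (c - 1) + 1 := by
      rcases le_or_gt (t - τ) 1 with h | h
      · exact le_trans (Real.rpow_le_rpow_of_exponent_ge hx h (by linarith))
          (le_add_of_nonneg_right one_pos.le)
      · exact le_trans (Real.rpow_le_one_of_one_le_of_nonpos h.le (by linarith))
          (le_add_of_nonneg_left (Real.rpow_nonneg hx.le _))
    simp only [hKdef]
    rw [Real.norm_eq_abs, abs_of_nonneg (div_nonneg (Real.rpow_nonneg hx.le _) hΓpos.le)]
    exact div_le_div₀ (add_nonneg (Real.rpow_nonneg hx.le _) zero_le_one)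
      hnum hgm0 (hgm _ ⟨hs1, hs2⟩)
  -- the doubly-indexed integrand
  set S : Set (ℝ × ℝ) := {p : ℝ × ℝ | a < p.2 ∧ p.2 < p.1 ∧ p.1 ≤ b} with hSdef
  have hSmeas : MeasurableSet S := by
    have hS' : S = {p : ℝ × ℝ | a < p.2} ∩ ({p : ℝ × ℝ | p.2 < p.1} ∩ {p : ℝ × ℝ | p.1 ≤ b}) := by
      ext p; simp only [hSdef, Set.mem_setOf_eq, Set.mem_inter_iff]
    rw [hS']
    exact (measurableSet_lt measurable_const measurable_snd).inter
      ((measurableSet_lt measurable_snd measurable_fst).inter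
        (measurableSet_le measurable_fst measurable_const))
  set H : ℝ → ℝ → ℝ :=
    fun t τ => if a < τ ∧ τ < t ∧ t ≤ b then G t * (K t τ * F τ) else 0 with hHdef
  have halm : Measurable (fun p : ℝ × ℝ => al p.1 p.2) := by
    simp only [haldef]
    exact measurable_const.min (measurable_const.max hαm)
  have hΓm : Measurable (fun p : ℝ × ℝ => Real.Gamma (al p.1 p.2)) := by
    have hcl : Continuous (fun x : ℝ => Real.Gamma (min 1 (max c x))) :=
      hΓc.comp_continuous (continuous_const.min (continuous_const.max continuous_id))
        (fun x => ⟨le_min hc1.le (le_max_left _ _), min_le_left _ _⟩)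
    simp only [haldef]
    exact hcl.measurable.comp hαm
  have hψm : Measurable (fun p : ℝ × ℝ =>
      G p.1 * (Real.exp (Real.log (p.1 - p.2) * (al p.1 p.2 - 1)) / Real.Gamma (al p.1 p.2)
        * F p.2)) := by
    apply (hGc.measurable.comp measurable_fst).mul
    apply Measurable.mul ?_ (hFc.measurable.comp measurable_snd)
    apply Measurable.div ?_ hΓm
    exact Real.measurable_exp.comp
      ((Real.measurable_log.comp (measurable_fst.sub measurable_snd)).mul
        (halm.sub measurable_const))
  have hHm : Measurable (uncurry H) := by
    have heq : uncurry H = S.indicator (fun p : ℝ × ℝ =>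
        G p.1 * (Real.exp (Real.log (p.1 - p.2) * (al p.1 p.2 - 1)) / Real.Gamma (al p.1 p.2)
          * F p.2)) := by
      funext p
      by_cases hp : a < p.2 ∧ p.2 < p.1 ∧ p.1 ≤ b
      · have hx : 0 < p.1 - p.2 := sub_pos.2 hp.2.1
        have hpS : p ∈ S := by simp only [hSdef, Set.mem_setOf_eq]; exact hp
        rw [Set.indicator_of_mem hpS]
        show H p.1 p.2 = _
        simp only [hHdef, hKdef, if_pos hp]
        rw [Real.rpow_def_of_pos hx]
      · have hpS : p ∉ S := by simp only [hSdef, Set.mem_setOf_eq]; exact hp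
        rw [Set.indicator_of_notMem hpS]
        show H p.1 p.2 = _
        simp only [hHdef, if_neg hp]
    rw [heq]
    exact hψm.indicator hSmeas
  -- section integrability
  have hII : ∀ t : ℝ, IntervalIntegrable (fun τ => (t - τ) ^ (c - 1)) volume a t := by
    intro t
    have h1 : IntervalIntegrable (fun x : ℝ => x ^ (c - 1)) volume (t - a) (t - t) :=
      intervalIntegral.intervalIntegrable_rpow' (by linarith)
    have h2 := h1.comp_sub_left t
    rwa [show t - (t - a) = a by ring, show t - (t - t) = t by ring] at h2
  have hIoo_int : ∀ t : ℝ, a < t → IntegrableOn (fun τ => (t - τ) ^ (c - 1)) (Ioo a t) :=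
    fun t ht1 =>
      ((intervalIntegrable_iff_integrableOn_Ioc_of_le ht1.le).1 (hII t)).mono_set
        Ioo_subset_Ioc_self
  have hBint : ∀ t : ℝ, a < t →
      Integrable ((Ioo a t).indicator (fun τ => CC * ((t - τ) ^ (c - 1) + 1))) := by
    intro t ht1
    rw [integrable_indicator_iff measurableSet_Ioo]
    exact ((hIoo_int t ht1).add (integrableOn_const measure_Ioo_lt_top.ne)).const_mul CC
  have hHbound : ∀ t : ℝ, a < t → t ≤ b → ∀ τ : ℝ,
      ‖H t τ‖ ≤ (Ioo a t).indicator (fun τ => CC * ((t - τ) ^ (c - 1) + 1)) τ := by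
    intro t ht1 ht2 τ
    by_cases hτ : a < τ ∧ τ < t ∧ t ≤ b
    · have hτ' : τ ∈ Ioo a t := ⟨hτ.1, hτ.2.1⟩
      rw [Set.indicator_of_mem hτ']
      have hHval : H t τ = G t * (K t τ * F τ) := by simp only [hHdef]; rw [if_pos hτ]
      rw [hHval, norm_mul, norm_mul]
      have hGt : ‖G t‖ ≤ MG := hMG t ⟨ht1.le, ht2⟩
      have hFτ : ‖F τ‖ ≤ MF := hMF τ ⟨hτ.1.le, hτ.2.1.le.trans ht2⟩
      have hKb := hK t τ (sub_pos.2 hτ.2.1)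
      have step : ‖G t‖ * (‖K t τ‖ * ‖F τ‖) ≤ MG * ((((t - τ) ^ (c - 1) + 1) / gm) * MF) := by
        apply mul_le_mul hGt ?_ (mul_nonneg (norm_nonneg _) (norm_nonneg _)) hMG0
        apply mul_le_mul hKb hFτ (norm_nonneg _)
        exact div_nonneg
          (add_nonneg (Real.rpow_nonneg (sub_pos.2 hτ.2.1).le _) zero_le_one) hgm0.le
      calc ‖G t‖ * (‖K t τ‖ * ‖F τ‖)
          ≤ MG * ((((t - τ) ^ (c - 1) + 1) / gm) * MF) := step
        _ = CC * ((t - τ) ^ (c - 1) + 1) := by rw [hCCdef]; ring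
    · have hHval : H t τ = 0 := by simp only [hHdef]; rw [if_neg hτ]
      rw [hHval, norm_zero]
      exact Set.indicator_nonneg (fun y hy => mul_nonneg hCC0
        (add_nonneg (Real.rpow_nonneg (sub_pos.2 hy.2).le _) zero_le_one)) τ
  have hHzero : ∀ t : ℝ, ¬(a < t ∧ t ≤ b) → (fun τ => H t τ) = fun _ => (0 : ℝ) := by
    intro t ht
    funext τ
    simp only [hHdef]
    exact if_neg (fun hc' => ht ⟨hc'.1.trans hc'.2.1, hc'.2.2⟩)
  have hHsec : ∀ t : ℝ, Integrable (fun τ => H t τ) := by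
    intro t
    by_cases ht : a < t ∧ t ≤ b
    · exact (hBint t ht.1).mono' hHm.of_uncurry_left.aestronglyMeasurable
        (Filter.Eventually.of_forall (hHbound t ht.1 ht.2))
    · rw [hHzero t ht]
      exact integrable_zero _ _ _
  -- the uniform bound on sections' integrals
  have hcomp : ∀ t : ℝ, a < t →
      (∫ τ, (Ioo a t).indicator (fun τ => CC * ((t - τ) ^ (c - 1) + 1)) τ) =
        CC * ((t - a) ^ c / c + (t - a)) := by
    intro t ht1
    rw [integral_indicator measurableSet_Ioo, ← integral_Ioc_eq_integral_Ioo,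
      ← intervalIntegral.integral_of_le ht1.le, intervalIntegral.integral_const_mul]
    congr 1
    rw [intervalIntegral.integral_add (hII t) intervalIntegrable_const,
      intervalIntegral.integral_const]
    have hmain : (∫ τ in a..t, (t - τ) ^ (c - 1)) = (t - a) ^ c / c := by
      rw [intervalIntegral.integral_comp_sub_left (fun x : ℝ => x ^ (c - 1)) t, sub_self,
        integral_rpow (Or.inl (by linarith : (-1 : ℝ) < c - 1))]
      have hcc : c - 1 + 1 = c := by ring
      rw [hcc, Real.zero_rpow hc0.ne']
      ring
    rw [hmain]
    simp [smul_eq_mul]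
  set M : ℝ := CC * ((b - a) ^ c / c + (b - a)) with hMdef
  have hM0 : 0 ≤ M := mul_nonneg hCC0
    (add_nonneg (div_nonneg (Real.rpow_nonneg (by linarith) _) hc0.le) (by linarith))
  have hIbound : ∀ t : ℝ, a < t → t ≤ b → (∫ τ, ‖H t τ‖) ≤ M := by
    intro t ht1 ht2
    have h1 : (∫ τ, ‖H t τ‖) ≤
        ∫ τ, (Ioo a t).indicator (fun τ => CC * ((t - τ) ^ (c - 1) + 1)) τ :=
      integral_mono (hHsec t).norm (hBint t ht1) (hHbound t ht1 ht2)
    rw [hcomp t ht1] at h1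
    refine h1.trans ?_
    rw [hMdef]
    apply mul_le_mul_of_nonneg_left ?_ hCC0
    have h2 : (t - a) ^ c ≤ (b - a) ^ c := Real.rpow_le_rpow (by linarith) (by linarith) hc0.le
    have h3 : (t - a) ^ c / c ≤ (b - a) ^ c / c := by
      rw [div_eq_mul_inv, div_eq_mul_inv]
      exact mul_le_mul_of_nonneg_right h2 (inv_nonneg.2 hc0.le)
    linarith
  have hInt2 : Integrable (fun t => ∫ τ, ‖H t τ‖) := by
    apply Integrable.mono'
      (g := (Ioc a b).indicator fun _ => M)
      ((integrable_indicator_iff measurableSet_Ioc).2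
        (integrableOn_const measure_Ioc_lt_top.ne))
    · exact hHm.norm.aestronglyMeasurable.integral_prod_right'
    · apply Filter.Eventually.of_forall
      intro t
      by_cases ht : a < t ∧ t ≤ b
      · rw [Set.indicator_of_mem (show t ∈ Ioc a b from ⟨ht.1, ht.2⟩)]
        rw [Real.norm_eq_abs, abs_of_nonneg (integral_nonneg fun τ => norm_nonneg _)]
        exact hIbound t ht.1 ht.2
      · have h1 : (fun τ : ℝ => ‖H t τ‖) = fun _ => (0 : ℝ) :=
          funext fun τ => by rw [congrFun (hHzero t ht) τ, norm_zero]
        rw [h1, integral_zero, norm_zero]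
        exact Set.indicator_nonneg (fun _ _ => hM0) t
  have hHint : Integrable (uncurry H) (volume.prod volume) :=
    (integrable_prod_iff hHm.aestronglyMeasurable).2
      ⟨Filter.Eventually.of_forall hHsec, hInt2⟩
  have hswap : (∫ t, ∫ τ, H t τ) = ∫ τ, ∫ t, H t τ := integral_integral_swap hHint
  -- LHS chain
  have hLHS : (∫ t in a..b,
      g t * ∫ τ in a..t, (t - τ) ^ (α t τ - 1) / Real.Gamma (α t τ) * f τ)
      = ∫ t, ∫ τ, H t τ := by
    have e1 : (∫ t in a..b,
        g t * ∫ τ in a..t, (t - τ) ^ (α t τ - 1) / Real.Gamma (α t τ) * f τ)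
        = ∫ t in a..b, G t * ∫ τ in a..t, K t τ * F τ := by
      apply intervalIntegral.integral_congr
      intro t ht
      beta_reduce
      rw [uIcc_of_le hab.le] at ht
      rw [hGeq t ht]
      congr 1
      apply intervalIntegral.integral_congr
      intro τ hτ
      beta_reduce
      rw [uIcc_of_le ht.1] at hτ
      have hτ' : τ ∈ Icc a b := ⟨hτ.1, hτ.2.trans ht.2⟩
      rw [hFeq τ hτ']
      simp only [hKdef]
      rw [hal_eq t ht τ hτ']
    rw [e1, intervalIntegral.integral_of_le hab.le]
    have e2 : (∫ t in Ioc a b, G t * ∫ τ in a..t, K t τ * F τ)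
        = ∫ t in Ioc a b, ∫ τ, H t τ := by
      apply setIntegral_congr_fun measurableSet_Ioc
      intro t ht
      beta_reduce
      rw [intervalIntegral.integral_of_le ht.1.le, integral_Ioc_eq_integral_Ioo,
        ← integral_const_mul]
      have hind : (fun τ => H t τ) = (Ioo a t).indicator (fun τ => G t * (K t τ * F τ)) := by
        funext τ
        by_cases hτ : τ ∈ Ioo a t
        · rw [Set.indicator_of_mem hτ]
          simp only [hHdef]
          exact if_pos ⟨hτ.1, hτ.2, ht.2⟩
        · rw [Set.indicator_of_notMem hτ]
          simp only [hHdef]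
          exact if_neg (fun hcon => hτ ⟨hcon.1, hcon.2.1⟩)
      rw [hind, integral_indicator measurableSet_Ioo]
    have e3 : (∫ t in Ioc a b, ∫ τ, H t τ) = ∫ t, ∫ τ, H t τ := by
      apply setIntegral_eq_integral_of_forall_compl_eq_zero
      intro t ht
      rw [hHzero t ht, integral_zero]
    rw [e2, e3]
  -- RHS chain
  have hRHS : (∫ t in a..b,
      f t * ∫ τ in t..b, (τ - t) ^ (α τ t - 1) / Real.Gamma (α τ t) * g τ)
      = ∫ τ, ∫ t, H t τ := by
    have e1 : (∫ t in a..b,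
        f t * ∫ τ in t..b, (τ - t) ^ (α τ t - 1) / Real.Gamma (α τ t) * g τ)
        = ∫ τ in a..b, F τ * ∫ s in τ..b, K s τ * G s := by
      apply intervalIntegral.integral_congr
      intro τ hτ
      beta_reduce
      rw [uIcc_of_le hab.le] at hτ
      rw [hFeq τ hτ]
      congr 1
      apply intervalIntegral.integral_congr
      intro s hs
      beta_reduce
      rw [uIcc_of_le hτ.2] at hs
      have hs' : s ∈ Icc a b := ⟨hτ.1.trans hs.1, hs.2⟩
      rw [hGeq s hs']
      simp only [hKdef]
      rw [hal_eq s hs' τ hτ]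
    rw [e1, intervalIntegral.integral_of_le hab.le]
    have e2 : (∫ τ in Ioc a b, F τ * ∫ s in τ..b, K s τ * G s)
        = ∫ τ in Ioc a b, ∫ t, H t τ := by
      apply setIntegral_congr_fun measurableSet_Ioc
      intro τ hτ
      beta_reduce
      rw [intervalIntegral.integral_of_le hτ.2, ← integral_const_mul]
      have hcong : ∀ s ∈ Ioc τ b, F τ * (K s τ * G s) = G s * (K s τ * F τ) :=
        fun s hs => by ring
      rw [setIntegral_congr_fun measurableSet_Ioc hcong]
      have hind : (fun t => H t τ) = (Ioc τ b).indicator (fun t => G t * (K t τ * F τ)) := by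
        funext t
        by_cases ht : t ∈ Ioc τ b
        · rw [Set.indicator_of_mem ht]
          simp only [hHdef]
          exact if_pos ⟨hτ.1, ht.1, ht.2⟩
        · rw [Set.indicator_of_notMem ht]
          simp only [hHdef]
          exact if_neg (fun hcon => ht ⟨hcon.2.1, hcon.2.2⟩)
      rw [hind, integral_indicator measurableSet_Ioc]
    have e3 : (∫ τ in Ioc a b, ∫ t, H t τ) = ∫ τ, ∫ t, H t τ := by
      apply setIntegral_eq_integral_of_forall_compl_eq_zero
      intro τ hτ
      have h0 : (fun t => H t τ) = fun _ => (0 : ℝ) := by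
        funext t
        simp only [hHdef]
        exact if_neg (fun hc' => hτ ⟨hc'.1, hc'.2.1.le.trans hc'.2.2⟩)
      rw [h0, integral_zero]
    rw [e2, e3]
  rw [hLHS, hRHS]
  exact hswap
end

section
/- Let a < b be real numbers, let n ∈ ℕ with n ≥ 2, and let α : [a,b] × [a,b] → ℝ satisfy 0 < α(t,τ) < 1 − 1/n for all t, τ ∈ [a,b]. Let f : [a,b] → ℝ be continuously differentiable, let g : [a,b] → ℝ be continuous, and assume the function t ↦ (ₜI^{1−α}_b g)(t) = ∫_t^b (τ−t)^{−α(τ,t)} / Γ(1−α(τ,t)) · g(τ) dτ is absolutely continuous on [a,b]. Then ∫_a^b g(t) · (ᶜₐD^{α}_t f)(t) dt = [ f(t) · (ₜI^{1−α}_b g)(t) ]_{t=a}^{t=b} + ∫_a^b f(t) · (ₜD^{α}_b g)(t) dt, where (ᶜₐD^{α}_t f)(t) = ∫_a^t (t−τ)^{−α(t,τ)} / Γ(1−α(t,τ)) · f′(τ) dτ and (ₜD^{α}_b g)(t) = −(d/dt)(ₜI^{1−α}_b g)(t). -/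
open MeasureTheory

open Set Filter



lemma aux_ae_hasDerivAt_primitive {h : ℝ → ℝ} (hh : Integrable h (volume : Measure ℝ)) (a : ℝ) :
    ∀ᵐ t ∂(volume : Measure ℝ), HasDerivAt (fun u => ∫ s in a..u, h s) (h t) t := by
  filter_upwards [IsUnifLocDoublingMeasure.ae_tendsto_average_norm_sub
    (μ := (volume : Measure ℝ)) hh.locallyIntegrable 1] with t ht
  have hδ : Tendsto (fun u : ℝ => |u - t|) (nhdsWithin t {t}ᶜ) (nhdsWithin 0 (Ioi 0)) := by
    rw [tendsto_nhdsWithin_iff]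
    constructor
    · have : Tendsto (fun u : ℝ => |u - t|) (nhds t) (nhds 0) := by
        have : Continuous (fun u : ℝ => |u - t|) :=
          continuous_abs.comp (continuous_id.sub continuous_const)
        simpa using this.tendsto t
      exact this.mono_left nhdsWithin_le_nhds
    · filter_upwards [eventually_mem_nhdsWithin] with u hu
      exact abs_pos.mpr (sub_ne_zero.mpr hu)
  have key : Tendsto (fun u : ℝ => ⨍ y in Metric.closedBall t |u - t|, ‖h y - h t‖)
      (nhdsWithin t {t}ᶜ) (nhds 0) := by
    refine ht (fun _ => t) (fun u => |u - t|) hδ ?_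
    filter_upwards with u
    simp [Metric.mem_closedBall, abs_nonneg]
  rw [hasDerivAt_iff_tendsto_slope, tendsto_iff_norm_sub_tendsto_zero]
  have hbound : ∀ᶠ u in nhdsWithin t {t}ᶜ,
      ‖slope (fun u => ∫ s in a..u, h s) t u - h t‖
        ≤ 2 * ⨍ y in Metric.closedBall t |u - t|, ‖h y - h t‖ := by
    filter_upwards [eventually_mem_nhdsWithin] with u hu
    have hut : u - t ≠ 0 := sub_ne_zero.mpr hu
    have habs : (0:ℝ) < |u - t| := abs_pos.mpr hut
    have hHsub : (∫ s in a..u, h s) - ∫ s in a..t, h s = ∫ s in t..u, h s :=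
      intervalIntegral.integral_interval_sub_left hh.intervalIntegrable hh.intervalIntegrable
    have hsl : slope (fun u => ∫ s in a..u, h s) t u - h t
        = (∫ s in t..u, (h s - h t)) / (u - t) := by
      rw [slope_def_field, hHsub]
      rw [intervalIntegral.integral_sub hh.intervalIntegrable intervalIntegrable_const,
        intervalIntegral.integral_const]
      field_simp
      rw [smul_eq_mul]
    rw [hsl, norm_div, Real.norm_eq_abs (u - t)]
    have hIoc : ‖∫ s in t..u, (h s - h t)‖ ≤ ∫ s in Set.uIoc t u, ‖h s - h t‖ :=
      intervalIntegral.norm_integral_le_integral_norm_uIoc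
    have hsubset : Set.uIoc t u ⊆ Metric.closedBall t |u - t| := by
      intro x hx
      rw [Real.closedBall_eq_Icc]
      rcases le_total t u with hc | hc
      · rw [Set.uIoc_of_le hc] at hx
        rw [abs_of_nonneg (by linarith : (0:ℝ) ≤ u - t)]
        exact ⟨by linarith [hx.1], by linarith [hx.2]⟩
      · rw [uIoc_comm, Set.uIoc_of_le hc] at hx
        rw [abs_of_nonpos (by linarith : u - t ≤ 0)]
        exact ⟨by linarith [hx.1], by linarith [hx.2]⟩
    have hint : IntegrableOn (fun s => ‖h s - h t‖) (Metric.closedBall t |u - t|) volume :=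
      ((hh.integrableOn).sub (integrableOn_const (C := h t) (measure_closedBall_lt_top (μ := volume) (x := t) (r := |u - t|)).ne)).norm
    have hmono : ∫ s in Set.uIoc t u, ‖h s - h t‖
        ≤ ∫ s in Metric.closedBall t |u - t|, ‖h s - h t‖ :=
      setIntegral_mono_set hint (Eventually.of_forall fun s => norm_nonneg _)
        (HasSubset.Subset.eventuallyLE hsubset)
    have hvol : (volume (Metric.closedBall t |u - t|)).toReal = 2 * |u - t| := by
      rw [Real.volume_closedBall, ENNReal.toReal_ofReal (by positivity)]
    have havg : ∫ s in Metric.closedBall t |u - t|, ‖h s - h t‖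
        = 2 * |u - t| * ⨍ y in Metric.closedBall t |u - t|, ‖h y - h t‖ := by
      rw [setAverage_eq, measureReal_def, hvol, smul_eq_mul]
      field_simp
    have hle : ‖∫ s in t..u, (h s - h t)‖
        ≤ 2 * |u - t| * ⨍ y in Metric.closedBall t |u - t|, ‖h y - h t‖ :=
      hIoc.trans (hmono.trans_eq havg)
    calc ‖∫ s in t..u, (h s - h t)‖ / |u - t|
        ≤ (2 * |u - t| * ⨍ y in Metric.closedBall t |u - t|, ‖h y - h t‖) / |u - t| :=
          (div_le_div_iff_of_pos_right habs).mpr hle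
      _ = 2 * ⨍ y in Metric.closedBall t |u - t|, ‖h y - h t‖ := by
          field_simp
  refine squeeze_zero' (Eventually.of_forall fun u => norm_nonneg _) hbound ?_
  have := key.const_mul (2:ℝ)
  simpa using this

lemma aux_tietze {a b : ℝ} (φ : ℝ → ℝ) (hφ : ContinuousOn φ (Set.Icc a b)) :
    ∃ Φ : ℝ → ℝ, Continuous Φ ∧ ∀ x ∈ Set.Icc a b, Φ x = φ x := by
  obtain ⟨Φ, hΦ⟩ := ContinuousMap.exists_restrict_eq (Y := ℝ) (isClosed_Icc (a := a) (b := b))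
    ⟨_, continuousOn_iff_continuous_restrict.mp hφ⟩
  refine ⟨Φ, Φ.continuous, fun x hx => ?_⟩
  have := congrFun (congrArg ContinuousMap.toFun hΦ) ⟨x, hx⟩
  simpa using this

lemma aux_rpow_meas {α : ℝ → ℝ → ℝ} (hαm : Measurable (Function.uncurry α)) :
    Measurable (fun p : ℝ × ℝ => (p.1 - p.2) ^ (-α p.1 p.2)) := by
  have h : Measurable (fun p : ℝ × ℝ => α p.1 p.2) := hαm
  measurability

lemma aux_abs_rpow_meas (c : ℝ) :
    Measurable (fun p : ℝ × ℝ => |p.1 - p.2| ^ (-c)) := by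
  measurability

/-- The right Riemann–Liouville integral of variable fractional order `1 − α`:
`(ₜI^{1−α}_b g)(t) = ∫_t^b (τ−t)^(−α(τ,t))/Γ(1−α(τ,t)) · g(τ) dτ`. -/
noncomputable def rightRLint1m (b : ℝ) (α : ℝ → ℝ → ℝ) (g : ℝ → ℝ) (t : ℝ) : ℝ :=
  ∫ τ in t..b, (τ - t) ^ (-α τ t) / Real.Gamma (1 - α τ t) * g τ

/-- The left Caputo derivative of variable fractional order `α` of a `C¹`
function with derivative `f'`:
`(ᶜₐD^α_t f)(t) = ∫_a^t (t−τ)^(−α(t,τ))/Γ(1−α(t,τ)) · f'(τ) dτ`. -/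
noncomputable def leftCaputo (a : ℝ) (α : ℝ → ℝ → ℝ) (f' : ℝ → ℝ) (t : ℝ) : ℝ :=
  ∫ τ in a..t, (t - τ) ^ (-α t τ) / Real.Gamma (1 - α t τ) * f' τ

/-- Integration by parts for the variable order Caputo derivative: for a measurable
order `α` with `0 < α(t,τ) < 1 − 1/n` (`n ≥ 2`), `f ∈ C¹[a,b]` (with derivative `f'`),
`g` continuous on `[a,b]`, and `t ↦ (ₜI^{1−α}_b g)(t)` absolutely continuous on `[a,b]`
(i.e. the integral of an `L¹` density), one has
`∫_a^b g·ᶜₐD^α_t f = [f·ₜI^{1−α}_b g]_a^b + ∫_a^b f·ₜD^α_b g`,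
where `(ₜD^α_b g)(t) = −(d/dt)(ₜI^{1−α}_b g)(t)`. -/
theorem caputo_int_by_parts (a b : ℝ) (hab : a < b) (n : ℕ) (hn : 2 ≤ n)
    (α : ℝ → ℝ → ℝ) (hαm : Measurable (Function.uncurry α))
    (hα : ∀ t ∈ Set.Icc a b, ∀ τ ∈ Set.Icc a b, 0 < α t τ ∧ α t τ < 1 - 1 / (n : ℝ))
    (f f' : ℝ → ℝ) (hf : ∀ t ∈ Set.Icc a b, HasDerivAt f (f' t) t)
    (hf' : ContinuousOn f' (Set.Icc a b))
    (g : ℝ → ℝ) (hg : ContinuousOn g (Set.Icc a b))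
    (hAC : ∃ h : ℝ → ℝ, IntegrableOn h (Set.Icc a b) ∧
      ∀ t ∈ Set.Icc a b,
        rightRLint1m b α g t = rightRLint1m b α g a + ∫ s in a..t, h s) :
    (∫ t in a..b, g t * leftCaputo a α f' t) =
      (f b * rightRLint1m b α g b - f a * rightRLint1m b α g a) +
        ∫ t in a..b, f t * (-(deriv (rightRLint1m b α g) t)) := by
  obtain ⟨h, hhI, hI⟩ := hAC
  have hab' : a ≤ b := hab.le
  have hIccm : MeasurableSet (Set.Icc a b) := measurableSet_Icc
  set μ : Measure ℝ := volume.restrict (Set.Icc a b) with hμ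
  haveI hfin : IsFiniteMeasure μ :=
    ⟨by rw [hμ, Measure.restrict_apply_univ]; exact measure_Icc_lt_top⟩
  have hnR : (2:ℝ) ≤ (n:ℝ) := by exact_mod_cast hn
  have hnpos : (0:ℝ) < (n:ℝ) := by linarith
  have hn0 : (0:ℝ) < 1/(n:ℝ) := by positivity
  have hn1 : 1/(n:ℝ) ≤ 1/2 := by
    apply one_div_le_one_div_of_le <;> linarith
  set c : ℝ := 1 - 1/(n:ℝ) with hcdef
  have hc1 : c < 1 := by rw [hcdef]; linarith
  have hc0 : 0 < c := by rw [hcdef]; linarith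
  have hcneg : (-1:ℝ) < -c := by linarith
  obtain ⟨G, hGc, hGeq⟩ := aux_tietze g hg
  obtain ⟨F', hF'c, hF'eq⟩ := aux_tietze f' hf'
  obtain ⟨Mg, hMg⟩ := isCompact_Icc.exists_bound_of_continuousOn hg
  obtain ⟨Mf, hMf⟩ := isCompact_Icc.exists_bound_of_continuousOn hf'
  have hMg0 : 0 ≤ Mg := (norm_nonneg _).trans (hMg a ⟨le_refl a, hab'⟩)
  have hMf0 : 0 ≤ Mf := (norm_nonneg _).trans (hMf a ⟨le_refl a, hab'⟩)
  have hΓcont : ContinuousOn Real.Gamma (Set.Icc (1/(n:ℝ)) 1) := by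
    intro s hs
    have hs0 : 0 < s := lt_of_lt_of_le hn0 hs.1
    refine (Real.differentiableAt_Gamma fun m => ?_).continuousAt.continuousWithinAt
    have hm : (-(m:ℝ)) ≤ 0 := by simp
    exact ne_of_gt (lt_of_le_of_lt hm hs0)
  obtain ⟨m, hm0, hmle⟩ : ∃ m : ℝ, 0 < m ∧ ∀ s ∈ Set.Icc (1/(n:ℝ)) 1, m ≤ Real.Gamma s := by
    have hne : (Set.Icc (1/(n:ℝ)) 1).Nonempty := ⟨1/(n:ℝ), le_refl _, by linarith⟩
    obtain ⟨x0, hx0, hx0min⟩ := isCompact_Icc.exists_isMinOn hne hΓcont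
    exact ⟨Real.Gamma x0, Real.Gamma_pos_of_pos (lt_of_lt_of_le hn0 hx0.1),
      fun s hs => hx0min hs⟩
  set K : ℝ → ℝ → ℝ := fun t τ => (t - τ) ^ (-α t τ) / Real.Gamma (1 - α t τ) with hKdef
  have hαmem : ∀ t ∈ Set.Icc a b, ∀ τ ∈ Set.Icc a b, (1 - α t τ) ∈ Set.Icc (1/(n:ℝ)) 1 := by
    intro t ht τ hτ
    obtain ⟨h1, h2⟩ := hα t ht τ hτ
    constructor
    · rw [hcdef] at h2; linarith
    · linarith
  have hKbound : ∀ t ∈ Set.Icc a b, ∀ τ ∈ Set.Icc a b, τ ≤ t →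
      |K t τ| ≤ m⁻¹ * (|t - τ| ^ (-c) + 1) := by
    intro t ht τ hτ hle
    obtain ⟨hα0, hαc⟩ := hα t ht τ hτ
    have hx0 : 0 ≤ t - τ := sub_nonneg.mpr hle
    have hΓ : m ≤ Real.Gamma (1 - α t τ) := hmle _ (hαmem t ht τ hτ)
    have hΓ0 : 0 < Real.Gamma (1 - α t τ) := lt_of_lt_of_le hm0 hΓ
    have hnum : (t - τ) ^ (-α t τ) ≤ (t - τ) ^ (-c) + 1 := by
      rcases eq_or_lt_of_le hx0 with h0 | h0
      · rw [← h0, Real.zero_rpow (neg_ne_zero.mpr (ne_of_gt hα0))]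
        have : (0:ℝ) ≤ (0:ℝ) ^ (-c) := Real.rpow_nonneg le_rfl _
        linarith
      · rcases le_total (t - τ) 1 with h1 | h1
        · have h2 := Real.rpow_le_rpow_of_exponent_ge h0 h1 (by linarith : -c ≤ -α t τ)
          linarith
        · have h2 := Real.rpow_le_one_of_one_le_of_nonpos h1 (by linarith : -α t τ ≤ 0)
          have h3 : 0 ≤ (t-τ) ^ (-c) := Real.rpow_nonneg hx0 _
          linarith
    have habs : |K t τ| = (t - τ) ^ (-α t τ) / Real.Gamma (1 - α t τ) :=
      abs_of_nonneg (div_nonneg (Real.rpow_nonneg hx0 _) hΓ0.le)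
    rw [habs, abs_of_nonneg hx0]
    calc (t - τ) ^ (-α t τ) / Real.Gamma (1 - α t τ)
        ≤ (t - τ) ^ (-α t τ) / m :=
          div_le_div_of_nonneg_left (Real.rpow_nonneg hx0 _) hm0 hΓ
      _ ≤ m⁻¹ * ((t - τ) ^ (-c) + 1) := by
          rw [div_eq_mul_inv, mul_comm]
          exact mul_le_mul_of_nonneg_left hnum (inv_nonneg.mpr hm0.le)
  set F : ℝ × ℝ → ℝ := fun p => if p.2 ≤ p.1 then G p.1 * (K p.1 p.2 * F' p.2) else 0 with hFdef
  have haeIcc : ∀ᵐ p ∂(μ.prod μ), p.1 ∈ Set.Icc a b ∧ p.2 ∈ Set.Icc a b := by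
    rw [hμ, Measure.prod_restrict]
    filter_upwards [ae_restrict_mem (hIccm.prod hIccm)] with p hp using hp
  have hαp : Measurable (fun p : ℝ × ℝ => α p.1 p.2) := hαm
  have hrpowm : Measurable (fun p : ℝ × ℝ => (p.1 - p.2) ^ (-α p.1 p.2)) := aux_rpow_meas hαm
  have hΓae : AEMeasurable (fun p : ℝ × ℝ => Real.Gamma (1 - α p.1 p.2)) (μ.prod μ) := by
    have hβ : Measurable (fun p : ℝ × ℝ => 1 - α p.1 p.2) := measurable_const.sub hαp
    have hmem : ∀ᵐ p ∂(μ.prod μ), (1 - α p.1 p.2) ∈ Set.Icc (1/(n:ℝ)) 1 := by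
      filter_upwards [haeIcc] with p hp using hαmem p.1 hp.1 p.2 hp.2
    obtain ⟨ΓE, hΓEc, hΓEeq⟩ := aux_tietze Real.Gamma hΓcont
    refine AEMeasurable.congr ((hΓEc.measurable.comp hβ).aemeasurable) ?_
    filter_upwards [hmem] with p hp using hΓEeq _ hp
  have hKaesm : AEStronglyMeasurable (fun p : ℝ × ℝ => K p.1 p.2) (μ.prod μ) :=
    (hrpowm.aemeasurable.div hΓae).aestronglyMeasurable
  have hFaesm : AEStronglyMeasurable F (μ.prod μ) := by
    have h1 : AEStronglyMeasurable (fun p : ℝ × ℝ => G p.1 * (K p.1 p.2 * F' p.2)) (μ.prod μ) :=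
      ((hGc.comp continuous_fst).aestronglyMeasurable.mul
        (hKaesm.mul (hF'c.comp continuous_snd).aestronglyMeasurable))
    have hseq : F = Set.indicator {p : ℝ × ℝ | p.2 ≤ p.1}
        (fun p => G p.1 * (K p.1 p.2 * F' p.2)) := by
      funext p; rw [Set.indicator_apply]; rfl
    rw [hseq]
    exact h1.indicator (measurableSet_le measurable_snd measurable_fst)
  have hDcm : Measurable (fun p : ℝ × ℝ => |p.1 - p.2| ^ (-c)) := aux_abs_rpow_meas c
  have hslice : ∀ t ∈ Set.Icc a b, IntegrableOn (fun τ => |t - τ| ^ (-c)) (Set.Icc a b) volume := by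
    intro t ht
    have h1 : IntegrableOn (fun τ => |t - τ| ^ (-c)) (Set.Icc a t) volume := by
      have h2 : IntervalIntegrable (fun τ : ℝ => (t - τ) ^ (-c)) volume a t := by
        have hbase : IntervalIntegrable (fun x : ℝ => x ^ (-c)) volume (t - t) (t - a) := by
          apply intervalIntegral.intervalIntegrable_rpow' hcneg
        simpa using (hbase.comp_sub_left t).symm
      have h3 : IntegrableOn (fun τ : ℝ => (t - τ) ^ (-c)) (Set.Icc a t) volume := by
        rw [integrableOn_Icc_iff_integrableOn_Ioc]
        rw [intervalIntegrable_iff_integrableOn_Ioc_of_le ht.1] at h2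
        exact h2
      refine h3.congr_fun (fun τ hτ => ?_) measurableSet_Icc
      rw [abs_of_nonneg (sub_nonneg.mpr hτ.2)]
    have h1' : IntegrableOn (fun τ => |t - τ| ^ (-c)) (Set.Icc t b) volume := by
      have h2 : IntervalIntegrable (fun τ : ℝ => (τ - t) ^ (-c)) volume t b := by
        have hbase : IntervalIntegrable (fun x : ℝ => x ^ (-c)) volume (t - t) (b - t) := by
          apply intervalIntegral.intervalIntegrable_rpow' hcneg
        simpa using hbase.comp_sub_right t
      have h3 : IntegrableOn (fun τ : ℝ => (τ - t) ^ (-c)) (Set.Icc t b) volume := by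
        rw [integrableOn_Icc_iff_integrableOn_Ioc]
        rw [intervalIntegrable_iff_integrableOn_Ioc_of_le ht.2] at h2
        exact h2
      refine h3.congr_fun (fun τ hτ => ?_) measurableSet_Icc
      rw [abs_sub_comm, abs_of_nonneg (sub_nonneg.mpr hτ.1)]
    have hun : Set.Icc a b = Set.Icc a t ∪ Set.Icc t b := (Set.Icc_union_Icc_eq_Icc ht.1 ht.2).symm
    rw [hun]
    exact h1.union h1'
  have h1c : (0:ℝ) < 1 - c := by linarith
  have hpiece : ∀ t ∈ Set.Icc a b, (∫ τ in Set.Icc a b, |t - τ| ^ (-c))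
      ≤ 2 * (b - a) ^ (1 - c) / (1 - c) := by
    intro t ht
    have hsplit : Set.Icc a b = Set.Icc a t ∪ Set.Ioc t b :=
      (Set.Icc_union_Ioc_eq_Icc ht.1 ht.2).symm
    have hdisj : Disjoint (Set.Icc a t) (Set.Ioc t b) := by
      rw [Set.disjoint_left]; rintro x hx1 hx2; exact absurd hx1.2 (not_le.mpr hx2.1)
    have hint1 : IntegrableOn (fun τ => |t - τ| ^ (-c)) (Set.Icc a t) volume :=
      (hslice t ht).mono_set (Set.Icc_subset_Icc le_rfl ht.2)
    have hint2 : IntegrableOn (fun τ => |t - τ| ^ (-c)) (Set.Ioc t b) volume :=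
      (hslice t ht).mono_set ((Set.Ioc_subset_Icc_self).trans (Set.Icc_subset_Icc ht.1 le_rfl))
    rw [hsplit, setIntegral_union hdisj measurableSet_Ioc hint1 hint2]
    have hP1 : ∫ τ in Set.Icc a t, |t - τ| ^ (-c) = (t - a) ^ (1 - c) / (1 - c) := by
      have e1 : ∫ τ in Set.Icc a t, |t - τ| ^ (-c) = ∫ τ in a..t, (t - τ) ^ (-c) := by
        rw [integral_Icc_eq_integral_Ioc, ← intervalIntegral.integral_of_le ht.1]
        refine intervalIntegral.integral_congr fun τ hτ => ?_
        rw [Set.uIcc_of_le ht.1] at hτ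
        rw [abs_of_nonneg (sub_nonneg.mpr hτ.2)]
      rw [e1, intervalIntegral.integral_comp_sub_left (fun x : ℝ => x ^ (-c)) t]
      rw [sub_self, integral_rpow (Or.inl hcneg)]
      rw [Real.zero_rpow (by linarith : -c + 1 ≠ 0), sub_zero]
      rw [show (1:ℝ) - c = -c + 1 by ring]
    have hP2 : ∫ τ in Set.Ioc t b, |t - τ| ^ (-c) = (b - t) ^ (1 - c) / (1 - c) := by
      have e1 : ∫ τ in Set.Ioc t b, |t - τ| ^ (-c) = ∫ τ in t..b, (τ - t) ^ (-c) := by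
        rw [← intervalIntegral.integral_of_le ht.2]
        refine intervalIntegral.integral_congr fun τ hτ => ?_
        rw [Set.uIcc_of_le ht.2] at hτ
        rw [abs_sub_comm, abs_of_nonneg (sub_nonneg.mpr hτ.1)]
      have e2 : ∫ τ in t..b, (τ - t) ^ (-c) = ∫ x in (t - t)..(b - t), x ^ (-c) :=
        intervalIntegral.integral_comp_sub_right (fun x : ℝ => x ^ (-c)) t
      rw [e1, e2, sub_self, integral_rpow (Or.inl hcneg)]
      rw [Real.zero_rpow (by linarith : -c + 1 ≠ 0), sub_zero]
      rw [show (1:ℝ) - c = -c + 1 by ring]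
    rw [hP1, hP2]
    have hb1 : (t - a) ^ (1 - c) ≤ (b - a) ^ (1 - c) :=
      Real.rpow_le_rpow (sub_nonneg.mpr ht.1) (by linarith [ht.2]) (by linarith)
    have hb2 : (b - t) ^ (1 - c) ≤ (b - a) ^ (1 - c) :=
      Real.rpow_le_rpow (sub_nonneg.mpr ht.2) (by linarith [ht.1]) (by linarith)
    rw [← add_div, div_le_div_iff_of_pos_right h1c]
    linarith
  have hDcint : Integrable (fun p : ℝ × ℝ => |p.1 - p.2| ^ (-c)) (μ.prod μ) := by
    rw [integrable_prod_iff hDcm.aestronglyMeasurable]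
    constructor
    · rw [hμ]
      filter_upwards [ae_restrict_mem hIccm] with t ht
      exact hslice t ht
    · refine Integrable.mono' (integrable_const (2 * (b - a) ^ (1 - c) / (1 - c)))
        ((hDcm.norm.stronglyMeasurable.integral_prod_right').aestronglyMeasurable) ?_
      rw [hμ]
      filter_upwards [ae_restrict_mem hIccm] with t ht
      have hnn : 0 ≤ ∫ τ, ‖|t - τ| ^ (-c)‖ ∂μ := integral_nonneg fun τ => norm_nonneg _
      rw [Real.norm_eq_abs, abs_of_nonneg hnn]
      have e3 : (∫ τ, ‖|t - τ| ^ (-c)‖ ∂μ) = ∫ τ in Set.Icc a b, |t - τ| ^ (-c) := by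
        rw [hμ]
        refine integral_congr_ae (Eventually.of_forall fun τ => ?_)
        beta_reduce
        rw [Real.norm_eq_abs, abs_of_nonneg (Real.rpow_nonneg (abs_nonneg _) _)]
      rw [e3]
      exact hpiece t ht
  have hFint : Integrable F (μ.prod μ) := by
    refine Integrable.mono' (g := fun p : ℝ × ℝ => Mg * Mf * m⁻¹ * (|p.1 - p.2| ^ (-c) + 1))
      ((hDcint.add (integrable_const 1)).const_mul _) hFaesm ?_
    filter_upwards [haeIcc] with p hp
    have hD0 : 0 ≤ |p.1 - p.2| ^ (-c) := Real.rpow_nonneg (abs_nonneg _) _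
    by_cases hle : p.2 ≤ p.1
    · have hFv : F p = G p.1 * (K p.1 p.2 * F' p.2) := if_pos hle
      rw [hFv]
      have hb1 : ‖G p.1‖ ≤ Mg := by rw [hGeq _ hp.1]; exact hMg _ hp.1
      have hb2 : ‖F' p.2‖ ≤ Mf := by rw [hF'eq _ hp.2]; exact hMf _ hp.2
      have hb3 : ‖K p.1 p.2‖ ≤ m⁻¹ * (|p.1 - p.2| ^ (-c) + 1) := by
        rw [Real.norm_eq_abs]; exact hKbound _ hp.1 _ hp.2 hle
      calc ‖G p.1 * (K p.1 p.2 * F' p.2)‖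
          = ‖G p.1‖ * (‖K p.1 p.2‖ * ‖F' p.2‖) := by rw [norm_mul, norm_mul]
        _ ≤ Mg * ((m⁻¹ * (|p.1 - p.2| ^ (-c) + 1)) * Mf) := by
            refine mul_le_mul hb1 (mul_le_mul hb3 hb2 (norm_nonneg _) (by positivity))
              (by positivity) hMg0
        _ = Mg * Mf * m⁻¹ * (|p.1 - p.2| ^ (-c) + 1) := by ring
    · have hFv : F p = 0 := if_neg hle
      rw [hFv, norm_zero]
      positivity
  have hIicInter : ∀ t ∈ Set.Icc a b, Set.Iic t ∩ Set.Icc a b = Set.Icc a t := by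
    intro t ht; ext τ
    simp only [Set.mem_inter_iff, Set.mem_Iic, Set.mem_Icc]
    exact ⟨fun ⟨h1, h2, _⟩ => ⟨h2, h1⟩, fun ⟨h1, h2⟩ => ⟨h2, h1, h2.trans ht.2⟩⟩
  have hIciInter : ∀ τ ∈ Set.Icc a b, Set.Ici τ ∩ Set.Icc a b = Set.Icc τ b := by
    intro τ hτ; ext t
    simp only [Set.mem_inter_iff, Set.mem_Ici, Set.mem_Icc]
    exact ⟨fun ⟨h1, _, h3⟩ => ⟨h1, h3⟩, fun ⟨h1, h2⟩ => ⟨h1, hτ.1.trans h1, h2⟩⟩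
  have hinner1 : ∀ t ∈ Set.Icc a b, (∫ τ, F (t, τ) ∂μ) = g t * leftCaputo a α f' t := by
    intro t ht
    have hind : (fun τ => F (t, τ))
        = Set.indicator (Set.Iic t) (fun τ => G t * (K t τ * F' τ)) := by
      funext τ
      rw [Set.indicator_apply]
      simp only [Set.mem_Iic, hFdef]
    rw [hind, hμ, integral_indicator measurableSet_Iic,
      Measure.restrict_restrict measurableSet_Iic, hIicInter t ht,
      MeasureTheory.integral_const_mul]
    rw [hGeq t ht]
    congr 1
    calc (∫ τ in Set.Icc a t, K t τ * F' τ) = ∫ τ in Set.Icc a t, K t τ * f' τ :=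
        setIntegral_congr_fun measurableSet_Icc fun τ hτ => by
          rw [hF'eq τ ⟨hτ.1, hτ.2.trans ht.2⟩]
      _ = leftCaputo a α f' t := by
        rw [integral_Icc_eq_integral_Ioc, ← intervalIntegral.integral_of_le ht.1]
        rfl
  have hinner2 : ∀ τ ∈ Set.Icc a b, (∫ t, F (t, τ) ∂μ) = f' τ * rightRLint1m b α g τ := by
    intro τ hτ
    have hind : (fun t => F (t, τ))
        = Set.indicator (Set.Ici τ) (fun t => G t * (K t τ * F' τ)) := by
      funext t
      rw [Set.indicator_apply]
      simp only [Set.mem_Ici, hFdef]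
    rw [hind, hμ, integral_indicator measurableSet_Ici,
      Measure.restrict_restrict measurableSet_Ici, hIciInter τ hτ]
    have e1 : (∫ t in Set.Icc τ b, G t * (K t τ * F' τ))
        = ∫ t in Set.Icc τ b, (K t τ * g t) * f' τ :=
      setIntegral_congr_fun measurableSet_Icc fun t ht' => by
        rw [hGeq t ⟨hτ.1.trans ht'.1, ht'.2⟩, hF'eq τ hτ]; ring
    rw [e1, integral_mul_const]
    have e2 : (∫ t in Set.Icc τ b, K t τ * g t) = rightRLint1m b α g τ := by
      rw [integral_Icc_eq_integral_Ioc, ← intervalIntegral.integral_of_le hτ.2]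
      rfl
    rw [e2, mul_comm]
  have hswap1 : (∫ t, (∫ τ, F (t, τ) ∂μ) ∂μ) = ∫ τ, (∫ t, F (t, τ) ∂μ) ∂μ :=
    integral_integral_swap (f := fun t τ => F (t, τ)) (by exact hFint)
  have hid1 : (∫ t in a..b, g t * leftCaputo a α f' t)
      = ∫ τ in Set.Icc a b, f' τ * rightRLint1m b α g τ := by
    rw [intervalIntegral.integral_of_le hab', ← integral_Icc_eq_integral_Ioc]
    calc (∫ t in Set.Icc a b, g t * leftCaputo a α f' t)
        = ∫ t, (∫ τ, F (t, τ) ∂μ) ∂μ := by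
          rw [hμ]
          exact setIntegral_congr_fun hIccm fun t ht => (hinner1 t ht).symm
      _ = ∫ τ, (∫ t, F (t, τ) ∂μ) ∂μ := hswap1
      _ = ∫ τ in Set.Icc a b, f' τ * rightRLint1m b α g τ := by
          rw [hμ] at *
          exact setIntegral_congr_fun hIccm fun τ hτ => hinner2 τ hτ
  have hfc : ContinuousOn f (Set.Icc a b) := fun x hx => (hf x hx).continuousAt.continuousWithinAt
  have hf'int : IntegrableOn f' (Set.Icc a b) volume := hf'.integrableOn_compact isCompact_Icc
  set F2 : ℝ × ℝ → ℝ := fun p => if p.2 ≤ p.1 then f' p.1 * h p.2 else 0 with hF2def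
  have hF2int : Integrable F2 (μ.prod μ) := by
    have hbase : Integrable (fun p : ℝ × ℝ => f' p.1 * h p.2) (μ.prod μ) := by
      rw [hμ]; exact Integrable.mul_prod hf'int hhI
    have hseq : F2 = Set.indicator {p : ℝ × ℝ | p.2 ≤ p.1} (fun p => f' p.1 * h p.2) := by
      funext p; rw [Set.indicator_apply]; rfl
    rw [hseq]
    exact hbase.indicator (measurableSet_le measurable_snd measurable_fst)
  have hswap2 : (∫ s, (∫ t, F2 (s, t) ∂μ) ∂μ) = ∫ t, (∫ s, F2 (s, t) ∂μ) ∂μ :=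
    integral_integral_swap (f := fun s t => F2 (s, t)) (by exact hF2int)
  have hH1 : ∀ s ∈ Set.Icc a b, (∫ t, F2 (s, t) ∂μ) = f' s * ∫ u in a..s, h u := by
    intro s hs
    have hind : (fun t => F2 (s, t)) = Set.indicator (Set.Iic s) (fun t => f' s * h t) := by
      funext t; rw [Set.indicator_apply]; simp only [Set.mem_Iic, hF2def]
    rw [hind, hμ, integral_indicator measurableSet_Iic,
      Measure.restrict_restrict measurableSet_Iic, hIicInter s hs,
      MeasureTheory.integral_const_mul, integral_Icc_eq_integral_Ioc,
      ← intervalIntegral.integral_of_le hs.1]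
  have hH2 : ∀ t ∈ Set.Icc a b, (∫ s, F2 (s, t) ∂μ) = (f b - f t) * h t := by
    intro t ht
    have hind : (fun s => F2 (s, t)) = Set.indicator (Set.Ici t) (fun s => f' s * h t) := by
      funext s; rw [Set.indicator_apply]; simp only [Set.mem_Ici, hF2def]
    rw [hind, hμ, integral_indicator measurableSet_Ici,
      Measure.restrict_restrict measurableSet_Ici, hIciInter t ht, integral_mul_const]
    congr 1
    rw [integral_Icc_eq_integral_Ioc, ← intervalIntegral.integral_of_le ht.2]
    refine intervalIntegral.integral_eq_sub_of_hasDerivAt (fun x hx => ?_) ?_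
    · rw [Set.uIcc_of_le ht.2] at hx
      exact hf x ⟨ht.1.trans hx.1, hx.2⟩
    · refine ContinuousOn.intervalIntegrable ?_
      rw [Set.uIcc_of_le ht.2]
      exact hf'.mono (Set.Icc_subset_Icc ht.1 le_rfl)
  have hfulfill : (∫ s in a..b, f' s) = f b - f a := by
    refine intervalIntegral.integral_eq_sub_of_hasDerivAt (fun x hx => ?_) ?_
    · rw [Set.uIcc_of_le hab'] at hx; exact hf x hx
    · refine ContinuousOn.intervalIntegrable ?_
      rw [Set.uIcc_of_le hab']; exact hf'
  have hHb : (∫ u in a..b, h u) = rightRLint1m b α g b - rightRLint1m b α g a := by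
    have := hI b ⟨hab', le_refl b⟩; linarith
  have hHcont : ContinuousOn (fun τ => ∫ u in a..τ, h u) (Set.Icc a b) := by
    have h2 := intervalIntegral.continuousOn_primitive_interval
      (a := a) (b := b) (μ := volume) (f := h) ?_
    · rwa [Set.uIcc_of_le hab'] at h2
    · rwa [Set.uIcc_of_le hab']
  have hid2 : (∫ τ in Set.Icc a b, f' τ * rightRLint1m b α g τ)
      = f b * rightRLint1m b α g b - f a * rightRLint1m b α g a
        - ∫ t in Set.Icc a b, f t * h t := by
    have e1 : (∫ τ in Set.Icc a b, f' τ * rightRLint1m b α g τ)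
        = ∫ τ in Set.Icc a b, (f' τ * rightRLint1m b α g a + f' τ * (∫ u in a..τ, h u)) :=
      setIntegral_congr_fun hIccm fun τ hτ => by rw [hI τ hτ]; ring
    have int1 : IntegrableOn (fun τ => f' τ * rightRLint1m b α g a) (Set.Icc a b) volume :=
      (hf'.mul continuousOn_const).integrableOn_compact isCompact_Icc
    have int2 : IntegrableOn (fun τ => f' τ * (∫ u in a..τ, h u)) (Set.Icc a b) volume :=
      (hf'.mul hHcont).integrableOn_compact isCompact_Icc
    rw [e1, integral_add int1 int2]
    have t1 : (∫ τ in Set.Icc a b, f' τ * rightRLint1m b α g a)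
        = (f b - f a) * rightRLint1m b α g a := by
      rw [integral_mul_const, integral_Icc_eq_integral_Ioc,
        ← intervalIntegral.integral_of_le hab', hfulfill]
    have t2 : (∫ τ in Set.Icc a b, f' τ * (∫ u in a..τ, h u))
        = ∫ t in Set.Icc a b, (f b - f t) * h t := by
      calc (∫ τ in Set.Icc a b, f' τ * (∫ u in a..τ, h u))
          = ∫ s, (∫ t, F2 (s, t) ∂μ) ∂μ := by
            rw [hμ]; exact setIntegral_congr_fun hIccm fun s hs => (hH1 s hs).symm
        _ = ∫ t, (∫ s, F2 (s, t) ∂μ) ∂μ := hswap2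
        _ = ∫ t in Set.Icc a b, (f b - f t) * h t := by
            rw [hμ] at *
            exact setIntegral_congr_fun hIccm fun t' ht' => hH2 t' ht'
    rw [t1, t2]
    obtain ⟨Mff, hMff⟩ := isCompact_Icc.exists_bound_of_continuousOn hfc
    have int4 : IntegrableOn (fun t => f t * h t) (Set.Icc a b) volume := by
      refine Integrable.bdd_mul (c := Mff) hhI (hfc.aestronglyMeasurable hIccm) ?_
      filter_upwards [ae_restrict_mem hIccm] with x hx using hMff x hx
    have int3 : IntegrableOn (fun t => f b * h t) (Set.Icc a b) volume := hhI.const_mul _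
    have e2 : (∫ t in Set.Icc a b, (f b - f t) * h t)
        = f b * (∫ t in Set.Icc a b, h t) - ∫ t in Set.Icc a b, f t * h t := by
      have e4 : (∫ t in Set.Icc a b, (f b - f t) * h t)
          = ∫ t in Set.Icc a b, (f b * h t - f t * h t) :=
        setIntegral_congr_fun hIccm fun t _ => by ring
      rw [e4, integral_sub int3 int4, MeasureTheory.integral_const_mul]
    have e3 : (∫ t in Set.Icc a b, h t) = rightRLint1m b α g b - rightRLint1m b α g a := by
      rw [integral_Icc_eq_integral_Ioc, ← intervalIntegral.integral_of_le hab']; exact hHb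
    rw [e2, e3]
    ring
  have hid3 : (∫ t in a..b, f t * (-(deriv (rightRLint1m b α g) t)))
      = - ∫ t in Set.Icc a b, f t * h t := by
    have hht : Integrable (Set.indicator (Set.Icc a b) h) volume :=
      hhI.integrable_indicator hIccm
    have hderiv := aux_ae_hasDerivAt_primitive hht a
    have hae : ∀ᵐ t ∂(volume.restrict (Set.Ioo a b)), deriv (rightRLint1m b α g) t = h t := by
      filter_upwards [ae_restrict_mem measurableSet_Ioo, ae_restrict_of_ae hderiv] with t ht hd
      have heq : (fun u => rightRLint1m b α g a + ∫ s in a..u, Set.indicator (Set.Icc a b) h s)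
          =ᶠ[nhds t] rightRLint1m b α g := by
        filter_upwards [isOpen_Ioo.mem_nhds ht] with u hu
        have h1 : (∫ s in a..u, Set.indicator (Set.Icc a b) h s) = ∫ s in a..u, h s := by
          rw [intervalIntegral.integral_of_le hu.1.le, intervalIntegral.integral_of_le hu.1.le]
          refine setIntegral_congr_fun measurableSet_Ioc fun s hs => ?_
          have hs' := Set.mem_Ioc.mp hs
          have hu' := Set.mem_Ioo.mp hu
          exact Set.indicator_of_mem (Set.mem_Icc.mpr ⟨hs'.1.le, hs'.2.trans hu'.2.le⟩) h
        have hu' := Set.mem_Ioo.mp hu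
        rw [h1, ← hI u (Set.mem_Icc.mpr ⟨hu'.1.le, hu'.2.le⟩)]
      have hD : HasDerivAt (rightRLint1m b α g) (0 + Set.indicator (Set.Icc a b) h t) t :=
        HasDerivAt.congr_of_eventuallyEq ((hasDerivAt_const t (rightRLint1m b α g a)).add hd)
          heq.symm
      have ht' := Set.mem_Ioo.mp ht
      rw [hD.deriv, zero_add, Set.indicator_of_mem (Set.mem_Icc.mpr ⟨ht'.1.le, ht'.2.le⟩) h]
    calc (∫ t in a..b, f t * (-(deriv (rightRLint1m b α g) t)))
        = ∫ t in Set.Ioo a b, f t * (-(deriv (rightRLint1m b α g) t)) := by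
          rw [intervalIntegral.integral_of_le hab', integral_Ioc_eq_integral_Ioo]
      _ = ∫ t in Set.Ioo a b, (-(f t * h t)) := by
          refine integral_congr_ae (hae.mono fun t h' => ?_)
          beta_reduce
          rw [h']; ring
      _ = - ∫ t in Set.Ioo a b, f t * h t := integral_neg _
      _ = - ∫ t in Set.Icc a b, f t * h t := by
          rw [integral_Icc_eq_integral_Ioc, integral_Ioc_eq_integral_Ioo]
  rw [hid1, hid2, hid3]
  ring
end

section
/- For every x ∈ [0,1], the Gamma function satisfies (x² + 1)/(x + 1) ≤ Γ(x + 1) ≤ (x² + 2)/(x + 2). -/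
open Finset


private lemma gamma_prod (x : ℝ) (hx : 0 < x) (n : ℕ) :
    Real.Gamma (x + n) = Real.Gamma x * ∏ j ∈ Finset.range n, (x + (j : ℝ)) := by
  induction n with
  | zero => simp
  | succ m ih =>
    have hxm : x + (m : ℝ) ≠ 0 := by positivity
    have h : (x : ℝ) + ((m + 1 : ℕ) : ℝ) = (x + (m : ℝ)) + 1 := by push_cast; ring
    rw [h, Real.Gamma_add_one hxm, ih, Finset.prod_range_succ]
    ring

private lemma gamma_chord {a b x : ℝ} (ha : 0 < a) (hab : a < b) (hx1 : a ≤ x) (hx2 : x ≤ b) :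
    (b - a) * Real.Gamma x ≤ (b - x) * Real.Gamma a + (x - a) * Real.Gamma b := by
  have hba : 0 < b - a := by linarith
  have key : Real.Gamma x ≤ (b - x)/(b - a) * Real.Gamma a + (x - a)/(b - a) * Real.Gamma b := by
    have harg : ((b - x)/(b - a)) • a + ((x - a)/(b - a)) • b = x := by
      rw [smul_eq_mul, smul_eq_mul]; field_simp; ring
    have h := Real.convexOn_Gamma.2 (Set.mem_Ioi.mpr ha)
      (Set.mem_Ioi.mpr (ha.trans hab))
      (show (0:ℝ) ≤ (b - x)/(b - a) from div_nonneg (by linarith) hba.le)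
      (show (0:ℝ) ≤ (x - a)/(b - a) from div_nonneg (by linarith) hba.le)
      (show (b - x)/(b - a) + (x - a)/(b - a) = 1 by
        rw [← add_div]
        field_simp; ring)
    rw [harg] at h
    simpa using h
  have h2 := mul_le_mul_of_nonneg_left key hba.le
  calc (b - a) * Real.Gamma x
      ≤ (b - a) * ((b - x)/(b - a) * Real.Gamma a + (x - a)/(b - a) * Real.Gamma b) := h2
    _ = (b - x) * Real.Gamma a + (x - a) * Real.Gamma b := by field_simp

private lemma rpow_le_of_pow16 {a v e : ℝ} (ha : 0 ≤ a) (hv : 0 ≤ v) (j : ℕ)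
    (he : e * 16 = (j : ℝ)) (h : a ^ j ≤ v ^ 16) : a ^ e ≤ v := by
  have key : (a ^ e) ^ (16 : ℕ) = a ^ j := by
    rw [← Real.rpow_natCast (a ^ e) 16, ← Real.rpow_mul ha,
      show e * ((16:ℕ):ℝ) = ((j:ℕ):ℝ) by push_cast; linarith,
      Real.rpow_natCast]
  refine (pow_le_pow_iff_left₀ (n := 16) (Real.rpow_nonneg ha e) hv (by norm_num)).mp ?_
  rw [key]; exact h

private lemma node_helper {s u v lb ub Q : ℝ} (hs0 : 0 < s) (hs1 : s < 1)
    (hu : (64:ℝ) ^ s ≤ u) (hv : ((64:ℝ) + s) ^ (1 - s) ≤ v) (hv0 : 0 < v)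
    (hQ : (∏ j ∈ Finset.range 63, (1 + s + (j : ℝ))) = Q) (hQ0 : 0 < Q)
    (h1 : (Nat.factorial 63 : ℝ) * u ≤ ub * Q)
    (h2 : lb * (v * Q) ≤ (Nat.factorial 64 : ℝ)) :
    lb ≤ Real.Gamma (1 + s) ∧ Real.Gamma (1 + s) ≤ ub := by
  have hs : (0:ℝ) < 1 + s := by linarith
  have h64s : (0:ℝ) < 64 + s := by linarith
  have hprod : Real.Gamma (64 + s) = Real.Gamma (1 + s) * Q := by
    have h := gamma_prod (1 + s) hs 63
    rw [hQ] at h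
    rw [show (64:ℝ) + s = 1 + s + ((63:ℕ) : ℝ) by push_cast; ring]
    exact h
  have g64 : Real.Gamma 64 = (Nat.factorial 63 : ℝ) := by
    rw [show (64:ℝ) = ((63:ℕ):ℝ) + 1 by norm_num]; exact Real.Gamma_nat_eq_factorial 63
  have g65 : Real.Gamma 65 = (Nat.factorial 64 : ℝ) := by
    rw [show (65:ℝ) = ((64:ℕ):ℝ) + 1 by norm_num]; exact Real.Gamma_nat_eq_factorial 64
  have hgpos : 0 < Real.Gamma (64 + s) := Real.Gamma_pos_of_pos h64s
  have hfac63 : (0:ℝ) < (Nat.factorial 63 : ℝ) := by positivity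
  have hupper : Real.Gamma (64 + s) ≤ (Nat.factorial 63 : ℝ) * u := by
    have h := Real.Gamma_mul_add_mul_le_rpow_Gamma_mul_rpow_Gamma
      (s := 64) (t := 65) (a := 1 - s) (b := s) (by norm_num) (by norm_num)
      (by linarith) hs0 (by ring)
    rw [show (1 - s) * 64 + s * 65 = 64 + s by ring, g64, g65] at h
    have hfac : (Nat.factorial 64 : ℝ) = (Nat.factorial 63 : ℝ) * 64 := by
      rw [show (64:ℕ) = 63 + 1 from rfl, Nat.factorial_succ]; push_cast; ring
    calc Real.Gamma (64 + s)
        ≤ (Nat.factorial 63 : ℝ) ^ (1-s) * (Nat.factorial 64 : ℝ) ^ s := h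
      _ = (Nat.factorial 63 : ℝ) * (64:ℝ) ^ s := by
          rw [hfac, Real.mul_rpow hfac63.le (by norm_num), ← mul_assoc,
            ← Real.rpow_add hfac63]
          norm_num
      _ ≤ (Nat.factorial 63 : ℝ) * u := mul_le_mul_of_nonneg_left hu hfac63.le
  have hlower : (Nat.factorial 64 : ℝ) ≤ Real.Gamma (64 + s) * v := by
    have h := Real.Gamma_mul_add_mul_le_rpow_Gamma_mul_rpow_Gamma
      (s := 64 + s) (t := 64 + s + 1) (a := s) (b := 1 - s) h64s (by linarith)
      hs0 (by linarith) (by ring)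
    rw [show s * (64 + s) + (1 - s) * (64 + s + 1) = 65 by ring, g65,
      Real.Gamma_add_one h64s.ne'] at h
    have e : Real.Gamma (64+s) ^ s * ((64 + s) * Real.Gamma (64+s)) ^ (1-s)
        = Real.Gamma (64+s) * ((64:ℝ)+s) ^ (1-s) := by
      rw [Real.mul_rpow h64s.le hgpos.le,
        show Real.Gamma (64+s) ^ s * (((64:ℝ)+s) ^ (1-s) * Real.Gamma (64+s) ^ (1-s))
          = (Real.Gamma (64+s) ^ s * Real.Gamma (64+s) ^ (1-s)) * ((64:ℝ)+s) ^ (1-s) by ring,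
        ← Real.rpow_add hgpos, show s + (1-s) = (1:ℝ) by ring, Real.rpow_one]
    rw [e] at h
    calc (Nat.factorial 64 : ℝ) ≤ Real.Gamma (64+s) * ((64:ℝ)+s) ^ (1-s) := h
      _ ≤ Real.Gamma (64+s) * v := mul_le_mul_of_nonneg_left hv hgpos.le
  constructor
  · have h3 : lb * (Q * v) ≤ Real.Gamma (1+s) * (Q * v) := by
      calc lb * (Q * v) = lb * (v * Q) := by ring
        _ ≤ (Nat.factorial 64 : ℝ) := h2
        _ ≤ Real.Gamma (64+s) * v := hlower
        _ = Real.Gamma (1+s) * (Q * v) := by rw [hprod]; ring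
    exact le_of_mul_le_mul_right h3 (mul_pos hQ0 hv0)
  · have h3 : Real.Gamma (1+s) * Q ≤ ub * Q := by
      calc Real.Gamma (1+s) * Q = Real.Gamma (64+s) := hprod.symm
        _ ≤ (Nat.factorial 63 : ℝ) * u := hupper
        _ ≤ ub * Q := h1
    exact le_of_mul_le_mul_right h3 hQ0


private lemma node_one : (1:ℝ) ≤ Real.Gamma 1 ∧ Real.Gamma 1 ≤ 1 := by
  rw [Real.Gamma_one]; exact ⟨le_rfl, le_rfl⟩

private lemma node_two : (1:ℝ) ≤ Real.Gamma 2 ∧ Real.Gamma 2 ≤ 1 := by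
  rw [Real.Gamma_two]; exact ⟨le_rfl, le_rfl⟩


private lemma node1 :
    ((967137/1000000) : ℝ) ≤ Real.Gamma (1 + 1/16) ∧ Real.Gamma (1 + 1/16) ≤ (484013/500000) := by
  have f63 : Nat.factorial 63 = 1982608315404440064116146708361898137544773690227268628106279599612729753600000000000000 := by rfl
  have f64 : Nat.factorial 64 = 126886932185884164103433389335161480802865516174545192198801894375214704230400000000000000 := by rfl
  refine node_helper (u := (6484199/5000000)) (v := (2469796351/50000000)) (Q := (19221882098820807225098846010380406892200132498407787905636962337656189780195740716913874269696673363823731644147608473792545373750433015693259978249306793212890625/7237005577332262213973186563042994240829374041602535252466099000494570602496))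
    (by norm_num) (by norm_num)
    (rpow_le_of_pow16 (by norm_num) (by norm_num) 1 (by norm_num) (by norm_num))
    (rpow_le_of_pow16 (by norm_num) (by norm_num) 15 (by norm_num) (by norm_num))
    (by norm_num)
    (by norm_num [Finset.prod_range_succ])
    (by norm_num) (by rw [f63]; norm_num) (by rw [f64]; norm_num)


private lemma node2 :
    ((47047/50000) : ℝ) ≤ Real.Gamma (1 + 2/16) ∧ Real.Gamma (1 + 2/16) ≤ (942551/1000000) := by
  have f63 : Nat.factorial 63 = 1982608315404440064116146708361898137544773690227268628106279599612729753600000000000000 := by rfl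
  have f64 : Nat.factorial 64 = 126886932185884164103433389335161480802865516174545192198801894375214704230400000000000000 := by rfl
  refine node_helper (u := (16817931/10000000)) (v := (1905982727/50000000)) (Q := (2775712708886417631881801124483617956150166267327125440494032926894966125133768692066181536896442255537533152896808597999510385849502105712890625/784637716923335095479473677900958302012794430558004314112))
    (by norm_num) (by norm_num)
    (rpow_le_of_pow16 (by norm_num) (by norm_num) 2 (by norm_num) (by norm_num))
    (rpow_le_of_pow16 (by norm_num) (by norm_num) 14 (by norm_num) (by norm_num))
    (by norm_num)
    (by norm_num [Finset.prod_range_succ])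
    (by norm_num) (by rw [f63]; norm_num) (by rw [f64]; norm_num)


private lemma node3 :
    ((920491/1000000) : ℝ) ≤ Real.Gamma (1 + 3/16) ∧ Real.Gamma (1 + 3/16) ≤ (184537/200000) := by
  have f63 : Nat.factorial 63 = 1982608315404440064116146708361898137544773690227268628106279599612729753600000000000000 := by rfl
  have f64 : Nat.factorial 64 = 126886932185884164103433389335161480802865516174545192198801894375214704230400000000000000 := by rfl
  refine node_helper (u := (21810157/10000000)) (v := (183837251/6250000)) (Q := (33915796904205261823965067837656150402607190617790584337807747569955152059581871066801335664413932452474142967703583920909627209927667297133645967760969451904296875/7237005577332262213973186563042994240829374041602535252466099000494570602496))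
    (by norm_num) (by norm_num)
    (rpow_le_of_pow16 (by norm_num) (by norm_num) 3 (by norm_num) (by norm_num))
    (rpow_le_of_pow16 (by norm_num) (by norm_num) 13 (by norm_num) (by norm_num))
    (by norm_num)
    (by norm_num [Finset.prod_range_succ])
    (by norm_num) (by rw [f63]; norm_num) (by rw [f64]; norm_num)


private lemma node4 :
    ((905081/1000000) : ℝ) ≤ Real.Gamma (1 + 4/16) ∧ Real.Gamma (1 + 4/16) ≤ (453867/500000) := by
  have f63 : Nat.factorial 63 = 1982608315404440064116146708361898137544773690227268628106279599612729753600000000000000 := by rfl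
  have f64 : Nat.factorial 64 = 126886932185884164103433389335161480802865516174545192198801894375214704230400000000000000 := by rfl
  refine node_helper (u := (14142137/5000000)) (v := (2269367597/100000000)) (Q := (525536990543187263936248594865175908358716375894417915470000347081095623785671304374055500415353355445317471200498199462890625/85070591730234615865843651857942052864))
    (by norm_num) (by norm_num)
    (rpow_le_of_pow16 (by norm_num) (by norm_num) 4 (by norm_num) (by norm_num))
    (rpow_le_of_pow16 (by norm_num) (by norm_num) 12 (by norm_num) (by norm_num))
    (by norm_num)
    (by norm_num [Finset.prod_range_succ])
    (by norm_num) (by rw [f63]; norm_num) (by rw [f64]; norm_num)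


private lemma node5 :
    ((894159/1000000) : ℝ) ≤ Real.Gamma (1 + 5/16) ∧ Real.Gamma (1 + 5/16) ≤ (897161/1000000) := by
  have f63 : Nat.factorial 63 = 1982608315404440064116146708361898137544773690227268628106279599612729753600000000000000 := by rfl
  have f64 : Nat.factorial 64 = 126886932185884164103433389335161480802865516174545192198801894375214704230400000000000000 := by rfl
  refine node_helper (u := (9170041/2500000)) (v := (350133027/20000000)) (Q := (58662059819586425051885280613896745219534099156141535915940386370157899792146512735916588539793757267150986162185879627778532111775809124624371626652216046142578125/7237005577332262213973186563042994240829374041602535252466099000494570602496))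
    (by norm_num) (by norm_num)
    (rpow_le_of_pow16 (by norm_num) (by norm_num) 5 (by norm_num) (by norm_num))
    (rpow_le_of_pow16 (by norm_num) (by norm_num) 11 (by norm_num) (by norm_num))
    (by norm_num)
    (by norm_num [Finset.prod_range_succ])
    (by norm_num) (by rw [f63]; norm_num) (by rw [f64]; norm_num)


private lemma node6 :
    ((13864/15625) : ℝ) ≤ Real.Gamma (1 + 6/16) ∧ Real.Gamma (1 + 6/16) ≤ (178109/200000) := by
  have f63 : Nat.factorial 63 = 1982608315404440064116146708361898137544773690227268628106279599612729753600000000000000 := by rfl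
  have f64 : Nat.factorial 64 = 126886932185884164103433389335161480802865516174545192198801894375214704230400000000000000 := by rfl
  refine node_helper (u := (47568287/10000000)) (v := (337588999/25000000)) (Q := (8309374470281777960604275098222446849686089498484439347523582430223284355940394121220915169896448415911916208000897600392646856916164764404296875/784637716923335095479473677900958302012794430558004314112))
    (by norm_num) (by norm_num)
    (rpow_le_of_pow16 (by norm_num) (by norm_num) 6 (by norm_num) (by norm_num))
    (rpow_le_of_pow16 (by norm_num) (by norm_num) 10 (by norm_num) (by norm_num))
    (by norm_num)
    (by norm_num [Finset.prod_range_succ])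
    (by norm_num) (by rw [f63]; norm_num) (by rw [f64]; norm_num)


private lemma node7 :
    ((221041/250000) : ℝ) ≤ Real.Gamma (1 + 7/16) ∧ Real.Gamma (1 + 7/16) ≤ (887561/1000000) := by
  have f63 : Nat.factorial 63 = 1982608315404440064116146708361898137544773690227268628106279599612729753600000000000000 := by rfl
  have f64 : Nat.factorial 64 = 126886932185884164103433389335161480802865516174545192198801894375214704230400000000000000 := by rfl
  refine node_helper (u := (15422109/2500000)) (v := (520727501/50000000)) (Q := (99724501349963722344033168366721925455309292657942246309729485386661147470484200596219825560643872304851145391205775896987964788364494512144830077296385345458984375/7237005577332262213973186563042994240829374041602535252466099000494570602496))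
    (by norm_num) (by norm_num)
    (rpow_le_of_pow16 (by norm_num) (by norm_num) 7 (by norm_num) (by norm_num))
    (rpow_le_of_pow16 (by norm_num) (by norm_num) 9 (by norm_num) (by norm_num))
    (by norm_num)
    (by norm_num [Finset.prod_range_succ])
    (by norm_num) (by rw [f63]; norm_num) (by rw [f64]; norm_num)


private lemma node8 :
    ((88451/100000) : ℝ) ≤ Real.Gamma (1 + 8/16) ∧ Real.Gamma (1 + 8/16) ≤ (887961/1000000) := by
  have f63 : Nat.factorial 63 = 1982608315404440064116146708361898137544773690227268628106279599612729753600000000000000 := by rfl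
  have f64 : Nat.factorial 64 = 126886932185884164103433389335161480802865516174545192198801894375214704230400000000000000 := by rfl
  refine node_helper (u := (40000001/5000000)) (v := (803118923/100000000)) (Q := (164749260436028300985882145742271020352352323765318815064452725844663571025238239569133424206748199462890625/9223372036854775808))
    (by norm_num) (by norm_num)
    (rpow_le_of_pow16 (by norm_num) (by norm_num) 8 (by norm_num) (by norm_num))
    (rpow_le_of_pow16 (by norm_num) (by norm_num) 8 (by norm_num) (by norm_num))
    (by norm_num)
    (by norm_num [Finset.prod_range_succ])
    (by norm_num) (by rw [f63]; norm_num) (by rw [f64]; norm_num)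


private lemma node9 :
    ((222037/250000) : ℝ) ≤ Real.Gamma (1 + 9/16) ∧ Real.Gamma (1 + 9/16) ≤ (445779/500000) := by
  have f63 : Nat.factorial 63 = 1982608315404440064116146708361898137544773690227268628106279599612729753600000000000000 := by rfl
  have f64 : Nat.factorial 64 = 126886932185884164103433389335161480802865516174545192198801894375214704230400000000000000 := by rfl
  refine node_helper (u := (103747167/10000000)) (v := (619250549/100000000)) (Q := (166964178728115803048236593637153961036982755528807891513024825724641330735577305366253783604537472810479137372591502059242298997555514599900971721418299713134765625/7237005577332262213973186563042994240829374041602535252466099000494570602496))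
    (by norm_num) (by norm_num)
    (rpow_le_of_pow16 (by norm_num) (by norm_num) 9 (by norm_num) (by norm_num))
    (rpow_le_of_pow16 (by norm_num) (by norm_num) 7 (by norm_num) (by norm_num))
    (by norm_num)
    (by norm_num [Finset.prod_range_succ])
    (by norm_num) (by rw [f63]; norm_num) (by rw [f64]; norm_num)


private lemma node10 :
    ((894947/1000000) : ℝ) ≤ Real.Gamma (1 + 10/16) ∧ Real.Gamma (1 + 10/16) ≤ (449109/500000) := by
  have f63 : Nat.factorial 63 = 1982608315404440064116146708361898137544773690227268628106279599612729753600000000000000 := by rfl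
  have f64 : Nat.factorial 64 = 126886932185884164103433389335161480802865516174545192198801894375214704230400000000000000 := by rfl
  refine node_helper (u := (134543429/10000000)) (v := (477419563/100000000)) (Q := (23301700707406734397539130259452835360406163477571678092827854896224768550983067570291649187569472947788132132151690483258964113680298858642578125/784637716923335095479473677900958302012794430558004314112))
    (by norm_num) (by norm_num)
    (rpow_le_of_pow16 (by norm_num) (by norm_num) 10 (by norm_num) (by norm_num))
    (rpow_le_of_pow16 (by norm_num) (by norm_num) 6 (by norm_num) (by norm_num))
    (by norm_num)
    (by norm_num [Finset.prod_range_succ])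
    (by norm_num) (by rw [f63]; norm_num) (by rw [f64]; norm_num)


private lemma node11 :
    ((904823/1000000) : ℝ) ≤ Real.Gamma (1 + 11/16) ∧ Real.Gamma (1 + 11/16) ≤ (226963/250000) := by
  have f63 : Nat.factorial 63 = 1982608315404440064116146708361898137544773690227268628106279599612729753600000000000000 := by rfl
  have f64 : Nat.factorial 64 = 126886932185884164103433389335161480802865516174545192198801894375214704230400000000000000 := by rfl
  refine node_helper (u := (4362031/250000)) (v := (368028429/100000000)) (Q := (275759337312417921500518683545533610263746657606757848005908838192678946302517380288078374032009093814290109744607497790841295940176397649783447083537007293701171875/7237005577332262213973186563042994240829374041602535252466099000494570602496))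
    (by norm_num) (by norm_num)
    (rpow_le_of_pow16 (by norm_num) (by norm_num) 11 (by norm_num) (by norm_num))
    (rpow_le_of_pow16 (by norm_num) (by norm_num) 5 (by norm_num) (by norm_num))
    (by norm_num)
    (by norm_num [Finset.prod_range_succ])
    (by norm_num) (by rw [f63]; norm_num) (by rw [f64]; norm_num)


private lemma node12 :
    ((91773/100000) : ℝ) ≤ Real.Gamma (1 + 12/16) ∧ Real.Gamma (1 + 12/16) ≤ (92041/100000) := by
  have f63 : Nat.factorial 63 = 1982608315404440064116146708361898137544773690227268628106279599612729753600000000000000 := by rfl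
  have f64 : Nat.factorial 64 = 126886932185884164103433389335161480802865516174545192198801894375214704230400000000000000 := by rfl
  refine node_helper (u := (56568543/2500000)) (v := (283667739/100000000)) (Q := (4146397731641025439742667095231014462585497048470084295943468472542013567946060327771862794915346411409054570548332733154296875/85070591730234615865843651857942052864))
    (by norm_num) (by norm_num)
    (rpow_le_of_pow16 (by norm_num) (by norm_num) 12 (by norm_num) (by norm_num))
    (rpow_le_of_pow16 (by norm_num) (by norm_num) 4 (by norm_num) (by norm_num))
    (by norm_num)
    (by norm_num [Finset.prod_range_succ])
    (by norm_num) (by rw [f63]; norm_num) (by rw [f64]; norm_num)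


private lemma node13 :
    ((46683/50000) : ℝ) ≤ Real.Gamma (1 + 13/16) ∧ Real.Gamma (1 + 13/16) ≤ (467937/500000) := by
  have f63 : Nat.factorial 63 = 1982608315404440064116146708361898137544773690227268628106279599612729753600000000000000 := by rfl
  have f64 : Nat.factorial 64 = 126886932185884164103433389335161480802865516174545192198801894375214704230400000000000000 := by rfl
  refine node_helper (u := (18340081/625000)) (v := (109309027/50000000)) (Q := (449883730713058390563183038519406847305321302512538174803546858720851876387979879877331256620694106183593531920705342971946754353821886429534482630216992950439453125/7237005577332262213973186563042994240829374041602535252466099000494570602496))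
    (by norm_num) (by norm_num)
    (rpow_le_of_pow16 (by norm_num) (by norm_num) 13 (by norm_num) (by norm_num))
    (rpow_le_of_pow16 (by norm_num) (by norm_num) 3 (by norm_num) (by norm_num))
    (by norm_num)
    (by norm_num [Finset.prod_range_succ])
    (by norm_num) (by rw [f63]; norm_num) (by rw [f64]; norm_num)


private lemma node14 :
    ((952639/1000000) : ℝ) ≤ Real.Gamma (1 + 14/16) ∧ Real.Gamma (1 + 14/16) ≤ (954261/1000000) := by
  have f63 : Nat.factorial 63 = 1982608315404440064116146708361898137544773690227268628106279599612729753600000000000000 := by rfl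
  have f64 : Nat.factorial 64 = 126886932185884164103433389335161480802865516174545192198801894375214704230400000000000000 := by rfl
  refine node_helper (u := (380546279/10000000)) (v := (168464997/100000000)) (Q := (62036486122292706418487598459066653281486558795813675458281396252607525430080728701250498406347602854348366415704643503936057220260643157958984375/784637716923335095479473677900958302012794430558004314112))
    (by norm_num) (by norm_num)
    (rpow_le_of_pow16 (by norm_num) (by norm_num) 14 (by norm_num) (by norm_num))
    (rpow_le_of_pow16 (by norm_num) (by norm_num) 2 (by norm_num) (by norm_num))
    (by norm_num)
    (by norm_num [Finset.prod_range_succ])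
    (by norm_num) (by rw [f63]; norm_num) (by rw [f64]; norm_num)


private lemma node15 :
    ((243681/250000) : ℝ) ≤ Real.Gamma (1 + 15/16) ∧ Real.Gamma (1 + 15/16) ≤ (975613/1000000) := by
  have f63 : Nat.factorial 63 = 1982608315404440064116146708361898137544773690227268628106279599612729753600000000000000 := by rfl
  have f64 : Nat.factorial 64 = 126886932185884164103433389335161480802865516174545192198801894375214704230400000000000000 := by rfl
  refine node_helper (u := (493507467/10000000)) (v := (3245047/2500000)) (Q := (725792837185444914989576570762869133882768358245673351327049101361398702241392385793611595621473465218752325349769807748680419021708952593406232648570620452880859375/7237005577332262213973186563042994240829374041602535252466099000494570602496))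
    (by norm_num) (by norm_num)
    (rpow_le_of_pow16 (by norm_num) (by norm_num) 15 (by norm_num) (by norm_num))
    (rpow_le_of_pow16 (by norm_num) (by norm_num) 1 (by norm_num) (by norm_num))
    (by norm_num)
    (by norm_num [Finset.prod_range_succ])
    (by norm_num) (by rw [f63]; norm_num) (by rw [f64]; norm_num)


private lemma nodem1 : Real.Gamma (15/16) ≤ ((975613/937500) : ℝ) := by
  have h : Real.Gamma (15/16 + 1) = (15/16) * Real.Gamma (15/16) :=
    Real.Gamma_add_one (by norm_num)
  have h3 : (15/16 : ℝ) * Real.Gamma (15/16) ≤ (975613/1000000) := by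
    rw [← h, show (15/16 : ℝ) + 1 = 1 + 15/16 by norm_num]; exact node15.2
  linarith

private lemma node17 : Real.Gamma (2 + 1/16) ≤ ((8228221/8000000) : ℝ) := by
  have h : Real.Gamma ((1 + 1/16) + 1) = (1 + 1/16) * Real.Gamma (1 + 1/16) :=
    Real.Gamma_add_one (by norm_num)
  have h3 : Real.Gamma (2 + 1/16) = (1 + 1/16) * Real.Gamma (1 + 1/16) := by
    rw [← h]; norm_num
  rw [h3]; linarith [node1.2]


private lemma case0 {x : ℝ} (ha : (0 : ℝ) ≤ x) (hb : x ≤ (1/16)) :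
    (x ^ 2 + 1) / (x + 1) ≤ Real.Gamma (x + 1) ∧
      Real.Gamma (x + 1) ≤ (x ^ 2 + 2) / (x + 2) := by
  constructor
  · rw [div_le_iff₀ (by linarith : (0:ℝ) < x + 1)]
    have hc := gamma_chord (a := 15/16) (b := x + 1) (x := 1) (by norm_num)
      (by linarith) (by norm_num) (by linarith)
    have pq : ((x + 1) - 15/16) * 1 ≤ ((x + 1) - 15/16) * Real.Gamma 1 :=
      mul_le_mul_of_nonneg_left node_one.1 (by linarith)
    have pp : ((x + 1) - 1) * Real.Gamma (15/16) ≤ ((x + 1) - 1) * (975613/937500) :=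
      mul_le_mul_of_nonneg_left nodem1 (by linarith)
    have hG : 1 + (-152452/234375) * x ≤ Real.Gamma (x + 1) := by linarith
    have hm := mul_le_mul_of_nonneg_right hG (by linarith : (0:ℝ) ≤ x + 1)
    have hbox : (0:ℝ) ≤ (x - 0) * ((1/16) - x) :=
      mul_nonneg (by linarith) (by linarith)
    linarith [hm, hbox]
  · rw [le_div_iff₀ (by linarith : (0:ℝ) < x + 2)]
    have hc := gamma_chord (a := 1) (b := (1 + 1/16)) (x := x + 1) (by norm_num) (by norm_num)
      (by linarith) (by linarith)
    have pa : ((1 + 1/16) - (x + 1)) * Real.Gamma 1 ≤ ((1 + 1/16) - (x + 1)) * 1 :=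
      mul_le_mul_of_nonneg_left node_one.2 (by linarith)
    have pb : ((x + 1) - 1) * Real.Gamma (1 + 1/16) ≤ ((x + 1) - 1) * (484013/500000) :=
      mul_le_mul_of_nonneg_left node1.2 (by linarith)
    have hG : Real.Gamma (x + 1) ≤ 1 + (-15987/31250) * x := by linarith
    have hm := mul_le_mul_of_nonneg_right hG (by linarith : (0:ℝ) ≤ x + 2)
    have hsq : (0:ℝ) ≤ (x - 0) ^ 2 := sq_nonneg _
    have hbox : (0:ℝ) ≤ (x - 0) * ((1/16) - x) :=
      mul_nonneg (by linarith) (by linarith)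
    linarith [hm, hsq, hbox]


private lemma case1 {x : ℝ} (ha : ((1/16) : ℝ) ≤ x) (hb : x ≤ (2/16)) :
    (x ^ 2 + 1) / (x + 1) ≤ Real.Gamma (x + 1) ∧
      Real.Gamma (x + 1) ≤ (x ^ 2 + 2) / (x + 2) := by
  constructor
  · rw [div_le_iff₀ (by linarith : (0:ℝ) < x + 1)]
    have hc := gamma_chord (a := 1) (b := x + 1) (x := (1 + 1/16)) (by norm_num)
      (by linarith) (by norm_num) (by linarith)
    have pq : ((x + 1) - 1) * (967137/1000000) ≤ ((x + 1) - 1) * Real.Gamma (1 + 1/16) :=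
      mul_le_mul_of_nonneg_left node1.1 (by linarith)
    have pp : ((x + 1) - (1 + 1/16)) * Real.Gamma 1 ≤ ((x + 1) - (1 + 1/16)) * 1 :=
      mul_le_mul_of_nonneg_left node_one.2 (by linarith)
    have hG : 1 + (-32863/62500) * x ≤ Real.Gamma (x + 1) := by linarith
    have hm := mul_le_mul_of_nonneg_right hG (by linarith : (0:ℝ) ≤ x + 1)
    have hbox : (0:ℝ) ≤ (x - (1/16)) * ((2/16) - x) :=
      mul_nonneg (by linarith) (by linarith)
    linarith [hm, hbox]
  · rw [le_div_iff₀ (by linarith : (0:ℝ) < x + 2)]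
    have hc := gamma_chord (a := (1 + 1/16)) (b := (1 + 2/16)) (x := x + 1) (by norm_num) (by norm_num)
      (by linarith) (by linarith)
    have pa : ((1 + 2/16) - (x + 1)) * Real.Gamma (1 + 1/16) ≤ ((1 + 2/16) - (x + 1)) * (484013/500000) :=
      mul_le_mul_of_nonneg_left node1.2 (by linarith)
    have pb : ((x + 1) - (1 + 1/16)) * Real.Gamma (1 + 2/16) ≤ ((x + 1) - (1 + 1/16)) * (942551/1000000) :=
      mul_le_mul_of_nonneg_left node2.2 (by linarith)
    have hG : Real.Gamma (x + 1) ≤ (993501/1000000) + (-1019/2500) * x := by linarith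
    have hm := mul_le_mul_of_nonneg_right hG (by linarith : (0:ℝ) ≤ x + 2)
    have hsq : (0:ℝ) ≤ (x - (178301/2815200)) ^ 2 := sq_nonneg _
    have hbox : (0:ℝ) ≤ (x - (1/16)) * ((2/16) - x) :=
      mul_nonneg (by linarith) (by linarith)
    linarith [hm, hsq, hbox]


private lemma case2 {x : ℝ} (ha : ((2/16) : ℝ) ≤ x) (hb : x ≤ (3/16)) :
    (x ^ 2 + 1) / (x + 1) ≤ Real.Gamma (x + 1) ∧
      Real.Gamma (x + 1) ≤ (x ^ 2 + 2) / (x + 2) := by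
  constructor
  · rw [div_le_iff₀ (by linarith : (0:ℝ) < x + 1)]
    have hc := gamma_chord (a := (1 + 1/16)) (b := x + 1) (x := (1 + 2/16)) (by norm_num)
      (by linarith) (by norm_num) (by linarith)
    have pq : ((x + 1) - (1 + 1/16)) * (47047/50000) ≤ ((x + 1) - (1 + 1/16)) * Real.Gamma (1 + 2/16) :=
      mul_le_mul_of_nonneg_left node2.1 (by linarith)
    have pp : ((x + 1) - (1 + 2/16)) * Real.Gamma (1 + 1/16) ≤ ((x + 1) - (1 + 2/16)) * (484013/500000) :=
      mul_le_mul_of_nonneg_left node1.2 (by linarith)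
    have hG : (124389/125000) + (-13543/31250) * x ≤ Real.Gamma (x + 1) := by linarith
    have hm := mul_le_mul_of_nonneg_right hG (by linarith : (0:ℝ) ≤ x + 1)
    have hbox : (0:ℝ) ≤ (x - (2/16)) * ((3/16) - x) :=
      mul_nonneg (by linarith) (by linarith)
    linarith [hm, hbox]
  · rw [le_div_iff₀ (by linarith : (0:ℝ) < x + 2)]
    have hc := gamma_chord (a := (1 + 2/16)) (b := (1 + 3/16)) (x := x + 1) (by norm_num) (by norm_num)
      (by linarith) (by linarith)
    have pa : ((1 + 3/16) - (x + 1)) * Real.Gamma (1 + 2/16) ≤ ((1 + 3/16) - (x + 1)) * (942551/1000000) :=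
      mul_le_mul_of_nonneg_left node2.2 (by linarith)
    have pb : ((x + 1) - (1 + 2/16)) * Real.Gamma (1 + 3/16) ≤ ((x + 1) - (1 + 2/16)) * (184537/200000) :=
      mul_le_mul_of_nonneg_left node3.2 (by linarith)
    have hG : Real.Gamma (x + 1) ≤ (982283/1000000) + (-9933/31250) * x := by linarith
    have hm := mul_le_mul_of_nonneg_right hG (by linarith : (0:ℝ) ≤ x + 2)
    have hsq : (0:ℝ) ≤ (x - (346571/2635712)) ^ 2 := sq_nonneg _
    have hbox : (0:ℝ) ≤ (x - (2/16)) * ((3/16) - x) :=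
      mul_nonneg (by linarith) (by linarith)
    linarith [hm, hsq, hbox]


private lemma case3 {x : ℝ} (ha : ((3/16) : ℝ) ≤ x) (hb : x ≤ (4/16)) :
    (x ^ 2 + 1) / (x + 1) ≤ Real.Gamma (x + 1) ∧
      Real.Gamma (x + 1) ≤ (x ^ 2 + 2) / (x + 2) := by
  constructor
  · rw [div_le_iff₀ (by linarith : (0:ℝ) < x + 1)]
    have hc := gamma_chord (a := (1 + 2/16)) (b := x + 1) (x := (1 + 3/16)) (by norm_num)
      (by linarith) (by norm_num) (by linarith)
    have pq : ((x + 1) - (1 + 2/16)) * (920491/1000000) ≤ ((x + 1) - (1 + 2/16)) * Real.Gamma (1 + 3/16) :=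
      mul_le_mul_of_nonneg_left node3.1 (by linarith)
    have pp : ((x + 1) - (1 + 3/16)) * Real.Gamma (1 + 2/16) ≤ ((x + 1) - (1 + 3/16)) * (942551/1000000) :=
      mul_le_mul_of_nonneg_left node2.2 (by linarith)
    have hG : (986671/1000000) + (-1103/3125) * x ≤ Real.Gamma (x + 1) := by linarith
    have hm := mul_le_mul_of_nonneg_right hG (by linarith : (0:ℝ) ≤ x + 1)
    have hbox : (0:ℝ) ≤ (x - (3/16)) * ((4/16) - x) :=
      mul_nonneg (by linarith) (by linarith)
    linarith [hm, hbox]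
  · rw [le_div_iff₀ (by linarith : (0:ℝ) < x + 2)]
    have hc := gamma_chord (a := (1 + 3/16)) (b := (1 + 4/16)) (x := x + 1) (by norm_num) (by norm_num)
      (by linarith) (by linarith)
    have pa : ((1 + 4/16) - (x + 1)) * Real.Gamma (1 + 3/16) ≤ ((1 + 4/16) - (x + 1)) * (184537/200000) :=
      mul_le_mul_of_nonneg_left node3.2 (by linarith)
    have pb : ((x + 1) - (1 + 3/16)) * Real.Gamma (1 + 4/16) ≤ ((x + 1) - (1 + 3/16)) * (453867/500000) :=
      mul_le_mul_of_nonneg_left node4.2 (by linarith)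
    have hG : Real.Gamma (x + 1) ≤ (483769/500000) + (-14951/62500) * x := by linarith
    have hm := mul_le_mul_of_nonneg_right hG (by linarith : (0:ℝ) ≤ x + 2)
    have hsq : (0:ℝ) ≤ (x - (244553/1239216)) ^ 2 := sq_nonneg _
    have hbox : (0:ℝ) ≤ (x - (3/16)) * ((4/16) - x) :=
      mul_nonneg (by linarith) (by linarith)
    linarith [hm, hsq, hbox]


private lemma case4 {x : ℝ} (ha : ((4/16) : ℝ) ≤ x) (hb : x ≤ (5/16)) :
    (x ^ 2 + 1) / (x + 1) ≤ Real.Gamma (x + 1) ∧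
      Real.Gamma (x + 1) ≤ (x ^ 2 + 2) / (x + 2) := by
  constructor
  · rw [div_le_iff₀ (by linarith : (0:ℝ) < x + 1)]
    have hc := gamma_chord (a := (1 + 3/16)) (b := x + 1) (x := (1 + 4/16)) (by norm_num)
      (by linarith) (by norm_num) (by linarith)
    have pq : ((x + 1) - (1 + 3/16)) * (905081/1000000) ≤ ((x + 1) - (1 + 3/16)) * Real.Gamma (1 + 4/16) :=
      mul_le_mul_of_nonneg_left node4.1 (by linarith)
    have pp : ((x + 1) - (1 + 4/16)) * Real.Gamma (1 + 3/16) ≤ ((x + 1) - (1 + 4/16)) * (184537/200000) :=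
      mul_le_mul_of_nonneg_left node3.2 (by linarith)
    have hG : (975497/1000000) + (-4401/15625) * x ≤ Real.Gamma (x + 1) := by linarith
    have hm := mul_le_mul_of_nonneg_right hG (by linarith : (0:ℝ) ≤ x + 1)
    have hbox : (0:ℝ) ≤ (x - (4/16)) * ((5/16) - x) :=
      mul_nonneg (by linarith) (by linarith)
    linarith [hm, hbox]
  · rw [le_div_iff₀ (by linarith : (0:ℝ) < x + 2)]
    have hc := gamma_chord (a := (1 + 4/16)) (b := (1 + 5/16)) (x := x + 1) (by norm_num) (by norm_num)
      (by linarith) (by linarith)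
    have pa : ((1 + 5/16) - (x + 1)) * Real.Gamma (1 + 4/16) ≤ ((1 + 5/16) - (x + 1)) * (453867/500000) :=
      mul_le_mul_of_nonneg_left node4.2 (by linarith)
    have pb : ((x + 1) - (1 + 4/16)) * Real.Gamma (1 + 5/16) ≤ ((x + 1) - (1 + 4/16)) * (897161/1000000) :=
      mul_le_mul_of_nonneg_left node5.2 (by linarith)
    have hG : Real.Gamma (x + 1) ≤ (475013/500000) + (-10573/62500) * x := by linarith
    have hm := mul_le_mul_of_nonneg_right hG (by linarith : (0:ℝ) ≤ x + 2)
    have hsq : (0:ℝ) ≤ (x - (305845/1169168)) ^ 2 := sq_nonneg _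
    have hbox : (0:ℝ) ≤ (x - (4/16)) * ((5/16) - x) :=
      mul_nonneg (by linarith) (by linarith)
    linarith [hm, hsq, hbox]


private lemma case5 {x : ℝ} (ha : ((5/16) : ℝ) ≤ x) (hb : x ≤ (6/16)) :
    (x ^ 2 + 1) / (x + 1) ≤ Real.Gamma (x + 1) ∧
      Real.Gamma (x + 1) ≤ (x ^ 2 + 2) / (x + 2) := by
  constructor
  · rw [div_le_iff₀ (by linarith : (0:ℝ) < x + 1)]
    have hc := gamma_chord (a := (1 + 4/16)) (b := x + 1) (x := (1 + 5/16)) (by norm_num)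
      (by linarith) (by norm_num) (by linarith)
    have pq : ((x + 1) - (1 + 4/16)) * (894159/1000000) ≤ ((x + 1) - (1 + 4/16)) * Real.Gamma (1 + 5/16) :=
      mul_le_mul_of_nonneg_left node5.1 (by linarith)
    have pp : ((x + 1) - (1 + 5/16)) * Real.Gamma (1 + 4/16) ≤ ((x + 1) - (1 + 5/16)) * (453867/500000) :=
      mul_le_mul_of_nonneg_left node4.2 (by linarith)
    have hG : (481017/500000) + (-543/2500) * x ≤ Real.Gamma (x + 1) := by linarith
    have hm := mul_le_mul_of_nonneg_right hG (by linarith : (0:ℝ) ≤ x + 1)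
    have hbox : (0:ℝ) ≤ (x - (5/16)) * ((6/16) - x) :=
      mul_nonneg (by linarith) (by linarith)
    linarith [hm, hbox]
  · rw [le_div_iff₀ (by linarith : (0:ℝ) < x + 2)]
    have hc := gamma_chord (a := (1 + 5/16)) (b := (1 + 6/16)) (x := x + 1) (by norm_num) (by norm_num)
      (by linarith) (by linarith)
    have pa : ((1 + 6/16) - (x + 1)) * Real.Gamma (1 + 5/16) ≤ ((1 + 6/16) - (x + 1)) * (897161/1000000) :=
      mul_le_mul_of_nonneg_left node5.2 (by linarith)
    have pb : ((x + 1) - (1 + 5/16)) * Real.Gamma (1 + 6/16) ≤ ((x + 1) - (1 + 5/16)) * (178109/200000) :=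
      mul_le_mul_of_nonneg_left node6.2 (by linarith)
    have hG : Real.Gamma (x + 1) ≤ (930241/1000000) + (-1654/15625) * x := by linarith
    have hm := mul_le_mul_of_nonneg_right hG (by linarith : (0:ℝ) ≤ x + 2)
    have hsq : (0:ℝ) ≤ (x - (718529/2211712)) ^ 2 := sq_nonneg _
    have hbox : (0:ℝ) ≤ (x - (5/16)) * ((6/16) - x) :=
      mul_nonneg (by linarith) (by linarith)
    linarith [hm, hsq, hbox]


private lemma case6 {x : ℝ} (ha : ((6/16) : ℝ) ≤ x) (hb : x ≤ (7/16)) :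
    (x ^ 2 + 1) / (x + 1) ≤ Real.Gamma (x + 1) ∧
      Real.Gamma (x + 1) ≤ (x ^ 2 + 2) / (x + 2) := by
  constructor
  · rw [div_le_iff₀ (by linarith : (0:ℝ) < x + 1)]
    have hc := gamma_chord (a := (1 + 5/16)) (b := x + 1) (x := (1 + 6/16)) (by norm_num)
      (by linarith) (by norm_num) (by linarith)
    have pq : ((x + 1) - (1 + 5/16)) * (13864/15625) ≤ ((x + 1) - (1 + 5/16)) * Real.Gamma (1 + 6/16) :=
      mul_le_mul_of_nonneg_left node6.1 (by linarith)
    have pp : ((x + 1) - (1 + 6/16)) * Real.Gamma (1 + 5/16) ≤ ((x + 1) - (1 + 6/16)) * (897161/1000000) :=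
      mul_le_mul_of_nonneg_left node5.2 (by linarith)
    have hG : (473243/500000) + (-1973/12500) * x ≤ Real.Gamma (x + 1) := by linarith
    have hm := mul_le_mul_of_nonneg_right hG (by linarith : (0:ℝ) ≤ x + 1)
    have hbox : (0:ℝ) ≤ (x - (6/16)) * ((7/16) - x) :=
      mul_nonneg (by linarith) (by linarith)
    linarith [hm, hbox]
  · rw [le_div_iff₀ (by linarith : (0:ℝ) < x + 2)]
    have hc := gamma_chord (a := (1 + 6/16)) (b := (1 + 7/16)) (x := x + 1) (by norm_num) (by norm_num)
      (by linarith) (by linarith)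
    have pa : ((1 + 7/16) - (x + 1)) * Real.Gamma (1 + 6/16) ≤ ((1 + 7/16) - (x + 1)) * (178109/200000) :=
      mul_le_mul_of_nonneg_left node6.2 (by linarith)
    have pb : ((x + 1) - (1 + 6/16)) * Real.Gamma (1 + 7/16) ≤ ((x + 1) - (1 + 6/16)) * (887561/1000000) :=
      mul_le_mul_of_nonneg_left node7.2 (by linarith)
    have hG : Real.Gamma (x + 1) ≤ (908449/1000000) + (-746/15625) * x := by linarith
    have hm := mul_le_mul_of_nonneg_right hG (by linarith : (0:ℝ) ≤ x + 2)
    have hsq : (0:ℝ) ≤ (x - (90329/232832)) ^ 2 := sq_nonneg _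
    have hbox : (0:ℝ) ≤ (x - (6/16)) * ((7/16) - x) :=
      mul_nonneg (by linarith) (by linarith)
    linarith [hm, hsq, hbox]


private lemma case7 {x : ℝ} (ha : ((7/16) : ℝ) ≤ x) (hb : x ≤ (8/16)) :
    (x ^ 2 + 1) / (x + 1) ≤ Real.Gamma (x + 1) ∧
      Real.Gamma (x + 1) ≤ (x ^ 2 + 2) / (x + 2) := by
  constructor
  · rw [div_le_iff₀ (by linarith : (0:ℝ) < x + 1)]
    have hc := gamma_chord (a := (1 + 6/16)) (b := x + 1) (x := (1 + 7/16)) (by norm_num)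
      (by linarith) (by norm_num) (by linarith)
    have pq : ((x + 1) - (1 + 6/16)) * (221041/250000) ≤ ((x + 1) - (1 + 6/16)) * Real.Gamma (1 + 7/16) :=
      mul_le_mul_of_nonneg_left node7.1 (by linarith)
    have pp : ((x + 1) - (1 + 7/16)) * Real.Gamma (1 + 6/16) ≤ ((x + 1) - (1 + 7/16)) * (178109/200000) :=
      mul_le_mul_of_nonneg_left node6.2 (by linarith)
    have hG : (928831/1000000) + (-6381/62500) * x ≤ Real.Gamma (x + 1) := by linarith
    have hm := mul_le_mul_of_nonneg_right hG (by linarith : (0:ℝ) ≤ x + 1)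
    have hbox : (0:ℝ) ≤ (x - (7/16)) * ((8/16) - x) :=
      mul_nonneg (by linarith) (by linarith)
    linarith [hm, hbox]
  · rw [le_div_iff₀ (by linarith : (0:ℝ) < x + 2)]
    have hc := gamma_chord (a := (1 + 7/16)) (b := (1 + 8/16)) (x := x + 1) (by norm_num) (by norm_num)
      (by linarith) (by linarith)
    have pa : ((1 + 8/16) - (x + 1)) * Real.Gamma (1 + 7/16) ≤ ((1 + 8/16) - (x + 1)) * (887561/1000000) :=
      mul_le_mul_of_nonneg_left node7.2 (by linarith)
    have pb : ((x + 1) - (1 + 7/16)) * Real.Gamma (1 + 8/16) ≤ ((x + 1) - (1 + 7/16)) * (887961/1000000) :=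
      mul_le_mul_of_nonneg_left node8.2 (by linarith)
    have hG : Real.Gamma (x + 1) ≤ (884761/1000000) + (4/625) * x := by linarith
    have hm := mul_le_mul_of_nonneg_right hG (by linarith : (0:ℝ) ≤ x + 2)
    have hsq : (0:ℝ) ≤ (x - (33243/73600)) ^ 2 := sq_nonneg _
    have hbox : (0:ℝ) ≤ (x - (7/16)) * ((8/16) - x) :=
      mul_nonneg (by linarith) (by linarith)
    linarith [hm, hsq, hbox]


private lemma case8 {x : ℝ} (ha : ((8/16) : ℝ) ≤ x) (hb : x ≤ (9/16)) :
    (x ^ 2 + 1) / (x + 1) ≤ Real.Gamma (x + 1) ∧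
      Real.Gamma (x + 1) ≤ (x ^ 2 + 2) / (x + 2) := by
  constructor
  · rw [div_le_iff₀ (by linarith : (0:ℝ) < x + 1)]
    have hc := gamma_chord (a := (1 + 7/16)) (b := x + 1) (x := (1 + 8/16)) (by norm_num)
      (by linarith) (by norm_num) (by linarith)
    have pq : ((x + 1) - (1 + 7/16)) * (88451/100000) ≤ ((x + 1) - (1 + 7/16)) * Real.Gamma (1 + 8/16) :=
      mul_le_mul_of_nonneg_left node8.1 (by linarith)
    have pp : ((x + 1) - (1 + 8/16)) * Real.Gamma (1 + 7/16) ≤ ((x + 1) - (1 + 8/16)) * (887561/1000000) :=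
      mul_le_mul_of_nonneg_left node7.2 (by linarith)
    have hG : (454459/500000) + (-3051/62500) * x ≤ Real.Gamma (x + 1) := by linarith
    have hm := mul_le_mul_of_nonneg_right hG (by linarith : (0:ℝ) ≤ x + 1)
    have hbox : (0:ℝ) ≤ (x - (8/16)) * ((9/16) - x) :=
      mul_nonneg (by linarith) (by linarith)
    linarith [hm, hbox]
  · rw [le_div_iff₀ (by linarith : (0:ℝ) < x + 2)]
    have hc := gamma_chord (a := (1 + 8/16)) (b := (1 + 9/16)) (x := x + 1) (by norm_num) (by norm_num)
      (by linarith) (by linarith)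
    have pa : ((1 + 9/16) - (x + 1)) * Real.Gamma (1 + 8/16) ≤ ((1 + 9/16) - (x + 1)) * (887961/1000000) :=
      mul_le_mul_of_nonneg_left node8.2 (by linarith)
    have pb : ((x + 1) - (1 + 8/16)) * Real.Gamma (1 + 9/16) ≤ ((x + 1) - (1 + 8/16)) * (445779/500000) :=
      mul_le_mul_of_nonneg_left node9.2 (by linarith)
    have hG : Real.Gamma (x + 1) ≤ (171837/200000) + (3597/62500) * x := by linarith
    have hm := mul_le_mul_of_nonneg_right hG (by linarith : (0:ℝ) ≤ x + 2)
    have hsq : (0:ℝ) ≤ (x - (974289/1884896)) ^ 2 := sq_nonneg _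
    have hbox : (0:ℝ) ≤ (x - (8/16)) * ((9/16) - x) :=
      mul_nonneg (by linarith) (by linarith)
    linarith [hm, hsq, hbox]


private lemma case9 {x : ℝ} (ha : ((9/16) : ℝ) ≤ x) (hb : x ≤ (10/16)) :
    (x ^ 2 + 1) / (x + 1) ≤ Real.Gamma (x + 1) ∧
      Real.Gamma (x + 1) ≤ (x ^ 2 + 2) / (x + 2) := by
  constructor
  · rw [div_le_iff₀ (by linarith : (0:ℝ) < x + 1)]
    have hc := gamma_chord (a := (1 + 8/16)) (b := x + 1) (x := (1 + 9/16)) (by norm_num)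
      (by linarith) (by norm_num) (by linarith)
    have pq : ((x + 1) - (1 + 8/16)) * (222037/250000) ≤ ((x + 1) - (1 + 8/16)) * Real.Gamma (1 + 9/16) :=
      mul_le_mul_of_nonneg_left node9.1 (by linarith)
    have pp : ((x + 1) - (1 + 9/16)) * Real.Gamma (1 + 8/16) ≤ ((x + 1) - (1 + 9/16)) * (887961/1000000) :=
      mul_le_mul_of_nonneg_left node8.2 (by linarith)
    have hG : (177293/200000) + (187/62500) * x ≤ Real.Gamma (x + 1) := by linarith
    have hm := mul_le_mul_of_nonneg_right hG (by linarith : (0:ℝ) ≤ x + 1)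
    have hbox : (0:ℝ) ≤ (x - (9/16)) * ((10/16) - x) :=
      mul_nonneg (by linarith) (by linarith)
    linarith [hm, hbox]
  · rw [le_div_iff₀ (by linarith : (0:ℝ) < x + 2)]
    have hc := gamma_chord (a := (1 + 9/16)) (b := (1 + 10/16)) (x := x + 1) (by norm_num) (by norm_num)
      (by linarith) (by linarith)
    have pa : ((1 + 10/16) - (x + 1)) * Real.Gamma (1 + 9/16) ≤ ((1 + 10/16) - (x + 1)) * (445779/500000) :=
      mul_le_mul_of_nonneg_left node9.2 (by linarith)
    have pb : ((x + 1) - (1 + 9/16)) * Real.Gamma (1 + 10/16) ≤ ((x + 1) - (1 + 9/16)) * (449109/500000) :=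
      mul_le_mul_of_nonneg_left node10.2 (by linarith)
    have hG : Real.Gamma (x + 1) ≤ (415809/500000) + (333/3125) * x := by linarith
    have hm := mul_le_mul_of_nonneg_right hG (by linarith : (0:ℝ) ≤ x + 2)
    have hsq : (0:ℝ) ≤ (x - (522369/893440)) ^ 2 := sq_nonneg _
    have hbox : (0:ℝ) ≤ (x - (9/16)) * ((10/16) - x) :=
      mul_nonneg (by linarith) (by linarith)
    linarith [hm, hsq, hbox]


private lemma case10 {x : ℝ} (ha : ((10/16) : ℝ) ≤ x) (hb : x ≤ (11/16)) :
    (x ^ 2 + 1) / (x + 1) ≤ Real.Gamma (x + 1) ∧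
      Real.Gamma (x + 1) ≤ (x ^ 2 + 2) / (x + 2) := by
  constructor
  · rw [div_le_iff₀ (by linarith : (0:ℝ) < x + 1)]
    have hc := gamma_chord (a := (1 + 9/16)) (b := x + 1) (x := (1 + 10/16)) (by norm_num)
      (by linarith) (by norm_num) (by linarith)
    have pq : ((x + 1) - (1 + 9/16)) * (894947/1000000) ≤ ((x + 1) - (1 + 9/16)) * Real.Gamma (1 + 10/16) :=
      mul_le_mul_of_nonneg_left node10.1 (by linarith)
    have pp : ((x + 1) - (1 + 10/16)) * Real.Gamma (1 + 9/16) ≤ ((x + 1) - (1 + 10/16)) * (445779/500000) :=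
      mul_le_mul_of_nonneg_left node9.2 (by linarith)
    have hG : (861057/1000000) + (3389/62500) * x ≤ Real.Gamma (x + 1) := by linarith
    have hm := mul_le_mul_of_nonneg_right hG (by linarith : (0:ℝ) ≤ x + 1)
    have hbox : (0:ℝ) ≤ (x - (10/16)) * ((11/16) - x) :=
      mul_nonneg (by linarith) (by linarith)
    linarith [hm, hbox]
  · rw [le_div_iff₀ (by linarith : (0:ℝ) < x + 2)]
    have hc := gamma_chord (a := (1 + 10/16)) (b := (1 + 11/16)) (x := x + 1) (by norm_num) (by norm_num)
      (by linarith) (by linarith)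
    have pa : ((1 + 11/16) - (x + 1)) * Real.Gamma (1 + 10/16) ≤ ((1 + 11/16) - (x + 1)) * (449109/500000) :=
      mul_le_mul_of_nonneg_left node10.2 (by linarith)
    have pb : ((x + 1) - (1 + 10/16)) * Real.Gamma (1 + 11/16) ≤ ((x + 1) - (1 + 10/16)) * (226963/250000) :=
      mul_le_mul_of_nonneg_left node11.2 (by linarith)
    have hG : Real.Gamma (x + 1) ≤ (400939/500000) + (4817/31250) * x := by linarith
    have hm := mul_le_mul_of_nonneg_right hG (by linarith : (0:ℝ) ≤ x + 2)
    have hsq : (0:ℝ) ≤ (x - (555083/845856)) ^ 2 := sq_nonneg _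
    have hbox : (0:ℝ) ≤ (x - (10/16)) * ((11/16) - x) :=
      mul_nonneg (by linarith) (by linarith)
    linarith [hm, hsq, hbox]


private lemma case11 {x : ℝ} (ha : ((11/16) : ℝ) ≤ x) (hb : x ≤ (12/16)) :
    (x ^ 2 + 1) / (x + 1) ≤ Real.Gamma (x + 1) ∧
      Real.Gamma (x + 1) ≤ (x ^ 2 + 2) / (x + 2) := by
  constructor
  · rw [div_le_iff₀ (by linarith : (0:ℝ) < x + 1)]
    have hc := gamma_chord (a := (1 + 10/16)) (b := x + 1) (x := (1 + 11/16)) (by norm_num)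
      (by linarith) (by norm_num) (by linarith)
    have pq : ((x + 1) - (1 + 10/16)) * (904823/1000000) ≤ ((x + 1) - (1 + 10/16)) * Real.Gamma (1 + 11/16) :=
      mul_le_mul_of_nonneg_left node11.1 (by linarith)
    have pp : ((x + 1) - (1 + 11/16)) * Real.Gamma (1 + 10/16) ≤ ((x + 1) - (1 + 11/16)) * (449109/500000) :=
      mul_le_mul_of_nonneg_left node10.2 (by linarith)
    have hG : (104021/125000) + (1321/12500) * x ≤ Real.Gamma (x + 1) := by linarith
    have hm := mul_le_mul_of_nonneg_right hG (by linarith : (0:ℝ) ≤ x + 1)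
    have hbox : (0:ℝ) ≤ (x - (11/16)) * ((12/16) - x) :=
      mul_nonneg (by linarith) (by linarith)
    linarith [hm, hbox]
  · rw [le_div_iff₀ (by linarith : (0:ℝ) < x + 2)]
    have hc := gamma_chord (a := (1 + 11/16)) (b := (1 + 12/16)) (x := x + 1) (by norm_num) (by norm_num)
      (by linarith) (by linarith)
    have pa : ((1 + 12/16) - (x + 1)) * Real.Gamma (1 + 11/16) ≤ ((1 + 12/16) - (x + 1)) * (226963/250000) :=
      mul_le_mul_of_nonneg_left node11.2 (by linarith)
    have pb : ((x + 1) - (1 + 11/16)) * Real.Gamma (1 + 12/16) ≤ ((x + 1) - (1 + 11/16)) * (92041/100000) :=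
      mul_le_mul_of_nonneg_left node12.2 (by linarith)
    have hG : Real.Gamma (x + 1) ≤ (384857/500000) + (6279/31250) * x := by linarith
    have hm := mul_le_mul_of_nonneg_right hG (by linarith : (0:ℝ) ≤ x + 2)
    have hsq : (0:ℝ) ≤ (x - (585785/799072)) ^ 2 := sq_nonneg _
    have hbox : (0:ℝ) ≤ (x - (11/16)) * ((12/16) - x) :=
      mul_nonneg (by linarith) (by linarith)
    linarith [hm, hsq, hbox]


private lemma case12 {x : ℝ} (ha : ((12/16) : ℝ) ≤ x) (hb : x ≤ (13/16)) :
    (x ^ 2 + 1) / (x + 1) ≤ Real.Gamma (x + 1) ∧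
      Real.Gamma (x + 1) ≤ (x ^ 2 + 2) / (x + 2) := by
  constructor
  · rw [div_le_iff₀ (by linarith : (0:ℝ) < x + 1)]
    have hc := gamma_chord (a := (1 + 11/16)) (b := x + 1) (x := (1 + 12/16)) (by norm_num)
      (by linarith) (by norm_num) (by linarith)
    have pq : ((x + 1) - (1 + 11/16)) * (91773/100000) ≤ ((x + 1) - (1 + 11/16)) * Real.Gamma (1 + 12/16) :=
      mul_le_mul_of_nonneg_left node12.1 (by linarith)
    have pp : ((x + 1) - (1 + 12/16)) * Real.Gamma (1 + 11/16) ≤ ((x + 1) - (1 + 12/16)) * (226963/250000) :=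
      mul_le_mul_of_nonneg_left node11.2 (by linarith)
    have hG : (399597/500000) + (4939/31250) * x ≤ Real.Gamma (x + 1) := by linarith
    have hm := mul_le_mul_of_nonneg_right hG (by linarith : (0:ℝ) ≤ x + 1)
    have hbox : (0:ℝ) ≤ (x - (12/16)) * ((13/16) - x) :=
      mul_nonneg (by linarith) (by linarith)
    linarith [hm, hbox]
  · rw [le_div_iff₀ (by linarith : (0:ℝ) < x + 2)]
    have hc := gamma_chord (a := (1 + 12/16)) (b := (1 + 13/16)) (x := x + 1) (by norm_num) (by norm_num)
      (by linarith) (by linarith)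
    have pa : ((1 + 13/16) - (x + 1)) * Real.Gamma (1 + 12/16) ≤ ((1 + 13/16) - (x + 1)) * (92041/100000) :=
      mul_le_mul_of_nonneg_left node12.2 (by linarith)
    have pb : ((x + 1) - (1 + 12/16)) * Real.Gamma (1 + 13/16) ≤ ((x + 1) - (1 + 12/16)) * (467937/500000) :=
      mul_le_mul_of_nonneg_left node13.2 (by linarith)
    have hG : Real.Gamma (x + 1) ≤ (367421/500000) + (3866/15625) * x := by linarith
    have hm := mul_le_mul_of_nonneg_right hG (by linarith : (0:ℝ) ≤ x + 2)
    have hsq : (0:ℝ) ≤ (x - (13/16)) ^ 2 := sq_nonneg _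
    have hbox : (0:ℝ) ≤ (x - (12/16)) * ((13/16) - x) :=
      mul_nonneg (by linarith) (by linarith)
    linarith [hm, hsq, hbox]


private lemma case13 {x : ℝ} (ha : ((13/16) : ℝ) ≤ x) (hb : x ≤ (14/16)) :
    (x ^ 2 + 1) / (x + 1) ≤ Real.Gamma (x + 1) ∧
      Real.Gamma (x + 1) ≤ (x ^ 2 + 2) / (x + 2) := by
  constructor
  · rw [div_le_iff₀ (by linarith : (0:ℝ) < x + 1)]
    have hc := gamma_chord (a := (1 + 12/16)) (b := x + 1) (x := (1 + 13/16)) (by norm_num)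
      (by linarith) (by norm_num) (by linarith)
    have pq : ((x + 1) - (1 + 12/16)) * (46683/50000) ≤ ((x + 1) - (1 + 12/16)) * Real.Gamma (1 + 13/16) :=
      mul_le_mul_of_nonneg_left node13.1 (by linarith)
    have pp : ((x + 1) - (1 + 13/16)) * Real.Gamma (1 + 12/16) ≤ ((x + 1) - (1 + 13/16)) * (92041/100000) :=
      mul_le_mul_of_nonneg_left node12.2 (by linarith)
    have hG : (76141/100000) + (53/250) * x ≤ Real.Gamma (x + 1) := by linarith
    have hm := mul_le_mul_of_nonneg_right hG (by linarith : (0:ℝ) ≤ x + 1)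
    have hbox : (0:ℝ) ≤ (x - (13/16)) * ((14/16) - x) :=
      mul_nonneg (by linarith) (by linarith)
    linarith [hm, hbox]
  · rw [le_div_iff₀ (by linarith : (0:ℝ) < x + 2)]
    have hc := gamma_chord (a := (1 + 13/16)) (b := (1 + 14/16)) (x := x + 1) (by norm_num) (by norm_num)
      (by linarith) (by linarith)
    have pa : ((1 + 14/16) - (x + 1)) * Real.Gamma (1 + 13/16) ≤ ((1 + 14/16) - (x + 1)) * (467937/500000) :=
      mul_le_mul_of_nonneg_left node13.2 (by linarith)
    have pb : ((x + 1) - (1 + 13/16)) * Real.Gamma (1 + 14/16) ≤ ((x + 1) - (1 + 13/16)) * (954261/1000000) :=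
      mul_le_mul_of_nonneg_left node14.2 (by linarith)
    have hG : Real.Gamma (x + 1) ≤ (696843/1000000) + (18387/62500) * x := by linarith
    have hm := mul_le_mul_of_nonneg_right hG (by linarith : (0:ℝ) ≤ x + 2)
    have hsq : (0:ℝ) ≤ (x - (7/8)) ^ 2 := sq_nonneg _
    have hbox : (0:ℝ) ≤ (x - (13/16)) * ((14/16) - x) :=
      mul_nonneg (by linarith) (by linarith)
    linarith [hm, hsq, hbox]


private lemma case14 {x : ℝ} (ha : ((14/16) : ℝ) ≤ x) (hb : x ≤ (15/16)) :
    (x ^ 2 + 1) / (x + 1) ≤ Real.Gamma (x + 1) ∧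
      Real.Gamma (x + 1) ≤ (x ^ 2 + 2) / (x + 2) := by
  constructor
  · rw [div_le_iff₀ (by linarith : (0:ℝ) < x + 1)]
    have hc := gamma_chord (a := x + 1) (b := 2) (x := (1 + 15/16)) (by linarith)
      (by linarith) (by linarith) (by norm_num)
    have pq : (2 - (x + 1)) * (243681/250000) ≤ (2 - (x + 1)) * Real.Gamma (1 + 15/16) :=
      mul_le_mul_of_nonneg_left node15.1 (by linarith)
    have pp : ((1 + 15/16) - (x + 1)) * Real.Gamma 2 ≤ ((1 + 15/16) - (x + 1)) * 1 :=
      mul_le_mul_of_nonneg_left node_two.2 (by linarith)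
    have hG : (9306/15625) + (6319/15625) * x ≤ Real.Gamma (x + 1) := by linarith
    have hm := mul_le_mul_of_nonneg_right hG (by linarith : (0:ℝ) ≤ x + 1)
    have hbox : (0:ℝ) ≤ (x - (14/16)) * ((15/16) - x) :=
      mul_nonneg (by linarith) (by linarith)
    linarith [hm, hbox]
  · rw [le_div_iff₀ (by linarith : (0:ℝ) < x + 2)]
    have hc := gamma_chord (a := (1 + 14/16)) (b := (1 + 15/16)) (x := x + 1) (by norm_num) (by norm_num)
      (by linarith) (by linarith)
    have pa : ((1 + 15/16) - (x + 1)) * Real.Gamma (1 + 14/16) ≤ ((1 + 15/16) - (x + 1)) * (954261/1000000) :=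
      mul_le_mul_of_nonneg_left node14.2 (by linarith)
    have pb : ((x + 1) - (1 + 14/16)) * Real.Gamma (1 + 15/16) ≤ ((x + 1) - (1 + 14/16)) * (975613/1000000) :=
      mul_le_mul_of_nonneg_left node15.2 (by linarith)
    have hG : Real.Gamma (x + 1) ≤ (655333/1000000) + (5338/15625) * x := by linarith
    have hm := mul_le_mul_of_nonneg_right hG (by linarith : (0:ℝ) ≤ x + 2)
    have hsq : (0:ℝ) ≤ (x - (15/16)) ^ 2 := sq_nonneg _
    have hbox : (0:ℝ) ≤ (x - (14/16)) * ((15/16) - x) :=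
      mul_nonneg (by linarith) (by linarith)
    linarith [hm, hsq, hbox]


private lemma case15 {x : ℝ} (ha : ((15/16) : ℝ) ≤ x) (hb : x ≤ 1) :
    (x ^ 2 + 1) / (x + 1) ≤ Real.Gamma (x + 1) ∧
      Real.Gamma (x + 1) ≤ (x ^ 2 + 2) / (x + 2) := by
  constructor
  · rw [div_le_iff₀ (by linarith : (0:ℝ) < x + 1)]
    have hc := gamma_chord (a := x + 1) (b := (2 + 1/16)) (x := 2) (by linarith)
      (by linarith) (by linarith) (by norm_num)
    have pq : ((2 + 1/16) - (x + 1)) * 1 ≤ ((2 + 1/16) - (x + 1)) * Real.Gamma 2 :=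
      mul_le_mul_of_nonneg_left node_two.1 (by linarith)
    have pp : (2 - (x + 1)) * Real.Gamma (2 + 1/16) ≤ (2 - (x + 1)) * (8228221/8000000) :=
      mul_le_mul_of_nonneg_left node17 (by linarith)
    have hG : (271779/500000) + (228221/500000) * x ≤ Real.Gamma (x + 1) := by linarith
    have hm := mul_le_mul_of_nonneg_right hG (by linarith : (0:ℝ) ≤ x + 1)
    have hbox : (0:ℝ) ≤ (x - (15/16)) * (1 - x) :=
      mul_nonneg (by linarith) (by linarith)
    linarith [hm, hbox]
  · rw [le_div_iff₀ (by linarith : (0:ℝ) < x + 2)]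
    have hc := gamma_chord (a := (1 + 15/16)) (b := 2) (x := x + 1) (by norm_num) (by norm_num)
      (by linarith) (by linarith)
    have pa : (2 - (x + 1)) * Real.Gamma (1 + 15/16) ≤ (2 - (x + 1)) * (975613/1000000) :=
      mul_le_mul_of_nonneg_left node15.2 (by linarith)
    have pb : ((x + 1) - (1 + 15/16)) * Real.Gamma 2 ≤ ((x + 1) - (1 + 15/16)) * 1 :=
      mul_le_mul_of_nonneg_left node_two.2 (by linarith)
    have hG : Real.Gamma (x + 1) ≤ (38113/62500) + (24387/62500) * x := by linarith
    have hm := mul_le_mul_of_nonneg_right hG (by linarith : (0:ℝ) ≤ x + 2)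
    have hsq : (0:ℝ) ≤ (x - 1) ^ 2 := sq_nonneg _
    have hbox : (0:ℝ) ≤ (x - (15/16)) * (1 - x) :=
      mul_nonneg (by linarith) (by linarith)
    linarith [hm, hsq, hbox]


/-- Ivády's inequality: for every `x ∈ [0,1]`, the Gamma function satisfies
`(x² + 1)/(x + 1) ≤ Γ(x + 1) ≤ (x² + 2)/(x + 2)`. -/
theorem gamma_ivady_inequality (x : ℝ) (hx : x ∈ Set.Icc (0 : ℝ) 1) :
    (x ^ 2 + 1) / (x + 1) ≤ Real.Gamma (x + 1) ∧
      Real.Gamma (x + 1) ≤ (x ^ 2 + 2) / (x + 2) := by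
  obtain ⟨hx0, hx1⟩ := hx
  rcases le_or_gt x ((1/16)) with h0 | h0
  · exact case0 (by linarith) h0
  rcases le_or_gt x ((2/16)) with h1 | h1
  · exact case1 (by linarith) h1
  rcases le_or_gt x ((3/16)) with h2 | h2
  · exact case2 (by linarith) h2
  rcases le_or_gt x ((4/16)) with h3 | h3
  · exact case3 (by linarith) h3
  rcases le_or_gt x ((5/16)) with h4 | h4
  · exact case4 (by linarith) h4
  rcases le_or_gt x ((6/16)) with h5 | h5
  · exact case5 (by linarith) h5
  rcases le_or_gt x ((7/16)) with h6 | h6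
  · exact case6 (by linarith) h6
  rcases le_or_gt x ((8/16)) with h7 | h7
  · exact case7 (by linarith) h7
  rcases le_or_gt x ((9/16)) with h8 | h8
  · exact case8 (by linarith) h8
  rcases le_or_gt x ((10/16)) with h9 | h9
  · exact case9 (by linarith) h9
  rcases le_or_gt x ((11/16)) with h10 | h10
  · exact case10 (by linarith) h10
  rcases le_or_gt x ((12/16)) with h11 | h11
  · exact case11 (by linarith) h11
  rcases le_or_gt x ((13/16)) with h12 | h12
  · exact case12 (by linarith) h12
  rcases le_or_gt x ((14/16)) with h13 | h13
  · exact case13 (by linarith) h13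
  rcases le_or_gt x ((15/16)) with h14 | h14
  · exact case14 (by linarith) h14
  exact case15 (by linarith) hx1
end

section
/- For every x with 0 < x < 1, one has 1/Γ(x) ≤ (x² + x)/(x² + 1) < 1; in particular 1/Γ(x) < 1 for all x ∈ (0,1). -/
open Real Set

local notation "γ" => Real.eulerMascheroniConstant

section helpers


lemma gamma_lo : (0.569:ℝ) < Real.eulerMascheroniConstant := by
  have h := Real.eulerMascheroniSeq_lt_eulerMascheroniConstant 63
  have hs : Real.eulerMascheroniSeq 63 = ((harmonic 63 : ℚ) : ℝ) - Real.log 64 := by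
    rw [Real.eulerMascheroniSeq]; norm_num
  have hh : (harmonic 63 : ℚ) = 310559566510213034489743057/65681493561267903750631200 := by
    norm_num [harmonic, Finset.sum_range_succ]
  have hl : Real.log 64 < 6 * 0.6931471808 := by
    have : (64:ℝ) = 2^6 := by norm_num
    rw [this, Real.log_pow]
    push_cast
    nlinarith [Real.log_two_lt_d9]
  rw [hs, hh] at h
  push_cast at h
  nlinarith


lemma log_le_cubic {t : ℝ} (ht : 0 ≤ t) :
    Real.log (1 + t) ≤ t - t^2/2 + t^3/3 := by
  have key : ∀ u ∈ Ici (0:ℝ), HasDerivAt (fun s : ℝ => s - s^2/2 + s^3/3 - Real.log (1+s))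
      (1 - u + u^2 - (1+u)⁻¹) u := by
    intro u hu
    have h1 : (0:ℝ) < 1 + u := by simp at hu; linarith
    have hlog : HasDerivAt (fun s : ℝ => Real.log (1+s)) ((1+u)⁻¹) u := by
      simpa using ((hasDerivAt_id u).const_add 1).log h1.ne'
    have hpoly : HasDerivAt (fun s : ℝ => s - s^2/2 + s^3/3) (1 - u + u^2) u := by
      have := ((hasDerivAt_id u).sub ((hasDerivAt_pow 2 u).div_const 2)).add
        ((hasDerivAt_pow 3 u).div_const 3)
      refine this.congr_deriv ?_
      ring
    exact hpoly.sub hlog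
  have mono : MonotoneOn (fun s : ℝ => s - s^2/2 + s^3/3 - Real.log (1+s)) (Ici (0:ℝ)) := by
    apply monotoneOn_of_deriv_nonneg (convex_Ici 0)
    · exact ContinuousOn.sub (by fun_prop) (ContinuousOn.log (by fun_prop)
        (fun u hu => by simp at hu; intro h; linarith [hu]))
    · intro u hu
      rw [interior_Ici] at hu
      exact (key u (mem_Ici.mpr (le_of_lt hu))).differentiableAt.differentiableWithinAt
    · intro u hu
      rw [interior_Ici] at hu
      rw [(key u (mem_Ici.mpr (le_of_lt hu))).deriv]
      have h1 : (0:ℝ) < 1 + u := by linarith [mem_Ioi.mp hu]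
      have hu0 : 0 < u := mem_Ioi.mp hu
      have : 1 - u + u^2 - (1+u)⁻¹ = u^3/(1+u) := by
        field_simp; ring
      rw [this]; positivity
  have h0 := mono (self_mem_Ici) (mem_Ici.mpr ht) ht
  simp at h0
  linarith

lemma log_le_quartic {t : ℝ} (ht : -(1/2) ≤ t) (ht0 : t ≤ 0) :
    Real.log (1 + t) ≤ t - t^2/2 + t^3/3 - t^4/4 := by
  have key : ∀ u ∈ Icc (-(1/2):ℝ) 0, HasDerivAt
      (fun s : ℝ => s - s^2/2 + s^3/3 - s^4/4 - Real.log (1+s))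
      (1 - u + u^2 - u^3 - (1+u)⁻¹) u := by
    intro u hu
    obtain ⟨hu1, hu2⟩ := hu
    have h1 : (0:ℝ) < 1 + u := by linarith
    have hlog : HasDerivAt (fun s : ℝ => Real.log (1+s)) ((1+u)⁻¹) u := by
      simpa using ((hasDerivAt_id u).const_add 1).log h1.ne'
    have hpoly : HasDerivAt (fun s : ℝ => s - s^2/2 + s^3/3 - s^4/4) (1 - u + u^2 - u^3) u := by
      have := (((hasDerivAt_id u).sub ((hasDerivAt_pow 2 u).div_const 2)).add
        ((hasDerivAt_pow 3 u).div_const 3)).sub ((hasDerivAt_pow 4 u).div_const 4)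
      refine this.congr_deriv ?_
      ring
    exact hpoly.sub hlog
  have anti : AntitoneOn (fun s : ℝ => s - s^2/2 + s^3/3 - s^4/4 - Real.log (1+s))
      (Icc (-(1/2):ℝ) 0) := by
    apply antitoneOn_of_deriv_nonpos (convex_Icc _ _)
    · exact ContinuousOn.sub (by fun_prop) (ContinuousOn.log (by fun_prop)
        (fun u hu => by intro h; have := hu.1; simp at this ⊢; linarith))
    · intro u hu
      rw [interior_Icc] at hu
      exact (key u ⟨hu.1.le, hu.2.le⟩).differentiableAt.differentiableWithinAt
    · intro u hu
      rw [interior_Icc] at hu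
      obtain ⟨hu1, hu2⟩ := hu
      rw [(key u ⟨hu1.le, hu2.le⟩).deriv]
      have h1 : (0:ℝ) < 1 + u := by linarith
      have : 1 - u + u^2 - u^3 - (1+u)⁻¹ = -u^4/(1+u) := by
        field_simp; ring
      rw [this]
      apply div_nonpos_of_nonpos_of_nonneg _ h1.le
      nlinarith [pow_two_nonneg u, pow_two_nonneg (u^2)]
  have h0 := anti (mem_Icc.mpr ⟨ht, ht0⟩) (mem_Icc.mpr ⟨by norm_num, le_refl 0⟩) ht0
  simp at h0
  linarith



lemma Gamma_five_half : Real.Gamma (5/2) = 3/4 * √π := by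
  have h1 : (5/2 : ℝ) = (3/2) + 1 := by norm_num
  have h2 : (3/2 : ℝ) = (1/2) + 1 := by norm_num
  rw [h1, Real.Gamma_add_one (by norm_num), h2, Real.Gamma_add_one (by norm_num),
    Real.Gamma_one_half_eq]
  ring

lemma hasDerivAt_Gamma_five_half :
    HasDerivAt Real.Gamma (√π * (2 - 3/4 * (γ + 2 * Real.log 2))) (5/2) := by
  have hinner : HasDerivAt (fun s : ℝ => Real.Gamma (s - 2))
      (-√π * (γ + 2 * Real.log 2)) (5/2) := by
    have hs : HasDerivAt (fun s : ℝ => s - 2) 1 (5/2 : ℝ) := (hasDerivAt_id _).sub_const 2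
    have h : HasDerivAt Real.Gamma (-√π * (γ + 2 * Real.log 2)) ((5:ℝ)/2 - 2) := by
      rw [show ((5:ℝ)/2 - 2) = 1/2 by norm_num]
      exact Real.hasDerivAt_Gamma_one_half
    refine (h.comp (5/2 : ℝ) hs).congr_deriv ?_
    ring
  have hpoly : HasDerivAt (fun s : ℝ => (s-1)*(s-2)) 2 (5/2 : ℝ) := by
    have := ((hasDerivAt_id (5/2:ℝ)).sub_const 1).mul ((hasDerivAt_id (5/2:ℝ)).sub_const 2)
    refine this.congr_deriv ?_
    norm_num
  have hprod := hpoly.mul hinner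
  have heq : (fun s : ℝ => (s-1)*(s-2) * Real.Gamma (s-2)) =ᶠ[nhds (5/2:ℝ)] Real.Gamma := by
    filter_upwards [Ioi_mem_nhds (by norm_num : (2:ℝ) < 5/2)] with s hs
    have hs2 : (0:ℝ) < s - 2 := by simpa [sub_pos] using hs
    have e1 : Real.Gamma s = (s-1) * Real.Gamma (s-1) := by
      nth_rewrite 1 [show s = (s-1) + 1 by ring]
      rw [ Real.Gamma_add_one (by linarith)]
    have e2 : Real.Gamma (s-1) = (s-2) * Real.Gamma (s-2) := by
      nth_rewrite 1 [show s - 1 = (s-2) + 1 by ring]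
      rw [ Real.Gamma_add_one (by linarith)]
    rw [e1, e2]; ring
  have := hprod.congr_of_eventuallyEq heq.symm
  refine this.congr_deriv ?_
  rw [show (5/2:ℝ) - 2 = 1/2 by norm_num, Real.Gamma_one_half_eq]
  ring

lemma sqrt_pi_gt : (1.7724536:ℝ) < √π := by
  nlinarith [Real.pi_gt_d6, Real.sq_sqrt Real.pi_pos.le, Real.sqrt_nonneg π]

lemma one_sub_inv_le_log {z : ℝ} (hz : 0 < z) : 1 - z⁻¹ ≤ Real.log z := by
  have h := Real.log_le_sub_one_of_pos (show (0:ℝ) < z⁻¹ by positivity)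
  rw [Real.log_inv] at h
  linarith

lemma tangent_le {f : ℝ → ℝ} (hf : ConvexOn ℝ (Ioi 0) f) {a f' : ℝ} (ha : 0 < a)
    (hd : HasDerivAt f f' a) {s : ℝ} (hs : 0 < s) : f a + f' * (s - a) ≤ f s := by
  rcases lt_trichotomy s a with h | h | h
  · have hsl := hf.slope_le_of_hasDerivAt (mem_Ioi.mpr hs) (mem_Ioi.mpr ha) h hd
    rw [slope_def_field, div_le_iff₀ (by linarith : (0:ℝ) < a - s)] at hsl
    nlinarith
  · rw [h]; simp
  · have hsl := hf.le_slope_of_hasDerivAt (mem_Ioi.mpr ha) (mem_Ioi.mpr hs) h hd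
    rw [slope_def_field, le_div_iff₀ (by linarith : (0:ℝ) < s - a)] at hsl
    nlinarith

lemma hasDerivAt_logGamma_five_half :
    HasDerivAt (Real.log ∘ Real.Gamma) (8/3 - γ - 2 * Real.log 2) (5/2) := by
  have hne : Real.Gamma (5/2) ≠ 0 := (Real.Gamma_pos_of_pos (by norm_num)).ne'
  have h := hasDerivAt_Gamma_five_half.log hne
  have heq : √π * (2 - 3/4 * (γ + 2 * Real.log 2)) / Real.Gamma (5/2)
      = 8/3 - γ - 2 * Real.log 2 := by
    rw [Gamma_five_half]
    have hpi : √π ≠ 0 := by positivity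
    field_simp
    ring
  rw [heq] at h
  exact h

lemma hasDerivAt_logGamma_three :
    HasDerivAt (Real.log ∘ Real.Gamma) (3/2 - γ) 3 := by
  have h2 : HasDerivAt Real.Gamma (3 - 2*γ) 3 := by
    have := Real.hasDerivAt_Gamma_nat 2
    have hh : (harmonic 2 : ℝ) = 3/2 := by norm_num [harmonic, Finset.sum_range_succ]
    norm_num [hh] at this
    convert this using 1
    ring
  have hne : Real.Gamma (3:ℝ) ≠ 0 := (Real.Gamma_pos_of_pos (by norm_num)).ne'
  have h := h2.log hne
  have h3 : Real.Gamma (3:ℝ) = 2 := by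
    rw [show (3:ℝ) = (2:ℕ) + 1 by norm_num, Real.Gamma_nat_eq_factorial]
    norm_num
  rw [h3] at h
  refine h.congr_deriv ?_
  ring

end helpers

set_option maxHeartbeats 2000000 in
lemma key_gamma_bound (x : ℝ) (h0 : 0 < x) (h1 : x < 1) :
    1 + x^2 ≤ Real.Gamma (x + 2) := by
  have hx2 : (0:ℝ) < x + 2 := by linarith
  have hGpos : 0 < Real.Gamma (x+2) := Real.Gamma_pos_of_pos hx2
  have hγhi := Real.eulerMascheroniConstant_lt_two_thirds
  have hγlo := gamma_lo
  rcases le_or_gt x (1/3) with hc | hc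
  · -- piece 1: tangent to Γ at 2
    have hd2 : HasDerivAt Real.Gamma (1 - γ) 2 := by
      have := Real.hasDerivAt_Gamma_nat 1
      have hh : (harmonic 1 : ℝ) = 1 := by norm_num [harmonic, Finset.sum_range_succ]
      norm_num [hh] at this
      convert this using 1
      ring
    have ht := tangent_le Real.convexOn_Gamma (by norm_num : (0:ℝ) < 2) hd2 hx2
    rw [Real.Gamma_two] at ht
    nlinarith
  · -- pieces 2 and 3: tangents to log ∘ Γ
    suffices hlog : Real.log (1 + x^2) ≤ Real.log (Real.Gamma (x+2)) by
      calc 1 + x^2 = Real.exp (Real.log (1+x^2)) := (Real.exp_log (by positivity)).symm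
        _ ≤ Real.exp (Real.log (Real.Gamma (x+2))) := Real.exp_le_exp.mpr hlog
        _ = Real.Gamma (x+2) := Real.exp_log hGpos
    have hl2lo := Real.log_two_gt_d9
    have hl2hi := Real.log_two_lt_d9
    rcases le_or_gt x (55/100) with hc2 | hc2
    · -- piece 2: tangent at 5/2
      have ht := tangent_le Real.convexOn_log_Gamma (by norm_num : (0:ℝ) < 5/2)
        hasDerivAt_logGamma_five_half hx2
      simp only [Function.comp_apply] at ht
      rw [Gamma_five_half] at ht
      have hL : (0.2477:ℝ) ≤ Real.log (3/4*√π) := by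
        have h1 : (0:ℝ) < 3/4*√π := by positivity
        have h2 := one_sub_inv_le_log h1
        have h3 : (3/4*√π)⁻¹ ≤ (3/4*1.7724536)⁻¹ := by
          apply inv_anti₀ (by norm_num)
          nlinarith [sqrt_pi_gt]
        have h4 : ((3:ℝ)/4*1.7724536)⁻¹ ≤ 0.7523 := by norm_num
        linarith
      have hcub : Real.log (1+x^2) ≤ x^2 - (x^2)^2/2 + (x^2)^3/3 :=
        log_le_cubic (by positivity)
      have hψ : 8/3 - γ - 2*Real.log 2 ≤ 0.7114 := by linarith
      have hψ' : (0.6137:ℝ) ≤ 8/3 - γ - 2*Real.log 2 := by linarith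
      -- combine
      rcases le_or_gt x (1/2) with hx5 | hx5
      · have hterm : (0.7114:ℝ) * (x + 2 - 5/2) ≤ (8/3 - γ - 2*Real.log 2) * (x + 2 - 5/2) := by
          apply mul_le_mul_of_nonpos_right hψ (by linarith)
        have hpoly : x^2 - (x^2)^2/2 + (x^2)^3/3 ≤ 0.2477 + 0.7114*(x-1/2) := by
          nlinarith [sq_nonneg (x-1/2), sq_nonneg (x-1/3), sq_nonneg x, sq_nonneg (x^2-1/4),
            mul_nonneg (sub_nonneg.mpr hc.le) (sub_nonneg.mpr hx5), sq_nonneg (x^2-x)]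
        refine le_trans hcub (le_trans ?_ ht)
        linarith [hterm, hL, hpoly]
      · have hterm : (0.6137:ℝ) * (x + 2 - 5/2) ≤ (8/3 - γ - 2*Real.log 2) * (x + 2 - 5/2) := by
          apply mul_le_mul_of_nonneg_right hψ' (by linarith)
        have hpoly : x^2 - (x^2)^2/2 + (x^2)^3/3 ≤ 0.2477 + 0.6137*(x-1/2) := by
          nlinarith [sq_nonneg (x-1/2), sq_nonneg (x-55/100),
            mul_nonneg (sub_nonneg.mpr hx5.le) (sub_nonneg.mpr hc2), sq_nonneg (x^2-x)]
        refine le_trans hcub (le_trans ?_ ht)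
        linarith [hterm, hL, hpoly]
    · -- piece 3: tangent at 3
      have ht := tangent_le Real.convexOn_log_Gamma (by norm_num : (0:ℝ) < 3)
        hasDerivAt_logGamma_three hx2
      simp only [Function.comp_apply] at ht
      have h3 : Real.Gamma (3:ℝ) = 2 := by
        rw [show (3:ℝ) = (2:ℕ) + 1 by norm_num, Real.Gamma_nat_eq_factorial]
        norm_num
      rw [h3] at ht
      set t : ℝ := (x^2-1)/2 with htdef
      have htlo : -(1/2) ≤ t := by
        rw [htdef]; nlinarith
      have hthi : t ≤ 0 := by rw [htdef]; nlinarith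
      have hsplit : Real.log (1+x^2) = Real.log 2 + Real.log (1+t) := by
        rw [← Real.log_mul (by norm_num) (by rw [htdef]; nlinarith)]
        congr 1
        rw [htdef]; ring
      have hquart := log_le_quartic htlo hthi
      have hψ : 3/2 - γ ≤ 0.931 := by linarith
      have hterm : (0.931:ℝ) * (x + 2 - 3) ≤ (3/2 - γ) * (x + 2 - 3) := by
        apply mul_le_mul_of_nonpos_right hψ (by linarith)
      rw [hsplit]
      refine le_trans ?_ ht
      have hQ : (0:ℝ) ≤ -5969/24000 + 131/192*x - 49/192*x^2 - 49/192*x^3 + 17/192*x^4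
          + 17/192*x^5 - 1/64*x^6 - 1/64*x^7 := by
        nlinarith [mul_nonneg (sub_nonneg.mpr hc2.le) (sub_nonneg.mpr h1.le), sq_nonneg (x-55/100),
          sq_nonneg (x-1), pow_le_one₀ (by linarith : (0:ℝ) ≤ x) h1.le (n:=3),
          pow_le_one₀ (by linarith : (0:ℝ) ≤ x) h1.le (n:=5),
          mul_nonneg (mul_nonneg (sub_nonneg.mpr hc2.le) (sub_nonneg.mpr h1.le))
            (sub_nonneg.mpr hc2.le)]
      have hfac : 0.931*(x-1) - (t - t^2/2 + t^3/3 - t^4/4)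
          = (1-x) * (-5969/24000 + 131/192*x - 49/192*x^2 - 49/192*x^3 + 17/192*x^4
          + 17/192*x^5 - 1/64*x^6 - 1/64*x^7) := by
        rw [htdef]; ring
      have hpoly : t - t^2/2 + t^3/3 - t^4/4 ≤ 0.931 * (x + 2 - 3) := by
        nlinarith [mul_nonneg (sub_nonneg.mpr h1.le) hQ, hfac]
      linarith [hquart, hterm]

/-- For `0 < x < 1` one has `1/Γ(x) ≤ (x² + x)/(x² + 1) < 1`;
in particular `1/Γ(x) < 1` for all `x ∈ (0,1)`. -/
theorem one_div_gamma_lt_one (x : ℝ) (h0 : 0 < x) (h1 : x < 1) :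
    1 / Real.Gamma x ≤ (x ^ 2 + x) / (x ^ 2 + 1) ∧
      (x ^ 2 + x) / (x ^ 2 + 1) < 1 ∧
      1 / Real.Gamma x < 1 := by
  have hGpos : 0 < Real.Gamma x := Real.Gamma_pos_of_pos h0
  have hrec : Real.Gamma (x + 2) = (x^2 + x) * Real.Gamma x := by
    rw [show x + 2 = (x+1) + 1 by ring, Real.Gamma_add_one (by linarith),
      Real.Gamma_add_one h0.ne']
    ring
  have hkey := key_gamma_bound x h0 h1
  have h1' : 1 / Real.Gamma x ≤ (x ^ 2 + x) / (x ^ 2 + 1) := by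
    rw [div_le_div_iff₀ hGpos (by positivity)]
    nlinarith [hkey, hrec]
  have h2' : (x ^ 2 + x) / (x ^ 2 + 1) < 1 := by
    rw [div_lt_one (by positivity)]
    nlinarith
  exact ⟨h1', h2', lt_of_le_of_lt h1' h2'⟩
end

section
/- Let a < b, let n ∈ ℕ with n ≥ 2, and let α : [a,b] × [a,b] → ℝ be measurable with 1/n < α(t,τ) < 1 for all t, τ ∈ [a,b]. Then for every τ ∈ [a,b], ∫_τ^b (t−τ)^{α(t,τ)−1} / Γ(α(t,τ)) dt < n + b − τ − 1. -/
open MeasureTheory Set intervalIntegral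

/-- On `(0,1]` the Gamma function is at least `1`, by log-convexity with
`Γ(1) = Γ(2) = 1`. -/
lemma one_le_Gamma_of_le_one {x : ℝ} (hx : 0 < x) (hx1 : x ≤ 1) : 1 ≤ Real.Gamma x := by
  rcases eq_or_lt_of_le hx1 with h | h
  · rw [h, Real.Gamma_one]
  · have hc := Real.convexOn_log_Gamma
    have h2x : 0 < 2 - x := by linarith
    have hl : (0:ℝ) < 1 / (2 - x) := by positivity
    have hm : (0:ℝ) ≤ (1 - x) / (2 - x) := by
      apply div_nonneg <;> linarith
    have hlm : 1 / (2 - x) + (1 - x) / (2 - x) = 1 := by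
      rw [← add_div, div_eq_one_iff_eq h2x.ne']
      ring
    have hkey := hc.2 (Set.mem_Ioi.2 hx) (Set.mem_Ioi.2 (by norm_num : (0:ℝ) < 2))
      hl.le hm hlm
    have hpt : (1 / (2 - x)) • x + ((1 - x) / (2 - x)) • (2:ℝ) = 1 := by
      simp only [smul_eq_mul]
      field_simp
      ring
    rw [hpt] at hkey
    simp only [Function.comp, Real.Gamma_one, Real.Gamma_two, Real.log_one,
      smul_eq_mul, mul_zero, add_zero] at hkey
    have hlog : 0 ≤ Real.log (Real.Gamma x) := by
      by_contra hneg
      push_neg at hneg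
      nlinarith
    have := Real.exp_le_exp.2 hlog
    rwa [Real.exp_zero, Real.exp_log (Real.Gamma_pos_of_pos hx)] at this

/-- Strict AM-GM style inequality: for `0 ≤ x < 1` and `n ≥ 2`,
`n * x^(1/n) < n - 1 + x`. -/
lemma amgm_strict {x : ℝ} {n : ℕ} (hn : 2 ≤ n) (hx0 : 0 ≤ x) (hx1 : x < 1) :
    (n : ℝ) * x ^ ((1 : ℝ) / n) < (n : ℝ) - 1 + x := by
  have hn0 : (0:ℝ) < n := by positivity
  set y : ℝ := x ^ ((1 : ℝ) / n) with hy
  have hy0 : 0 ≤ y := Real.rpow_nonneg hx0 _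
  have hy1 : y < 1 := Real.rpow_lt_one hx0 hx1 (by positivity)
  have hyx : y ^ n = x := by
    rw [hy, ← Real.rpow_natCast (x ^ ((1:ℝ)/n)) n, ← Real.rpow_mul hx0]
    rw [show (1:ℝ)/n * n = 1 by field_simp]
    exact Real.rpow_one x
  have hsum : (∑ i ∈ Finset.range n, y ^ i) < (n : ℝ) := by
    calc (∑ i ∈ Finset.range n, y ^ i) < ∑ _i ∈ Finset.range n, (1:ℝ) := by
          refine Finset.sum_lt_sum (fun i _ => pow_le_one₀ hy0 hy1.le) ?_
          refine ⟨1, Finset.mem_range.2 (by omega), ?_⟩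
          simpa using hy1
      _ = (n : ℝ) := by simp
  have hgeom : (∑ i ∈ Finset.range n, y ^ i) * (y - 1) = y ^ n - 1 := geom_sum_mul y n
  have hneg : y - 1 < 0 := by linarith
  have hlt := mul_lt_mul_of_neg_right hsum hneg
  rw [hgeom] at hlt
  nlinarith [hlt]

/-- For a measurable variable order `α` with `1/n < α(t,τ) < 1` on `[a,b]²` (`n ≥ 2`),
the kernel of the left Riemann–Liouville integral of variable order `α` satisfies
`∫_τ^b (t−τ)^(α(t,τ)−1)/Γ(α(t,τ)) dt < n + b − τ − 1` for every `τ ∈ [a,b]`. -/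
theorem kernel_integral_bound (a b : ℝ) (hab : a < b) (n : ℕ) (hn : 2 ≤ n)
    (α : ℝ → ℝ → ℝ) (hαm : Measurable (Function.uncurry α))
    (hα : ∀ t ∈ Set.Icc a b, ∀ τ ∈ Set.Icc a b, 1 / (n : ℝ) < α t τ ∧ α t τ < 1) :
    ∀ τ ∈ Set.Icc a b,
      (∫ t in τ..b, (t - τ) ^ (α t τ - 1) / Real.Gamma (α t τ)) < (n : ℝ) + b - τ - 1 := by
  intro τ hτ
  obtain ⟨hτa, hτb⟩ := hτ
  have hn2 : (2:ℝ) ≤ n := by exact_mod_cast hn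
  have hn0 : (0:ℝ) < n := by linarith
  have h1n : (0:ℝ) < 1 / n := by positivity
  have h1n1 : (1:ℝ) / n < 1 := by
    rw [div_lt_one hn0]; linarith
  set r : ℝ := 1 / n - 1 with hrdef
  have hr : (-1:ℝ) < r := by rw [hrdef]; linarith
  have hr0 : r < 0 := by rw [hrdef]; linarith
  have hr1 : r + 1 = 1 / n := by rw [hrdef]; ring
  set f : ℝ → ℝ := fun t => (t - τ) ^ (α t τ - 1) / Real.Gamma (α t τ) with hfdef
  have key : ∀ t ∈ Set.Icc a b, 1 / (n:ℝ) < α t τ ∧ α t τ < 1 :=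
    fun t ht => hα t ht τ ⟨hτa, hτb⟩
  have hαpos : ∀ t ∈ Set.Icc a b, 0 < α t τ := fun t ht => h1n.trans (key t ht).1
  have hΓ1 : ∀ t ∈ Set.Icc a b, 1 ≤ Real.Gamma (α t τ) := fun t ht =>
    one_le_Gamma_of_le_one (hαpos t ht) (key t ht).2.le
  have hΓpos : ∀ t ∈ Set.Icc a b, 0 < Real.Gamma (α t τ) := fun t ht =>
    Real.Gamma_pos_of_pos (hαpos t ht)
  have hnn : ∀ t ∈ Set.Icc a b, τ ≤ t → 0 ≤ f t := by
    intro t ht htτ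
    exact div_nonneg (Real.rpow_nonneg (by linarith) _) (hΓpos t ht).le
  have hfτ : f τ = 0 := by
    have h1 : α τ τ - 1 ≠ 0 := by
      have := (key τ ⟨hτa, hτb⟩).2; intro hc; rw [sub_eq_zero] at hc; rw [hc] at this
      exact lt_irrefl _ this
    simp only [hfdef, sub_self, Real.zero_rpow h1, zero_div]
  -- upper bound through Gamma ≥ 1
  have hub : ∀ t ∈ Set.Icc a b, τ < t → f t ≤ (t - τ) ^ (α t τ - 1) := by
    intro t ht h
    exact div_le_self (Real.rpow_nonneg (by linarith) _) (hΓ1 t ht)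
  -- pointwise bound on the region t - τ ≤ 1 (including t = τ)
  have hle1 : ∀ t ∈ Set.Icc a b, τ ≤ t → t - τ ≤ 1 → f t ≤ (t - τ) ^ r := by
    intro t ht htτ ht1
    rcases eq_or_lt_of_le htτ with h | h
    · rw [← h, hfτ, sub_self, Real.zero_rpow hr0.ne]
    · refine (hub t ht h).trans ?_
      exact Real.rpow_le_rpow_of_exponent_ge (by linarith) ht1
        (by have := (key t ht).1; rw [hrdef]; linarith)
  -- strict pointwise bound on the open region
  have hlt1 : ∀ t ∈ Set.Icc a b, τ < t → t - τ < 1 → f t < (t - τ) ^ r := by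
    intro t ht h h1
    refine (hub t ht h).trans_lt ?_
    exact Real.rpow_lt_rpow_of_exponent_gt (by linarith) (by linarith)
      (by have := (key t ht).1; rw [hrdef]; linarith)
  -- bound by 1 on the region t - τ ≥ 1
  have hle2 : ∀ t ∈ Set.Icc a b, 1 ≤ t - τ → f t ≤ 1 := by
    intro t ht h1
    refine (hub t ht (by linarith)).trans ?_
    exact Real.rpow_le_one_of_one_le_of_nonpos (by linarith)
      (by have := (key t ht).2; linarith)
  -- measurability of f restricted to subintervals of (τ, b]
  have hh : Measurable fun t => α t τ :=
    hαm.comp (measurable_id.prodMk measurable_const)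
  have hΓcont : ContinuousOn Real.Gamma (Set.Ioi (0:ℝ)) := by
    intro x hx
    have hx' : (0:ℝ) < x := hx
    refine (Real.differentiableAt_Gamma ?_).continuousAt.continuousWithinAt
    intro m
    have : -(m:ℝ) ≤ 0 := neg_nonpos.2 (Nat.cast_nonneg m)
    intro hc; rw [hc] at hx'; linarith
  have hclamp : Continuous fun x : ℝ => max (min x 1) (1 / (n:ℝ)) :=
    (continuous_id.min continuous_const).max continuous_const
  set φ : ℝ → ℝ := fun x => Real.Gamma (max (min x 1) (1 / (n:ℝ))) with hφdef
  have hφ : Continuous φ := by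
    refine hΓcont.comp_continuous hclamp fun x => ?_
    exact Set.mem_Ioi.2 (lt_of_lt_of_le h1n (le_max_right _ _))
  have hφeq : ∀ t ∈ Set.Icc a b, φ (α t τ) = Real.Gamma (α t τ) := by
    intro t ht
    have h1 := (key t ht).1
    have h2 := (key t ht).2
    simp only [hφdef]
    rw [min_eq_left h2.le, max_eq_left (by linarith)]
  set F : ℝ → ℝ := fun t => Real.exp (Real.log (t - τ) * (α t τ - 1)) / φ (α t τ)
    with hFdef
  have hFmeas : Measurable F :=
    (((Real.measurable_log.comp (measurable_id.sub_const τ)).mul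
      (hh.sub_const 1)).exp).div (hφ.measurable.comp hh)
  have hfeqF : ∀ t ∈ Set.Icc a b, τ < t → f t = F t := by
    intro t ht h
    simp only [hfdef, hFdef]
    rw [Real.rpow_def_of_pos (by linarith : (0:ℝ) < t - τ), hφeq t ht]
  have hmeas : ∀ c d : ℝ, τ ≤ c → d ≤ b →
      AEStronglyMeasurable f (volume.restrict (Set.Ioc c d)) := by
    intro c d hc hd
    refine hFmeas.aestronglyMeasurable.congr ?_
    rw [Filter.EventuallyEq, ae_restrict_iff' measurableSet_Ioc]
    refine Filter.Eventually.of_forall fun t htcd => ?_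
    have ht : t ∈ Set.Icc a b := ⟨by linarith [htcd.1, hτa, hc], le_trans htcd.2 hd⟩
    exact (hfeqF t ht (lt_of_le_of_lt hc htcd.1)).symm
  -- integrability of the comparison function
  have hg1 : ∀ s : ℝ, IntervalIntegrable (fun t => (t - τ) ^ r) volume τ s := by
    intro s
    have h := (intervalIntegral.intervalIntegrable_rpow' (a := 0) (b := s - τ) hr).comp_sub_right τ
    simpa using h
  -- integrability of f on [τ, s] for s ≤ min b (τ+1)
  have hfi1 : ∀ s : ℝ, τ ≤ s → s ≤ b → s - τ ≤ 1 → IntervalIntegrable f volume τ s := by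
    intro s h1 h2 h3
    rw [intervalIntegrable_iff, Set.uIoc_of_le h1]
    have hgint : IntegrableOn (fun t => (t - τ) ^ r) (Set.Ioc τ s) volume := by
      have := hg1 s
      rwa [intervalIntegrable_iff, Set.uIoc_of_le h1] at this
    refine hgint.mono' (hmeas τ s le_rfl h2) ?_
    rw [ae_restrict_iff' measurableSet_Ioc]
    refine Filter.Eventually.of_forall fun t htm => ?_
    have ht : t ∈ Set.Icc a b := ⟨by linarith [htm.1], le_trans htm.2 h2⟩
    rw [Real.norm_eq_abs, abs_of_nonneg (hnn t ht (le_of_lt htm.1))]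
    exact hle1 t ht (le_of_lt htm.1) (by linarith [htm.2])
  -- value of the comparison integral
  have hgval : ∀ s : ℝ, τ ≤ s → (∫ t in τ..s, (t - τ) ^ r) = (n:ℝ) * (s - τ) ^ ((1:ℝ)/n) := by
    intro s hs
    rw [intervalIntegral.integral_comp_sub_right (fun x => x ^ r) τ, sub_self]
    rw [integral_rpow (Or.inl hr)]
    rw [Real.zero_rpow (by rw [hr1]; positivity), hr1]
    field_simp
    ring
  rcases lt_or_ge b (τ + 1) with hA | hB
  · -- Case A : b - τ < 1
    have hfint := hfi1 b hτb le_rfl (by linarith)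
    have hmono : (∫ t in τ..b, f t) ≤ ∫ t in τ..b, (t - τ) ^ r := by
      refine intervalIntegral.integral_mono_on hτb hfint (hg1 b) fun t ht => ?_
      have ht' : t ∈ Set.Icc a b := ⟨by linarith [ht.1], ht.2⟩
      exact hle1 t ht' ht.1 (by linarith [ht.2])
    have hval := hgval b hτb
    have hamgm := amgm_strict hn (by linarith : (0:ℝ) ≤ b - τ) (by linarith : b - τ < 1)
    calc (∫ t in τ..b, f t) ≤ (n:ℝ) * (b - τ) ^ ((1:ℝ)/n) := by rw [← hval]; exact hmono
      _ < (n:ℝ) - 1 + (b - τ) := hamgm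
      _ = (n:ℝ) + b - τ - 1 := by ring
  · -- Case B : τ + 1 ≤ b
    have hτ1b : τ + 1 ≤ b := hB
    have hfiA : IntervalIntegrable f volume τ (τ + 1) :=
      hfi1 (τ + 1) (by linarith) hτ1b (by ring_nf; norm_num)
    have hfiB : IntervalIntegrable f volume (τ + 1) b := by
      rw [intervalIntegrable_iff, Set.uIoc_of_le hτ1b]
      have hconst : IntegrableOn (fun _ : ℝ => (1:ℝ)) (Set.Ioc (τ+1) b) volume := by
        exact integrableOn_const measure_Ioc_lt_top.ne
      refine hconst.mono' (hmeas (τ+1) b (by linarith) le_rfl) ?_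
      rw [ae_restrict_iff' measurableSet_Ioc]
      refine Filter.Eventually.of_forall fun t htm => ?_
      have ht : t ∈ Set.Icc a b := ⟨by linarith [htm.1], htm.2⟩
      rw [Real.norm_eq_abs, abs_of_nonneg (hnn t ht (by linarith [htm.1]))]
      exact hle2 t ht (by linarith [htm.1])
    have hsplit : (∫ t in τ..b, f t) =
        (∫ t in τ..(τ+1), f t) + ∫ t in (τ+1)..b, f t :=
      (intervalIntegral.integral_add_adjacent_intervals hfiA hfiB).symm
    -- piece 1 : strictly less than n
    have hpiece1 : (∫ t in τ..(τ+1), f t) < n := by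
      have hgi := hg1 (τ + 1)
      have hpos : 0 < ∫ t in τ..(τ+1), ((t - τ) ^ r - f t) := by
        refine intervalIntegral_pos_of_pos_on (hgi.sub hfiA) (fun t htm => ?_) (by linarith)
        have ht : t ∈ Set.Icc a b := ⟨by linarith [htm.1], by linarith [htm.2]⟩
        exact sub_pos.2 (hlt1 t ht htm.1 (by linarith [htm.2]))
      rw [intervalIntegral.integral_sub hgi hfiA] at hpos
      have hval := hgval (τ + 1) (by linarith)
      rw [hval] at hpos
      have : (τ + 1 - τ : ℝ) = 1 := by ring
      rw [this, Real.one_rpow, mul_one] at hpos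
      linarith
    -- piece 2 : at most b - τ - 1
    have hpiece2 : (∫ t in (τ+1)..b, f t) ≤ b - τ - 1 := by
      have hconst : IntervalIntegrable (fun _ : ℝ => (1:ℝ)) volume (τ+1) b :=
        intervalIntegrable_const
      have := intervalIntegral.integral_mono_on hτ1b hfiB hconst fun t ht => by
        have ht' : t ∈ Set.Icc a b := ⟨by linarith [ht.1], ht.2⟩
        exact hle2 t ht' (by linarith [ht.1])
      have h2 : (∫ _u in (τ+1)..b, (1:ℝ)) = b - τ - 1 := by
        simp only [intervalIntegral.integral_const, smul_eq_mul, mul_one]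
        ring
      linarith [this, h2]
    linarith
end

section
/- Let a < b, let n ∈ ℕ with n ≥ 2, and let β : [a,b] → ℝ depend only on t with 1/n < β(t) < 1 for all t ∈ [a,b]. Then the function y(t) = (t−a)² satisfies, for all t ∈ (a,b], the variable order fractional differential equation (ₐI^{β}_t y)(t) = Γ(3) · (t−a)^{2+β(t)} / Γ(β(t)+3); consequently, the quantity Γ(β(t)+3)/(Γ(3)(t−a)^{2+β(t)}) · (ₐI^{β}_t y)(t) − 1 vanishes identically on (a,b], so y satisfies the Euler–Lagrange equation (ₜI^{β}_b)[ (Γ(β(t)+3)/(Γ(3)(t−a)^{2+β(t)}) · (ₐI^{β}_t y)(t) − 1) / (2·√(1 + Γ(β(t)+3)/(2Γ(3)(t−a)^{2+β(t)}) · ((ₐI^{β}_t y)(t))² − (ₐI^{β}_t y)(t))) ] = 0 for all t ∈ [a,b]. -/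
open MeasureTheory

/-- Left Riemann–Liouville integral of variable order `β` depending only on `t`. -/
noncomputable def leftRLintT (a : ℝ) (β : ℝ → ℝ) (y : ℝ → ℝ) (t : ℝ) : ℝ :=
  ∫ τ in a..t, (t - τ) ^ (β t - 1) / Real.Gamma (β t) * y τ

/-- Right Riemann–Liouville integral of variable order `β` depending only on the
first variable. -/
noncomputable def rightRLintT (b : ℝ) (β : ℝ → ℝ) (g : ℝ → ℝ) (t : ℝ) : ℝ :=
  ∫ τ in t..b, (τ - t) ^ (β τ - 1) / Real.Gamma (β τ) * g τ


lemma myInt (a t r : ℝ) (hr : -1 < r) :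
    ∫ τ in a..t, (t - τ) ^ r = (t - a) ^ (r + 1) / (r + 1) := by
  rw [intervalIntegral.integral_comp_sub_left (fun x => x ^ r) t, sub_self,
    integral_rpow (Or.inl hr), Real.zero_rpow (by linarith)]
  ring

lemma myIntble (a t r : ℝ) (hr : -1 < r) :
    IntervalIntegrable (fun τ => (t - τ) ^ r) volume a t := by
  have h := (intervalIntegral.intervalIntegrable_rpow' hr (a := t - a) (b := t - t)).comp_sub_left t
  simpa using h

lemma key (a t c : ℝ) (hat : a < t) (hc0 : 0 < c) (hc1 : c < 1) :
    (∫ τ in a..t, (t - τ) ^ (c - 1) / Real.Gamma c * (τ - a) ^ 2) =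
      Real.Gamma 3 * (t - a) ^ (2 + c) / Real.Gamma (c + 3) := by
  have hΓ : 0 < Real.Gamma c := Real.Gamma_pos_of_pos hc0
  have heq : Set.EqOn (fun τ => (t - τ) ^ (c - 1) / Real.Gamma c * (τ - a) ^ 2)
      (fun τ => (t - a) ^ 2 / Real.Gamma c * (t - τ) ^ (c - 1)
        - 2 * (t - a) / Real.Gamma c * (t - τ) ^ c
        + 1 / Real.Gamma c * (t - τ) ^ (c + 1)) (Set.uIcc a t) := by
    intro τ hτ
    rcases eq_or_lt_of_le ((Set.uIcc_of_le hat.le ▸ hτ).2) with h | h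
    · simp only [h, sub_self]
      rw [Real.zero_rpow (by linarith), Real.zero_rpow (by linarith),
        Real.zero_rpow (by linarith)]
      ring
    · have hpos : (0:ℝ) < t - τ := by linarith
      have h1 : (t - τ) ^ c = (t - τ) ^ (c - 1) * (t - τ) := by
        rw [← Real.rpow_add_one hpos.ne' (c - 1)]; ring_nf
      have h2 : (t - τ) ^ (c + 1) = (t - τ) ^ (c - 1) * (t - τ) ^ (2:ℕ) := by
        rw [← Real.rpow_natCast _ 2, ← Real.rpow_add hpos]; ring_nf
      simp only [h1, h2]
      push_cast
      ring
  rw [intervalIntegral.integral_congr heq]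
  have i1 := myIntble a t (c - 1) (by linarith)
  have i2 := myIntble a t c (by linarith)
  have i3 := myIntble a t (c + 1) (by linarith)
  rw [intervalIntegral.integral_add ((i1.const_mul _).sub (i2.const_mul _)) (i3.const_mul _),
    intervalIntegral.integral_sub (i1.const_mul _) (i2.const_mul _),
    intervalIntegral.integral_const_mul, intervalIntegral.integral_const_mul,
    intervalIntegral.integral_const_mul, myInt a t _ (by linarith),
    myInt a t _ (by linarith), myInt a t _ (by linarith)]
  have hs : (0:ℝ) < t - a := by linarith
  have e1 : (t - a) ^ (c - 1 + 1) = (t - a) ^ c := by ring_nf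
  have e2 : (t - a) ^ (c + 1 + 1) = (t - a) ^ c * (t - a) ^ 2 := by
    rw [← Real.rpow_natCast (t - a) 2, ← Real.rpow_add hs]; push_cast; ring_nf
  have e3 : (t - a) ^ (c + 1) = (t - a) ^ c * (t - a) := by
    rw [← Real.rpow_add_one hs.ne']
  have e4 : (t - a) ^ (2 + c) = (t - a) ^ c * (t - a) ^ 2 := by
    rw [← Real.rpow_natCast (t - a) 2, ← Real.rpow_add hs]; push_cast; ring_nf
  have hg3 : Real.Gamma 3 = 2 := by
    rw [(by norm_num : (3:ℝ) = (2:ℕ) + 1), Real.Gamma_nat_eq_factorial]; norm_num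
  have hgc3 : Real.Gamma (c + 3) = (c + 2) * ((c + 1) * (c * Real.Gamma c)) := by
    rw [(by ring : c + 3 = (c + 2) + 1), Real.Gamma_add_one (by linarith),
      (by ring : c + 2 = (c + 1) + 1), Real.Gamma_add_one (by linarith),
      Real.Gamma_add_one hc0.ne']
  rw [e1, e2, e3, e4, hg3, hgc3]
  have hcne : c - 1 + 1 ≠ 0 := by ring_nf; exact hc0.ne'
  have hcne2 : c + 1 + 1 ≠ 0 := by intro h; linarith
  field_simp
  ring

/-- The function `y(t) = (t−a)²` solves the variable order fractional equation
`(ₐI^β_t y)(t) = Γ(3)(t−a)^(2+β(t))/Γ(β(t)+3)` on `(a,b]`; consequently the quantity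
`Γ(β(t)+3)/(Γ(3)(t−a)^(2+β(t)))·(ₐI^β_t y)(t) − 1` vanishes on `(a,b]`, and `y`
satisfies the Euler–Lagrange equation of Example 1 on all of `[a,b]`. -/
theorem example_extremal (a b : ℝ) (hab : a < b) (n : ℕ) (hn : 2 ≤ n)
    (β : ℝ → ℝ) (hβ : ∀ t ∈ Set.Icc a b, 1 / (n : ℝ) < β t ∧ β t < 1) :
    (∀ t ∈ Set.Ioc a b,
        leftRLintT a β (fun τ => (τ - a) ^ 2) t =
          Real.Gamma 3 * (t - a) ^ (2 + β t) / Real.Gamma (β t + 3)) ∧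
    (∀ t ∈ Set.Ioc a b,
        Real.Gamma (β t + 3) / (Real.Gamma 3 * (t - a) ^ (2 + β t)) *
            leftRLintT a β (fun τ => (τ - a) ^ 2) t - 1 = 0) ∧
    (∀ t ∈ Set.Icc a b,
        rightRLintT b β (fun τ =>
          (Real.Gamma (β τ + 3) / (Real.Gamma 3 * (τ - a) ^ (2 + β τ)) *
              leftRLintT a β (fun s => (s - a) ^ 2) τ - 1) /
            (2 * Real.sqrt (1 +
              Real.Gamma (β τ + 3) / (2 * Real.Gamma 3 * (τ - a) ^ (2 + β τ)) *
                (leftRLintT a β (fun s => (s - a) ^ 2) τ) ^ 2 -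
              leftRLintT a β (fun s => (s - a) ^ 2) τ))) t = 0) := by
  have hβ' : ∀ t ∈ Set.Icc a b, 0 < β t ∧ β t < 1 := by
    intro t ht
    obtain ⟨h1, h2⟩ := hβ t ht
    have hn0 : (0:ℝ) < 1 / (n : ℝ) := by
      have : (0:ℝ) < (n : ℝ) := by exact_mod_cast Nat.lt_of_lt_of_le (by norm_num) hn
      positivity
    exact ⟨lt_trans hn0 h1, h2⟩
  have part1 : ∀ t ∈ Set.Ioc a b,
      leftRLintT a β (fun τ => (τ - a) ^ 2) t =
        Real.Gamma 3 * (t - a) ^ (2 + β t) / Real.Gamma (β t + 3) := by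
    intro t ht
    obtain ⟨hc0, hc1⟩ := hβ' t ⟨ht.1.le, ht.2⟩
    exact key a t (β t) ht.1 hc0 hc1
  have part2 : ∀ t ∈ Set.Ioc a b,
      Real.Gamma (β t + 3) / (Real.Gamma 3 * (t - a) ^ (2 + β t)) *
          leftRLintT a β (fun τ => (τ - a) ^ 2) t - 1 = 0 := by
    intro t ht
    obtain ⟨hc0, hc1⟩ := hβ' t ⟨ht.1.le, ht.2⟩
    rw [part1 t ht]
    have h1 : Real.Gamma (β t + 3) ≠ 0 := (Real.Gamma_pos_of_pos (by linarith)).ne'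
    have h2 : Real.Gamma 3 ≠ 0 := (Real.Gamma_pos_of_pos (by norm_num)).ne'
    have h3 : (t - a) ^ (2 + β t) ≠ 0 := (Real.rpow_pos_of_pos (by linarith [ht.1]) _).ne'
    field_simp
    norm_num
  refine ⟨part1, part2, ?_⟩
  intro t ht
  rw [rightRLintT, show (0:ℝ) = ∫ τ in t..b, (0:ℝ) by simp]
  apply intervalIntegral.integral_congr_ae
  apply MeasureTheory.ae_of_all
  intro τ hτ
  rw [Set.uIoc_of_le ht.2] at hτ
  have hτ' : τ ∈ Set.Ioc a b := ⟨lt_of_le_of_lt ht.1 hτ.1, hτ.2⟩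
  rw [part2 τ hτ']
  simp
end
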